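/- arXiv:1903.06291 — 6 statements merged into one kernel-verified Lean document; each statement's English description precedes it below -/
import Mathlib

section
/- Let α>1, β>1, δ>0. There is no nonconstant periodic solution of the system dx/dt = x(1-x-αy), dy/dt = δy(1-y-βx) contained in the open first quadrant; that is, there exist no T>0 and differentiable functions x,y:ℝ→ℝ with x(t)>0 and y(t)>0 for all t, satisfying x'(t)=x(t)(1-x(t)-αy(t)) and y'(t)=δy(t)(1-y(t)-βx(t)) for all t, with x(t+T)=x(t) and y(t+T)=y(t) for all t, and with (x,y) not constant. -/
open Set Filter Real Topology

set_option maxHeartbeats 1000000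

/-- Cone invariance for a planar nonautonomous linear system with
nonpositive off-diagonal coefficients: the fourth-quadrant cone
`{p ≥ 0, q ≤ 0}` is forward invariant. -/
lemma cone_invariance (t₁ t₂ M : ℝ) (h12 : t₁ ≤ t₂) (p q a b c d : ℝ → ℝ)
    (hp : ∀ t, HasDerivAt p (a t * p t + b t * q t) t)
    (hq : ∀ t, HasDerivAt q (c t * p t + d t * q t) t)
    (hb : ∀ t ∈ Set.Icc t₁ t₂, b t ≤ 0) (hc : ∀ t ∈ Set.Icc t₁ t₂, c t ≤ 0)
    (hM : ∀ t ∈ Set.Icc t₁ t₂, |a t| ≤ M ∧ |b t| ≤ M ∧ |c t| ≤ M ∧ |d t| ≤ M)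
    (hp1 : p t₁ = 0) (hq1 : q t₁ ≤ 0) :
    ∀ t ∈ Set.Icc t₁ t₂, 0 ≤ p t ∧ q t ≤ 0 := by
  have hM0 : 0 ≤ M := le_trans (abs_nonneg _) (hM t₁ ⟨le_refl _, h12⟩).1
  set L : ℝ := 2 * M + 1 with hLdef
  have hpc : Continuous p := by
    refine continuous_iff_continuousAt.2 fun t => (hp t).differentiableAt.continuousAt
  have hqc : Continuous q := by
    refine continuous_iff_continuousAt.2 fun t => (hq t).differentiableAt.continuousAt
  have key : ∀ ε : ℝ, 0 < ε → ∀ t ∈ Set.Icc t₁ t₂,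
      0 < p t + ε * Real.exp (L * t) ∧ q t - ε * Real.exp (L * t) < 0 := by
    intro ε hε
    set P : ℝ → ℝ := fun t => p t + ε * Real.exp (L * t) with hPdef
    set Q : ℝ → ℝ := fun t => q t - ε * Real.exp (L * t) with hQdef
    have hE : ∀ t : ℝ, HasDerivAt (fun s => ε * Real.exp (L * s)) (ε * (Real.exp (L * t) * L)) t := by
      intro t
      have h1 : HasDerivAt (fun s : ℝ => L * s) (L * 1) t := (hasDerivAt_id t).const_mul L
      have h2 := h1.exp
      have h3 := h2.const_mul ε
      simpa [mul_comm, mul_assoc, mul_left_comm] using h3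
    have hPD : ∀ t, HasDerivAt P (a t * p t + b t * q t + ε * (Real.exp (L * t) * L)) t :=
      fun t => (hp t).add (hE t)
    have hQD : ∀ t, HasDerivAt Q (c t * p t + d t * q t - ε * (Real.exp (L * t) * L)) t :=
      fun t => (hq t).sub (hE t)
    have hPcont : Continuous P := hpc.add (continuous_const.mul (Real.continuous_exp.comp (continuous_const.mul continuous_id)))
    have hQcont : Continuous Q := hqc.sub (continuous_const.mul (Real.continuous_exp.comp (continuous_const.mul continuous_id)))
    -- the bad set
    set S : Set ℝ := Set.Icc t₁ t₂ ∩ ({t | P t ≤ 0} ∪ {t | 0 ≤ Q t}) with hSdef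
    have hSmem : ∀ t : ℝ, t ∈ S ↔ t ∈ Set.Icc t₁ t₂ ∧ (P t ≤ 0 ∨ 0 ≤ Q t) := by
      intro t
      simp [hSdef, Set.mem_inter_iff, Set.mem_union, Set.mem_setOf_eq]
    have hSclosed : IsClosed S := by
      rw [hSdef]
      exact isClosed_Icc.inter ((isClosed_le hPcont continuous_const).union
        (isClosed_le continuous_const hQcont))
    have hexp : ∀ t : ℝ, 0 < ε * Real.exp (L * t) := fun t => mul_pos hε (Real.exp_pos _)
    have ht1 : P t₁ > 0 ∧ Q t₁ < 0 := by
      constructor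
      · simp only [hPdef]; rw [hp1]; simpa using hexp t₁
      · simp only [hQdef]; have := hexp t₁; linarith
    by_cases hS : S.Nonempty
    · exfalso
      have hbdd : BddBelow S := ⟨t₁, fun s hs => ((hSmem s).1 hs).1.1⟩
      set τ : ℝ := sInf S with hτdef
      have hτS : τ ∈ S := hSclosed.csInf_mem hS hbdd
      have hτS' := (hSmem τ).1 hτS
      have hτIcc : τ ∈ Set.Icc t₁ t₂ := hτS'.1
      have ht1τ : t₁ < τ := by
        rcases lt_or_eq_of_le hτIcc.1 with h | h
        · exact h
        · exfalso; rcases hτS'.2 with h' | h' <;> rw [← h] at h' <;> linarith [ht1.1, ht1.2]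
      -- strict inequalities before τ
      have hpre : ∀ t, t₁ ≤ t → t < τ → 0 < P t ∧ Q t < 0 := by
        intro t h1 h2
        have htS : t ∉ S := fun h => absurd (csInf_le hbdd h) (not_le.2 h2)
        have htIcc : t ∈ Set.Icc t₁ t₂ := ⟨h1, le_trans h2.le hτIcc.2⟩
        by_contra hcon
        push_neg at hcon
        rcases le_or_gt (P t) 0 with h | h
        · exact htS ((hSmem t).2 ⟨htIcc, Or.inl h⟩)
        · exact htS ((hSmem t).2 ⟨htIcc, Or.inr (hcon h)⟩)
      -- limits from the left
      haveI hne : (𝓝[Set.Ico t₁ τ] τ).NeBot := by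
        rw [← mem_closure_iff_nhdsWithin_neBot, closure_Ico (ne_of_lt ht1τ)]
        exact ⟨le_of_lt ht1τ, le_refl _⟩
      have hPτ : 0 ≤ P τ := by
        refine ge_of_tendsto ((hPcont.continuousAt (x := τ)).continuousWithinAt (s := Set.Ico t₁ τ)).tendsto ?_
        filter_upwards [eventually_mem_nhdsWithin] with t ht
        exact (hpre t ht.1 ht.2).1.le
      have hQτ : Q τ ≤ 0 := by
        refine le_of_tendsto ((hQcont.continuousAt (x := τ)).continuousWithinAt (s := Set.Ico t₁ τ)).tendsto ?_
        filter_upwards [eventually_mem_nhdsWithin] with t ht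
        exact (hpre t ht.1 ht.2).2.le
      have hτnot : τ ∉ Set.Ico t₁ τ := fun h => lt_irrefl τ h.2
      have haτ := abs_le.1 (hM τ hτIcc).1
      have hbτ := abs_le.1 (hM τ hτIcc).2.1
      have hcτ := abs_le.1 (hM τ hτIcc).2.2.1
      have hdτ := abs_le.1 (hM τ hτIcc).2.2.2
      have hbτ0 := hb τ hτIcc
      have hcτ0 := hc τ hτIcc
      have heτ : 0 < ε * Real.exp (L * τ) := hexp τ
      rcases hτS'.2 with hcase | hcase
      · -- P τ = 0 : p crosses zero
        have hPτ0 : P τ = 0 := le_antisymm hcase hPτ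
        have hpτ : p τ = -(ε * Real.exp (L * τ)) := by
          have : p τ + ε * Real.exp (L * τ) = 0 := hPτ0
          linarith
        have hqτ : q τ = Q τ + ε * Real.exp (L * τ) := by simp [hQdef]
        -- the derivative of P at τ is positive
        have hDpos : 0 < a τ * p τ + b τ * q τ + ε * (Real.exp (L * τ) * L) := by
          have h1 : a τ * p τ ≥ -(M * (ε * Real.exp (L * τ))) := by
            rw [hpτ]
            nlinarith [heτ, haτ.1, haτ.2]
          have h2 : b τ * q τ ≥ -(M * (ε * Real.exp (L * τ))) := by
            rw [hqτ]
            nlinarith [heτ, hbτ.1, hbτ.2, hbτ0, hQτ]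
          have : ε * (Real.exp (L * τ) * L) = (2 * M + 1) * (ε * Real.exp (L * τ)) := by
            rw [hLdef]; ring
          rw [this]
          nlinarith [heτ]
        -- but the left slope of P at τ is nonpositive
        have hslope : a τ * p τ + b τ * q τ + ε * (Real.exp (L * τ) * L) ≤ 0 := by
          have hW : HasDerivWithinAt P (a τ * p τ + b τ * q τ + ε * (Real.exp (L * τ) * L))
              (Set.Ico t₁ τ) τ := (hPD τ).hasDerivWithinAt
          rw [hasDerivWithinAt_iff_tendsto_slope' hτnot] at hW
          refine le_of_tendsto hW ?_
          filter_upwards [eventually_mem_nhdsWithin] with t ht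
          have h1 : 0 < P t := (hpre t ht.1 ht.2).1
          rw [slope_def_field, hPτ0, sub_zero]
          apply div_nonpos_of_nonneg_of_nonpos h1.le
          linarith [ht.2]
        linarith
      · -- Q τ = 0 : q crosses zero
        have hQτ0 : Q τ = 0 := le_antisymm hQτ hcase
        have hqτ : q τ = ε * Real.exp (L * τ) := by
          have : q τ - ε * Real.exp (L * τ) = 0 := hQτ0
          linarith
        have hpτ : p τ = P τ - ε * Real.exp (L * τ) := by simp [hPdef]
        have hDneg : c τ * p τ + d τ * q τ - ε * (Real.exp (L * τ) * L) < 0 := by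
          have h1 : c τ * p τ ≤ M * (ε * Real.exp (L * τ)) := by
            rw [hpτ]
            nlinarith [heτ, hcτ.1, hcτ.2, hcτ0, hPτ]
          have h2 : d τ * q τ ≤ M * (ε * Real.exp (L * τ)) := by
            rw [hqτ]
            nlinarith [heτ, hdτ.1, hdτ.2]
          have : ε * (Real.exp (L * τ) * L) = (2 * M + 1) * (ε * Real.exp (L * τ)) := by
            rw [hLdef]; ring
          rw [this]
          nlinarith [heτ]
        have hslope : 0 ≤ c τ * p τ + d τ * q τ - ε * (Real.exp (L * τ) * L) := by
          have hW : HasDerivWithinAt Q (c τ * p τ + d τ * q τ - ε * (Real.exp (L * τ) * L))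
              (Set.Ico t₁ τ) τ := (hQD τ).hasDerivWithinAt
          rw [hasDerivWithinAt_iff_tendsto_slope' hτnot] at hW
          refine ge_of_tendsto hW ?_
          filter_upwards [eventually_mem_nhdsWithin] with t ht
          have h1 : Q t < 0 := (hpre t ht.1 ht.2).2
          rw [slope_def_field, hQτ0, sub_zero]
          exact div_nonneg_iff.mpr (Or.inr ⟨by linarith, by linarith [ht.2]⟩)
        linarith
    · -- S is empty: the strict inequalities hold everywhere
      intro t ht
      have hnotS : t ∉ S := fun h => hS ⟨t, h⟩
      have := fun h => hnotS ((hSmem t).2 ⟨ht, h⟩)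
      constructor
      · by_contra h; push_neg at h; exact this (Or.inl h)
      · by_contra h; push_neg at h; exact this (Or.inr h)
  -- let ε → 0
  intro t ht
  have hE : 0 < Real.exp (L * t) := Real.exp_pos _
  constructor
  · by_contra h
    push_neg at h
    have hε : 0 < -p t / (2 * Real.exp (L * t)) := div_pos (by linarith) (by positivity)
    have hval : -p t / (2 * Real.exp (L * t)) * Real.exp (L * t) = -p t / 2 := by
      field_simp
    have := (key _ hε t ht).1
    rw [hval] at this
    linarith
  · by_contra h
    push_neg at h
    have hε : 0 < q t / (2 * Real.exp (L * t)) := div_pos (by linarith) (by positivity)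
    have hval : q t / (2 * Real.exp (L * t)) * Real.exp (L * t) = q t / 2 := by
      field_simp
    have := (key _ hε t ht).2
    rw [hval] at this
    linarith

/-- A function with nonnegative derivative on `[t₁, t₂]` whose endpoint values are
equal is constant there. -/
lemma flat_of_nonneg_deriv (x x' : ℝ → ℝ) (t₁ t₂ : ℝ)
    (hx : ∀ t, HasDerivAt x (x' t) t) (hsign : ∀ t ∈ Set.Icc t₁ t₂, 0 ≤ x' t)
    (he : x t₂ ≤ x t₁) : ∀ t ∈ Set.Icc t₁ t₂, x t = x t₁ := by
  have hxc : Continuous x :=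
    continuous_iff_continuousAt.2 fun t => (hx t).differentiableAt.continuousAt
  have hmono : MonotoneOn x (Set.Icc t₁ t₂) := by
    apply monotoneOn_of_hasDerivWithinAt_nonneg (convex_Icc t₁ t₂) hxc.continuousOn
    · intro t ht
      exact (hx t).hasDerivWithinAt
    · intro t ht
      rw [interior_Icc] at ht
      exact hsign t ⟨ht.1.le, ht.2.le⟩
  intro t ht
  have h1 : x t₁ ≤ x t := hmono ⟨le_refl _, ht.1.trans ht.2⟩ ht ht.1
  have h2 : x t ≤ x t₂ := hmono ht ⟨ht.1.trans ht.2, le_refl _⟩ ht.2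
  linarith

/-- The Lotka–Volterra competition system has no nonconstant periodic
solution contained in the open first quadrant. -/
theorem stmt_2 (α β δ : ℝ) (hα : 1 < α) (hβ : 1 < β) (hδ : 0 < δ) :
    ¬ ∃ (T : ℝ) (x y : ℝ → ℝ), 0 < T ∧
      (∀ t, 0 < x t) ∧ (∀ t, 0 < y t) ∧
      (∀ t, HasDerivAt x (x t * (1 - x t - α * y t)) t) ∧
      (∀ t, HasDerivAt y (δ * y t * (1 - y t - β * x t)) t) ∧
      (∀ t, x (t + T) = x t) ∧ (∀ t, y (t + T) = y t) ∧
      ¬ (∀ t s, x t = x s ∧ y t = y s) := by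
  rintro ⟨T, x, y, hT, hx0, hy0, hdx, hdy, hxT, hyT, hnc⟩
  set p : ℝ → ℝ := fun t => x t * (1 - x t - α * y t) with hpdef
  set q : ℝ → ℝ := fun t => δ * y t * (1 - y t - β * x t) with hqdef
  have hxc : Continuous x :=
    continuous_iff_continuousAt.2 fun t => (hdx t).differentiableAt.continuousAt
  have hyc : Continuous y :=
    continuous_iff_continuousAt.2 fun t => (hdy t).differentiableAt.continuousAt
  -- Rolle: the derivative of x vanishes somewhere
  obtain ⟨t₁, _, hp1⟩ : ∃ c ∈ Set.Ioo 0 T, p c = 0 := by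
    apply exists_hasDerivAt_eq_zero hT hxc.continuousOn
    · have := hxT 0; rw [zero_add] at this; exact this.symm
    · exact fun s _ => hdx s
  set t₂ : ℝ := t₁ + T with ht₂def
  have h12 : t₁ ≤ t₂ := by simp [ht₂def]; linarith
  -- coefficient functions of the variational system
  set aa : ℝ → ℝ := fun t => 1 - 2 * x t - α * y t with haadef
  set bb : ℝ → ℝ := fun t => -(α * x t) with hbbdef
  set cc : ℝ → ℝ := fun t => -(δ * β * y t) with hccdef
  set dd : ℝ → ℝ := fun t => δ * (1 - 2 * y t - β * x t) with hdddef
  have haac : Continuous aa := by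
    exact (continuous_const.sub (continuous_const.mul hxc)).sub (continuous_const.mul hyc)
  have hbbc : Continuous bb := (continuous_const.mul hxc).neg
  have hccc : Continuous cc := (continuous_const.mul hyc).neg
  have hddc : Continuous dd := by
    exact continuous_const.mul
      ((continuous_const.sub (continuous_const.mul hyc)).sub (continuous_const.mul hxc))
  -- the variational system for (x', y') = (p, q)
  have hDp : ∀ t, HasDerivAt p (aa t * p t + bb t * q t) t := by
    intro t
    have h1 : HasDerivAt (fun s => 1 - x s - α * y s) (-(p t) - α * q t) t := by
      have := ((hasDerivAt_const t (1 : ℝ)).sub (hdx t)).sub ((hdy t).const_mul α)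
      refine this.congr_deriv ?_
      simp only [hpdef, hqdef]
      ring
    have h2 := (hdx t).mul h1
    refine h2.congr_deriv ?_
    simp only [hpdef, hqdef, haadef, hbbdef]
    ring
  have hDq : ∀ t, HasDerivAt q (cc t * p t + dd t * q t) t := by
    intro t
    have h1 : HasDerivAt (fun s => 1 - y s - β * x s) (-(q t) - β * p t) t := by
      have := ((hasDerivAt_const t (1 : ℝ)).sub (hdy t)).sub ((hdx t).const_mul β)
      refine this.congr_deriv ?_
      simp only [hpdef, hqdef]
      ring
    have h2 := ((hdy t).const_mul δ).mul h1
    refine h2.congr_deriv ?_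
    simp only [hpdef, hqdef, hccdef, hdddef]
    ring
  -- bounds for the coefficients on the compact interval
  obtain ⟨Ma, hMa⟩ := isCompact_Icc.exists_bound_of_continuousOn
    (haac.continuousOn : ContinuousOn aa (Set.Icc t₁ t₂))
  obtain ⟨Mb, hMb⟩ := isCompact_Icc.exists_bound_of_continuousOn
    (hbbc.continuousOn : ContinuousOn bb (Set.Icc t₁ t₂))
  obtain ⟨Mc, hMc⟩ := isCompact_Icc.exists_bound_of_continuousOn
    (hccc.continuousOn : ContinuousOn cc (Set.Icc t₁ t₂))
  obtain ⟨Md, hMd⟩ := isCompact_Icc.exists_bound_of_continuousOn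
    (hddc.continuousOn : ContinuousOn dd (Set.Icc t₁ t₂))
  set M : ℝ := max (max Ma Mb) (max Mc Md) with hMdef
  have hMbound : ∀ t ∈ Set.Icc t₁ t₂, |aa t| ≤ M ∧ |bb t| ≤ M ∧ |cc t| ≤ M ∧ |dd t| ≤ M := by
    intro t ht
    refine ⟨le_trans ?_ ((le_max_left Ma Mb).trans (le_max_left _ _)),
      le_trans ?_ ((le_max_right Ma Mb).trans (le_max_left _ _)),
      le_trans ?_ ((le_max_left Mc Md).trans (le_max_right _ _)),
      le_trans ?_ ((le_max_right Mc Md).trans (le_max_right _ _))⟩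
    · simpa [Real.norm_eq_abs] using hMa t ht
    · simpa [Real.norm_eq_abs] using hMb t ht
    · simpa [Real.norm_eq_abs] using hMc t ht
    · simpa [Real.norm_eq_abs] using hMd t ht
  have hbsign : ∀ t ∈ Set.Icc t₁ t₂, bb t ≤ 0 := by
    intro t _
    simp only [hbbdef, neg_nonpos]
    exact mul_nonneg (by linarith) (hx0 t).le
  have hcsign : ∀ t ∈ Set.Icc t₁ t₂, cc t ≤ 0 := by
    intro t _
    simp only [hccdef, neg_nonpos]
    exact mul_nonneg (mul_nonneg hδ.le (by linarith)) (hy0 t).le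
  have hxe : x t₂ = x t₁ := hxT t₁
  have hye : y t₂ = y t₁ := hyT t₁
  -- in both cases x and y are constant on [t₁, t₂]
  have hflat : ∀ t ∈ Set.Icc t₁ t₂, x t = x t₁ ∧ y t = y t₁ := by
    rcases le_or_gt (q t₁) 0 with hq1 | hq1
    · have hcone := cone_invariance t₁ t₂ M h12 p q aa bb cc dd hDp hDq
        hbsign hcsign hMbound hp1 hq1
      intro t ht
      constructor
      · exact flat_of_nonneg_deriv x p t₁ t₂ hdx (fun s hs => (hcone s hs).1) hxe.le t ht
      · have := flat_of_nonneg_deriv (fun s => -(y s)) (fun s => -(q s)) t₁ t₂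
          (fun s => (hdy s).neg) (fun s hs => neg_nonneg.2 (hcone s hs).2)
          (by simp [hye]) t ht
        simpa using this
    · have hDp' : ∀ t, HasDerivAt (fun s => -(p s)) (aa t * (-(p t)) + bb t * (-(q t))) t := by
        intro t
        have := (hDp t).neg
        refine this.congr_deriv ?_
        ring
      have hDq' : ∀ t, HasDerivAt (fun s => -(q s)) (cc t * (-(p t)) + dd t * (-(q t))) t := by
        intro t
        have := (hDq t).neg
        refine this.congr_deriv ?_
        ring
      have hcone := cone_invariance t₁ t₂ M h12 (fun s => -(p s)) (fun s => -(q s))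
        aa bb cc dd hDp' hDq' hbsign hcsign hMbound (by simp [hp1]) (by simp; linarith)
      intro t ht
      constructor
      · have := flat_of_nonneg_deriv (fun s => -(x s)) (fun s => -(p s)) t₁ t₂
          (fun s => (hdx s).neg) (fun s hs => by simpa using (hcone s hs).1)
          (by simp [hxe]) t ht
        simpa using this
      · exact flat_of_nonneg_deriv y q t₁ t₂ hdy
          (fun s hs => by simpa using (hcone s hs).2) hye.le t ht
  -- periodicity reduces every time to the interval [t₁, t₂]
  have hclaim : ∀ t, x t = x t₁ ∧ y t = y t₁ := by
    intro t
    set n : ℤ := ⌊(t - t₁) / T⌋ with hndef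
    have hfl : (n : ℝ) ≤ (t - t₁) / T := Int.floor_le _
    have hfu : (t - t₁) / T < n + 1 := Int.lt_floor_add_one _
    have h1 : t₁ ≤ t - n * T := by
      rw [le_div_iff₀ hT] at hfl
      linarith
    have h2 : t - n * T ≤ t₂ := by
      rw [div_lt_iff₀ hT] at hfu
      simp only [ht₂def]
      linarith
    have hxP : Function.Periodic x T := hxT
    have hyP : Function.Periodic y T := hyT
    have hx' : x (t - n * T) = x t := hxP.sub_int_mul_eq n
    have hy' : y (t - n * T) = y t := hyP.sub_int_mul_eq n
    have := hflat (t - n * T) ⟨h1, h2⟩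
    exact ⟨hx' ▸ this.1, hy' ▸ this.2⟩
  exact hnc fun t s => ⟨(hclaim t).1.trans (hclaim s).1.symm,
    (hclaim t).2.trans (hclaim s).2.symm⟩
end

section
/- Let α>1, β>1, δ>0 and set A=(α-1)/(αβ-1), B=(β-1)/(αβ-1). Every solution (x(t),y(t)) of the system dx/dt = x(1-x-αy), dy/dt = δy(1-y-βx) defined on [0,∞) with x(0)≥0 and y(0)≥0 converges, as t→∞, to one of the four equilibrium points (0,0), (1,0), (0,1), (A,B). -/
open Filter Set

open Topology intervalIntegral MeasureTheory


lemma expSol (u c : ℝ → ℝ) (hc : ContinuousOn c (Ici 0))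
    (hu : ∀ t ∈ Ici (0:ℝ), HasDerivWithinAt u (c t * u t) (Ici 0) t) :
    ∀ t ∈ Ici (0:ℝ), u t = u 0 * Real.exp (∫ s in (0:ℝ)..t, c s) := by
  set C : ℝ → ℝ := fun t => ∫ s in (0:ℝ)..t, c s with hC
  have hmeas : AEStronglyMeasurable c (volume.restrict (Ici (0:ℝ))) :=
    hc.aestronglyMeasurable measurableSet_Ici
  have hint : ∀ b : ℝ, 0 ≤ b → IntervalIntegrable c volume 0 b := by
    intro b hb
    apply (hc.mono _).intervalIntegrable
    rw [uIcc_of_le hb]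
    exact Icc_subset_Ici_self
  have hCd : ∀ b ∈ Ici (0:ℝ), HasDerivWithinAt C (c b) (Ici 0) b := by
    intro b hb
    rcases eq_or_lt_of_le (mem_Ici.1 hb) with h0 | h0
    · subst h0
      exact integral_hasDerivWithinAt_right (hint 0 le_rfl)
        ⟨Ici 0, mem_of_superset self_mem_nhdsWithin Ioi_subset_Ici_self, hmeas⟩
        ((hc 0 (mem_Ici.2 le_rfl)).mono Ioi_subset_Ici_self)
    · have hca : ContinuousAt c b := hc.continuousAt (Ici_mem_nhds h0)
      exact (integral_hasDerivAt_right (hint b h0.le)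
        ⟨Ici 0, Ici_mem_nhds h0, hmeas⟩ hca).hasDerivWithinAt
  have hucont : ContinuousOn u (Ici 0) := fun s hs => (hu s hs).continuousWithinAt
  have hCcont : ContinuousOn C (Ici 0) := fun s hs => (hCd s hs).continuousWithinAt
  have hvd : ∀ s ∈ Ici (0:ℝ),
      HasDerivWithinAt (fun r => u r * Real.exp (-(C r))) 0 (Ici 0) s := by
    intro s hs
    have h1 : HasDerivWithinAt (fun r => Real.exp (-(C r)))
        (Real.exp (-(C s)) * (-(c s))) (Ici 0) s := ((hCd s hs).neg).exp
    have := (hu s hs).mul h1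
    refine this.congr_deriv ?_
    ring
  intro t ht
  have ht' : (0:ℝ) ≤ t := ht
  have key := constant_of_has_deriv_right_zero
    (f := fun r => u r * Real.exp (-(C r))) (a := 0) (b := t)
    ((hucont.mono Icc_subset_Ici_self).mul
      (Real.continuous_exp.comp_continuousOn ((hCcont.mono Icc_subset_Ici_self).neg)))
    (fun s hs => ((hvd s (mem_Ici.2 hs.1)).mono (Ici_subset_Ici.2 hs.1)))
    t (mem_Icc.2 ⟨ht', le_rfl⟩)
  have hC0 : C 0 = 0 := by simp [hC]
  rw [hC0] at key
  simp only [neg_zero, Real.exp_zero, mul_one] at key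
  have h2 := congrArg (fun z => z * Real.exp (C t)) key
  rw [mul_assoc, ← Real.exp_add, neg_add_cancel, Real.exp_zero, mul_one] at h2
  exact h2

lemma barrier (u w : ℝ → ℝ) (d : ℝ) (hd : 0 < d)
    (hu : ∀ t ∈ Ici (0:ℝ), HasDerivWithinAt u (d * u t * (1 - u t - w t)) (Ici 0) t)
    (hw : ∀ t ∈ Ici (0:ℝ), 0 ≤ w t) (hupos : ∀ t ∈ Ici (0:ℝ), 0 ≤ u t) :
    ∀ t ∈ Ici (0:ℝ), u t ≤ max (u 0) 1 := by
  have hucont : ContinuousOn u (Ici 0) := fun s hs => (hu s hs).continuousWithinAt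
  intro t ht
  by_contra hcon
  push_neg at hcon
  set C := u t with hCdef
  have hC1 : 1 < C := lt_of_le_of_lt (le_max_right _ _) hcon
  have hC0 : u 0 < C := lt_of_le_of_lt (le_max_left _ _) hcon
  set V : Set ℝ := {s | 0 ≤ s ∧ C ≤ u s} with hV
  have hVne : V.Nonempty := ⟨t, ht, le_rfl⟩
  have hVbdd : BddBelow V := ⟨0, fun s hs => hs.1⟩
  set τ := sInf V with hτ
  have hτ0 : 0 ≤ τ := le_csInf hVne (fun s hs => hs.1)
  have hτmem : τ ∈ Ici (0:ℝ) := hτ0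
  have huτ : C ≤ u τ := by
    have h1 : τ ∈ closure V := csInf_mem_closure hVne hVbdd
    have h2 : ContinuousWithinAt u V τ :=
      (hucont τ hτmem).mono (fun s hs => hs.1)
    have h3 : u τ ∈ closure (u '' V) := h2.mem_closure_image h1
    have h4 : closure (u '' V) ⊆ Ici C := by
      apply closure_minimal _ isClosed_Ici
      rintro _ ⟨s, hs, rfl⟩
      exact hs.2
    exact h4 h3
  have hτpos : 0 < τ := by
    rcases eq_or_lt_of_le hτ0 with h | h
    · exfalso; rw [← h] at huτ; exact absurd huτ (not_le.2 hC0)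
    · exact h
  have hbefore : ∀ s, 0 ≤ s → s < τ → u s < C := by
    intro s hs0 hsτ
    by_contra hc
    push_neg at hc
    exact absurd (csInf_le hVbdd ⟨hs0, hc⟩) (not_le.2 hsτ)
  -- derivative at τ is negative
  have hderneg : d * u τ * (1 - u τ - w τ) < 0 := by
    have h1 : 0 < u τ := lt_of_lt_of_le (lt_trans zero_lt_one hC1) huτ
    have h2 : 1 - u τ - w τ < 0 := by
      have := hw τ hτmem
      nlinarith [lt_of_lt_of_le hC1 huτ]
    exact mul_neg_of_pos_of_neg (mul_pos hd h1) h2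
  have hslope := hasDerivWithinAt_iff_tendsto_slope.1
    ((hu τ hτmem).mono (Icc_subset_Ici_self : Icc (0:ℝ) τ ⊆ Ici 0))
  have hIcc : Icc (0:ℝ) τ \ {τ} = Ico 0 τ := by
    ext s; simp only [mem_diff, mem_Icc, mem_Ico, mem_singleton_iff]
    constructor
    · rintro ⟨⟨h1, h2⟩, h3⟩; exact ⟨h1, lt_of_le_of_ne h2 h3⟩
    · rintro ⟨h1, h2⟩; exact ⟨⟨h1, h2.le⟩, ne_of_lt h2⟩
  rw [hIcc] at hslope
  have hev : ∀ᶠ s in 𝓝[Ico 0 τ] τ, slope u τ s < 0 :=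
    hslope.eventually_lt_const hderneg
  have hne : (𝓝[Ico 0 τ] τ).NeBot :=
    (right_nhdsWithin_Ioo_neBot hτpos).mono (nhdsWithin_mono _ Ioo_subset_Ico_self)
  obtain ⟨s, hs1, hs2⟩ := (hev.and (eventually_mem_nhdsWithin)).exists
  -- hs1 : slope u τ s < 0, hs2 : s ∈ Ico 0 τ
  have hslt : s - τ < 0 := sub_neg.2 hs2.2
  have : u s - u τ > 0 := by
    rw [slope_def_field] at hs1
    rcases div_neg_iff.1 hs1 with ⟨hp, _⟩ | ⟨_, hp2⟩
    · exact hp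
    · linarith
  have husC : u s < C := hbefore s hs2.1 hs2.2
  nlinarith [huτ]

lemma eventually_right {τ : ℝ} {P : ℝ → Prop} (h : ∀ᶠ s in 𝓝[Ioi τ] τ, P s) :
    ∃ ε > 0, ∀ s ∈ Ioo τ (τ + ε), P s := by
  rw [eventually_iff, Metric.mem_nhdsWithin_iff] at h
  obtain ⟨ε, hε, hsub⟩ := h
  refine ⟨ε, hε, fun s hs => hsub ⟨?_, hs.1⟩⟩
  rw [Real.ball_eq_Ioo]
  exact ⟨by linarith [hs.1], hs.2⟩

lemma neg_right_of_deriv_neg {p : ℝ → ℝ} {τ dp : ℝ}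
    (hder : HasDerivWithinAt p dp (Ici τ) τ) (hdp : dp < 0) (hpτ : p τ = 0) :
    ∀ᶠ s in 𝓝[Ioi τ] τ, p s < 0 := by
  have hs := hasDerivWithinAt_iff_tendsto_slope.1 hder
  rw [Ici_sdiff_left] at hs
  filter_upwards [hs.eventually_lt_const hdp, self_mem_nhdsWithin] with s h1 h2
  rw [slope_def_field, hpτ, sub_zero] at h1
  have h3 : 0 < s - τ := sub_pos.2 h2
  have := (div_neg_iff.1 h1)
  rcases this with ⟨_, h4⟩ | ⟨h4, _⟩
  · linarith
  · exact h4

lemma pos_right_of_deriv_pos {p : ℝ → ℝ} {τ dp : ℝ}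
    (hder : HasDerivWithinAt p dp (Ici τ) τ) (hdp : 0 < dp) (hpτ : p τ = 0) :
    ∀ᶠ s in 𝓝[Ioi τ] τ, 0 < p s := by
  have := neg_right_of_deriv_neg (p := fun s => -(p s)) (hder.neg) (by linarith) (by simp [hpτ])
  filter_upwards [this] with s h
  linarith

lemma invariance (p q a b c e : ℝ → ℝ) (K : ℝ)
    (hp : ∀ t ∈ Ici (0:ℝ), HasDerivWithinAt p (-(a t) * p t - b t * q t) (Ici 0) t)
    (hq : ∀ t ∈ Ici (0:ℝ), HasDerivWithinAt q (-(c t) * p t - e t * q t) (Ici 0) t)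
    (hb : ∀ t ∈ Ici (0:ℝ), 0 < b t) (hc : ∀ t ∈ Ici (0:ℝ), 0 < c t)
    (hK : ∀ t ∈ Ici (0:ℝ), |a t| ≤ K ∧ |b t| ≤ K ∧ |c t| ≤ K ∧ |e t| ≤ K)
    (t0 : ℝ) (ht0 : 0 ≤ t0) (hp0 : p t0 ≤ 0) (hq0 : 0 ≤ q t0) :
    ∀ t, t0 ≤ t → p t ≤ 0 ∧ 0 ≤ q t := by
  have hpcont : ContinuousOn p (Ici 0) := fun s hs => (hp s hs).continuousWithinAt
  have hqcont : ContinuousOn q (Ici 0) := fun s hs => (hq s hs).continuousWithinAt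
  by_contra hcon
  push_neg at hcon
  obtain ⟨t1, ht1, hbad⟩ := hcon
  set V : Set ℝ := {s | t0 ≤ s ∧ (0 < p s ∨ q s < 0)} with hV
  have hVne : V.Nonempty := by
    refine ⟨t1, ht1, ?_⟩
    by_cases h : p t1 ≤ 0
    · exact Or.inr (lt_of_not_ge (fun hq1 => absurd (hbad h) (not_lt.2 hq1)))
    · exact Or.inl (lt_of_not_ge h)
  have hVbdd : BddBelow V := ⟨t0, fun s hs => hs.1⟩
  set τ := sInf V with hτdef
  have hτt0 : t0 ≤ τ := le_csInf hVne (fun s hs => hs.1)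
  have hτ0 : (0:ℝ) ≤ τ := le_trans ht0 hτt0
  have hτmem : τ ∈ Ici (0:ℝ) := hτ0
  have hbefore : ∀ s, t0 ≤ s → s < τ → p s ≤ 0 ∧ 0 ≤ q s := by
    intro s hs0 hsτ
    by_contra hch
    have : s ∈ V := by
      refine ⟨hs0, ?_⟩
      push_neg at hch
      by_cases h : p s ≤ 0
      · exact Or.inr (lt_of_not_ge (fun hh => absurd (hch h) (not_lt.2 hh)))
      · exact Or.inl (lt_of_not_ge h)
    exact absurd (csInf_le hVbdd this) (not_le.2 hsτ)
  -- condition holds at τ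
  have hatτ : p τ ≤ 0 ∧ 0 ≤ q τ := by
    rcases eq_or_lt_of_le hτt0 with h | h
    · rw [← h]; exact ⟨hp0, hq0⟩
    · have hne : (𝓝[Ico t0 τ] τ).NeBot :=
        (right_nhdsWithin_Ioo_neBot h).mono (nhdsWithin_mono _ Ioo_subset_Ico_self)
      have hIsub : Ico t0 τ ⊆ Ici (0:ℝ) := fun s hs => le_trans ht0 hs.1
      have htp : Tendsto p (𝓝[Ico t0 τ] τ) (𝓝 (p τ)) := (hpcont τ hτmem).mono hIsub
      have htq : Tendsto q (𝓝[Ico t0 τ] τ) (𝓝 (q τ)) := (hqcont τ hτmem).mono hIsub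
      have hev : ∀ᶠ s in 𝓝[Ico t0 τ] τ, p s ≤ 0 ∧ 0 ≤ q s := by
        filter_upwards [self_mem_nhdsWithin] with s hs
        exact hbefore s hs.1 hs.2
      exact ⟨le_of_tendsto htp (hev.mono (fun s h => h.1)),
             ge_of_tendsto htq (hev.mono (fun s h => h.2))⟩
  -- τ itself is not in V
  have hτnotV : τ ∉ V := fun hmem => by
    rcases hmem.2 with h | h
    · exact absurd hatτ.1 (not_le.2 h)
    · exact absurd hatτ.2 (not_le.2 h)
  -- helper to derive contradiction from "condition holds just after τ"
  have hcontra : ∀ ε > 0, (∀ s ∈ Ioo τ (τ + ε), p s ≤ 0 ∧ 0 ≤ q s) → False := by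
    intro ε hε hgood
    obtain ⟨v, hvV, hvlt⟩ := exists_lt_of_csInf_lt hVne (by linarith : sInf V < τ + ε)
    have hvτ : τ ≤ v := csInf_le hVbdd hvV
    have hvne : v ≠ τ := fun h => hτnotV (h ▸ hvV)
    have : p v ≤ 0 ∧ 0 ≤ q v := hgood v ⟨lt_of_le_of_ne hvτ (Ne.symm hvne), hvlt⟩
    rcases hvV.2 with h | h
    · exact absurd this.1 (not_le.2 h)
    · exact absurd this.2 (not_le.2 h)
  -- eventual facts in 𝓝[Ioi τ] τ from continuity within Ici 0
  have hmono : 𝓝[Ioi τ] τ ≤ 𝓝[Ici 0] τ :=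
    nhdsWithin_mono _ (fun s hs => le_trans hτ0 (le_of_lt hs))
  rcases lt_or_eq_of_le hatτ.1 with hpτ | hpτ <;> rcases lt_or_eq_of_le hatτ.2 with hqτ | hqτ
  · -- p τ < 0, 0 < q τ : continuity
    have h1 : ∀ᶠ s in 𝓝[Ioi τ] τ, p s < 0 :=
      (((hpcont τ hτmem).tendsto).mono_left hmono).eventually_lt_const hpτ
    have h2 : ∀ᶠ s in 𝓝[Ioi τ] τ, 0 < q s :=
      (((hqcont τ hτmem).tendsto).mono_left hmono).eventually_const_lt hqτ
    obtain ⟨ε, hε, hgood⟩ := eventually_right ((h1.and h2).mono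
      (fun s h => (⟨le_of_lt h.1, le_of_lt h.2⟩ : p s ≤ 0 ∧ 0 ≤ q s)))
    exact hcontra ε hε hgood
  · -- p τ < 0, q τ = 0 : q' (τ) > 0
    have hdq : 0 < -(c τ) * p τ - e τ * q τ := by
      rw [← hqτ]
      have := hc τ hτmem
      nlinarith
    have h2 : ∀ᶠ s in 𝓝[Ioi τ] τ, 0 < q s :=
      pos_right_of_deriv_pos ((hq τ hτmem).mono (Ici_subset_Ici.2 hτ0)) hdq hqτ.symm
    have h1 : ∀ᶠ s in 𝓝[Ioi τ] τ, p s < 0 :=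
      (((hpcont τ hτmem).tendsto).mono_left hmono).eventually_lt_const hpτ
    obtain ⟨ε, hε, hgood⟩ := eventually_right ((h1.and h2).mono
      (fun s h => (⟨le_of_lt h.1, le_of_lt h.2⟩ : p s ≤ 0 ∧ 0 ≤ q s)))
    exact hcontra ε hε hgood
  · -- p τ = 0, 0 < q τ : p' (τ) < 0
    have hdp : -(a τ) * p τ - b τ * q τ < 0 := by
      rw [hpτ]
      have := hb τ hτmem
      nlinarith
    have h1 : ∀ᶠ s in 𝓝[Ioi τ] τ, p s < 0 :=
      neg_right_of_deriv_neg ((hp τ hτmem).mono (Ici_subset_Ici.2 hτ0)) hdp hpτ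
    have h2 : ∀ᶠ s in 𝓝[Ioi τ] τ, 0 < q s :=
      (((hqcont τ hτmem).tendsto).mono_left hmono).eventually_const_lt hqτ
    obtain ⟨ε, hε, hgood⟩ := eventually_right ((h1.and h2).mono
      (fun s h => (⟨le_of_lt h.1, le_of_lt h.2⟩ : p s ≤ 0 ∧ 0 ≤ q s)))
    exact hcontra ε hε hgood
  · -- corner: p τ = 0 = q τ : Gronwall
    have hK0 : 0 ≤ K := le_trans (abs_nonneg _) (hK τ hτmem).1
    have hzero : ∀ s, τ ≤ s → p s = 0 ∧ q s = 0 := by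
      intro T hT
      set F : ℝ → ℝ × ℝ := fun s => (p s, q s) with hF
      have hFc : ContinuousOn F (Icc τ T) :=
        ((hpcont.mono (fun s (hs : s ∈ Icc τ T) => le_trans hτ0 hs.1)).prodMk
         (hqcont.mono (fun s (hs : s ∈ Icc τ T) => le_trans hτ0 hs.1)))
      have hFd : ∀ s ∈ Ico τ T, HasDerivWithinAt F
          (-(a s) * p s - b s * q s, -(c s) * p s - e s * q s) (Ici s) s := by
        intro s hs
        have hs0 : s ∈ Ici (0:ℝ) := le_trans hτ0 hs.1
        exact ((hp s hs0).mono (Ici_subset_Ici.2 hs0)).prodMk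
              ((hq s hs0).mono (Ici_subset_Ici.2 hs0))
      have hFa : ‖F τ‖ ≤ 0 := by
        simp [hF, Prod.norm_def, hpτ, ← hqτ]
      have hbound : ∀ s ∈ Ico τ T,
          ‖(-(a s) * p s - b s * q s, -(c s) * p s - e s * q s)‖ ≤ 2 * K * ‖F s‖ + 0 := by
        intro s hs
        have hs0 : s ∈ Ici (0:ℝ) := le_trans hτ0 hs.1
        obtain ⟨ha', hb', hc', he'⟩ := hK s hs0
        have hpb : |p s| ≤ ‖F s‖ := le_max_left _ _
        have hqb : |q s| ≤ ‖F s‖ := le_max_right _ _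
        have hF0 : 0 ≤ ‖F s‖ := norm_nonneg _
        have e1 : ‖-(a s) * p s - b s * q s‖ ≤ 2 * K * ‖F s‖ := by
          calc ‖-(a s) * p s - b s * q s‖ ≤ ‖(-(a s)) * p s‖ + ‖b s * q s‖ := norm_sub_le _ _
          _ = |a s| * |p s| + |b s| * |q s| := by
              simp [Real.norm_eq_abs, abs_mul]
          _ ≤ K * ‖F s‖ + K * ‖F s‖ :=
              add_le_add (mul_le_mul ha' hpb (abs_nonneg _) hK0)
                (mul_le_mul hb' hqb (abs_nonneg _) hK0)
          _ = 2 * K * ‖F s‖ := by ring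
        have e2 : ‖-(c s) * p s - e s * q s‖ ≤ 2 * K * ‖F s‖ := by
          calc ‖-(c s) * p s - e s * q s‖ ≤ ‖(-(c s)) * p s‖ + ‖e s * q s‖ := norm_sub_le _ _
          _ = |c s| * |p s| + |e s| * |q s| := by
              simp [Real.norm_eq_abs, abs_mul]
          _ ≤ K * ‖F s‖ + K * ‖F s‖ :=
              add_le_add (mul_le_mul hc' hpb (abs_nonneg _) hK0)
                (mul_le_mul he' hqb (abs_nonneg _) hK0)
          _ = 2 * K * ‖F s‖ := by ring
        rw [add_zero]
        exact max_le e1 e2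
      have hg := norm_le_gronwallBound_of_norm_deriv_right_le hFc hFd hFa hbound T
        (mem_Icc.2 ⟨hT, le_rfl⟩)
      rw [gronwallBound_ε0, zero_mul] at hg
      have hFT : F T = 0 := norm_le_zero_iff.1 hg
      have : p T = 0 ∧ q T = 0 := by
        constructor
        · exact congrArg Prod.fst hFT
        · exact congrArg Prod.snd hFT
      exact this
    obtain ⟨v, hvV⟩ := hVne
    have hvτ : τ ≤ v := csInf_le hVbdd hvV
    obtain ⟨hpv, hqv⟩ := hzero v hvτ
    rcases hvV.2 with h | h
    · rw [hpv] at h; exact lt_irrefl _ h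
    · rw [hqv] at h; exact lt_irrefl _ h

lemma tendsto_of_monotoneOn_bounded {u : ℝ → ℝ} {t0 M : ℝ}
    (hm : MonotoneOn u (Ici t0)) (hb : ∀ t ∈ Ici t0, u t ≤ M) :
    ∃ L, Tendsto u atTop (𝓝 L) := by
  set v : ℝ → ℝ := fun t => u (max t t0) with hv
  have hvm : Monotone v := fun s t hst => hm (mem_Ici.2 (le_max_right _ _)) (mem_Ici.2 (le_max_right _ _))
    (max_le_max hst le_rfl)
  have hvb : BddAbove (range v) := ⟨M, by rintro _ ⟨t, rfl⟩; exact hb _ (mem_Ici.2 (le_max_right _ _))⟩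
  refine ⟨⨆ t, v t, (tendsto_atTop_ciSup hvm hvb).congr' ?_⟩
  filter_upwards [eventually_ge_atTop t0] with t ht
  simp [hv, max_eq_left ht]

lemma tendsto_of_antitoneOn_bounded {u : ℝ → ℝ} {t0 M : ℝ}
    (hm : AntitoneOn u (Ici t0)) (hb : ∀ t ∈ Ici t0, M ≤ u t) :
    ∃ L, Tendsto u atTop (𝓝 L) := by
  have hm' : MonotoneOn (fun t => -(u t)) (Ici t0) := fun s hs t ht hst =>
    neg_le_neg (hm hs ht hst)
  obtain ⟨L, hL⟩ := tendsto_of_monotoneOn_bounded hm'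
    (fun t ht => neg_le_neg (hb t ht))
  exact ⟨-L, by simpa using hL.neg⟩

lemma monoOn_of_deriv {u φ : ℝ → ℝ} {t0 : ℝ} (ht0 : 0 ≤ t0)
    (hu : ∀ t ∈ Ici (0:ℝ), HasDerivWithinAt u (φ t) (Ici 0) t)
    (hφ : ∀ t ∈ Ici t0, 0 ≤ φ t) : MonotoneOn u (Ici t0) := by
  have hsub : Ici t0 ⊆ Ici (0:ℝ) := Ici_subset_Ici.2 ht0
  have hda : ∀ t ∈ Ioi t0, HasDerivAt u (φ t) t := by
    intro t ht
    exact (hu t (hsub (mem_Ici.2 (le_of_lt ht)))).hasDerivAt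
      (Ici_mem_nhds (lt_of_le_of_lt ht0 ht))
  apply monotoneOn_of_deriv_nonneg (convex_Ici t0)
    (fun t ht => (hu t (hsub ht)).continuousWithinAt.mono hsub)
  · intro t ht
    rw [interior_Ici] at ht
    exact (hda t ht).differentiableAt.differentiableWithinAt
  · intro t ht
    rw [interior_Ici] at ht
    rw [(hda t ht).deriv]
    exact hφ t (mem_Ici.2 (le_of_lt ht))

lemma antiOn_of_deriv {u φ : ℝ → ℝ} {t0 : ℝ} (ht0 : 0 ≤ t0)
    (hu : ∀ t ∈ Ici (0:ℝ), HasDerivWithinAt u (φ t) (Ici 0) t)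
    (hφ : ∀ t ∈ Ici t0, φ t ≤ 0) : AntitoneOn u (Ici t0) := by
  have := monoOn_of_deriv (u := fun t => -(u t)) (φ := fun t => -(φ t)) ht0
    (fun t ht => (hu t ht).neg) (fun t ht => neg_nonneg.2 (hφ t ht))
  intro s hs t ht hst
  have := this hs ht hst
  simp only at this
  linarith

lemma deriv_lim_zero_pos {u φ : ℝ → ℝ} {L c : ℝ}
    (hu : ∀ t ∈ Ici (0:ℝ), HasDerivWithinAt u (φ t) (Ici 0) t)
    (hL : Tendsto u atTop (𝓝 L)) (hφ : Tendsto φ atTop (𝓝 c)) (hc : 0 < c) : False := by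
  obtain ⟨t1, ht1⟩ := (eventually_atTop.1
    ((hφ.eventually_const_lt (half_lt_self hc)).and (eventually_ge_atTop (0:ℝ))))
  have ht10 : (0:ℝ) ≤ t1 := (ht1 t1 le_rfl).2
  -- v := u - (c/2) t is monotone on [t1, ∞)
  have hvm : MonotoneOn (fun t => u t - c / 2 * t) (Ici t1) := by
    apply monoOn_of_deriv ht10 (φ := fun t => φ t - c / 2)
    · intro t ht
      have hlin : HasDerivAt (fun s : ℝ => c / 2 * s) (c / 2) t := by
        simpa using (hasDerivAt_id t).const_mul (c / 2)
      exact (hu t ht).sub hlin.hasDerivWithinAt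
    · intro t ht
      have := (ht1 t ht).1
      linarith
  have hgrow : ∀ t ≥ t1, u t1 + c / 2 * (t - t1) ≤ u t := by
    intro t ht
    have := hvm (self_mem_Ici) (mem_Ici.2 ht) ht
    simp only at this
    linarith
  have hbig : Tendsto (fun t => u t1 + c / 2 * (t - t1)) atTop atTop := by
    apply tendsto_atTop_add_const_left
    have h' : Tendsto (fun t : ℝ => t - t1) atTop atTop :=
      tendsto_atTop_add_const_right _ _ tendsto_id
    exact h'.const_mul_atTop (by linarith)
  have h1 : ∀ᶠ t in atTop, L + 1 ≤ u t1 + c / 2 * (t - t1) := hbig.eventually_ge_atTop _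
  have h2 : ∀ᶠ t in atTop, u t < L + 1 := hL.eventually_lt_const (by linarith)
  obtain ⟨t, hta, htb, htc⟩ := (h1.and (h2.and (eventually_ge_atTop t1))).exists
  exact absurd (le_trans hta (hgrow t htc)) (not_le.2 htb)

lemma deriv_lim_zero {u φ : ℝ → ℝ} {L c : ℝ}
    (hu : ∀ t ∈ Ici (0:ℝ), HasDerivWithinAt u (φ t) (Ici 0) t)
    (hL : Tendsto u atTop (𝓝 L)) (hφ : Tendsto φ atTop (𝓝 c)) : c = 0 := by
  rcases lt_trichotomy c 0 with h | h | h
  · exfalso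
    exact deriv_lim_zero_pos (u := fun t => -(u t)) (φ := fun t => -(φ t))
      (fun t ht => (hu t ht).neg) hL.neg hφ.neg (by linarith)
  · exact h
  · exact absurd (deriv_lim_zero_pos hu hL hφ h) not_false

lemma sign_const_pos {f : ℝ → ℝ} (hf : ContinuousOn f (Ici 0))
    (hne : ∀ t ∈ Ici (0:ℝ), f t ≠ 0) (h0 : 0 < f 0) : ∀ t ∈ Ici (0:ℝ), 0 < f t := by
  intro t ht
  by_contra h
  push_neg at h
  obtain ⟨s, hs, hfs⟩ := intermediate_value_Icc' (ht : (0:ℝ) ≤ t)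
    (hf.mono (Icc_subset_Ici_self)) (⟨h, h0.le⟩ : (0:ℝ) ∈ Icc (f t) (f 0))
  exact hne s hs.1 hfs

lemma sign_const_neg {f : ℝ → ℝ} (hf : ContinuousOn f (Ici 0))
    (hne : ∀ t ∈ Ici (0:ℝ), f t ≠ 0) (h0 : f 0 < 0) : ∀ t ∈ Ici (0:ℝ), f t < 0 := by
  have h' := sign_const_pos (f := fun t => -(f t)) hf.neg
    (fun t ht h => hne t ht (by linarith [neg_eq_zero.1 h]))
    (by simp only [neg_pos]; exact h0)
  intro t ht
  have := h' t ht
  simp only [neg_pos] at this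
  exact this

lemma equilibria (α β δ : ℝ) (hα : 1 < α) (hβ : 1 < β) (hδ : 0 < δ)
    (A B : ℝ) (hA : A = (α - 1) / (α * β - 1)) (hB : B = (β - 1) / (α * β - 1))
    (Lx Ly : ℝ) (e1 : Lx * (1 - Lx - α * Ly) = 0) (e2 : δ * Ly * (1 - Ly - β * Lx) = 0) :
    (Lx = 0 ∧ Ly = 0) ∨ (Lx = 1 ∧ Ly = 0) ∨ (Lx = 0 ∧ Ly = 1) ∨ (Lx = A ∧ Ly = B) := by
  have hne : α * β - 1 ≠ 0 := by nlinarith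
  have e2' : Ly * (1 - Ly - β * Lx) = 0 := by
    have := mul_eq_zero.1 e2
    rcases this with h | h
    · rcases mul_eq_zero.1 h with h' | h'
      · exact absurd h' (ne_of_gt hδ)
      · rw [h']; ring
    · rw [mul_eq_zero]; exact Or.inr h
  rcases mul_eq_zero.1 e1 with h1 | h1 <;> rcases mul_eq_zero.1 e2' with h2 | h2
  · exact Or.inl ⟨h1, h2⟩
  · -- Lx = 0, 1 - Ly - β Lx = 0
    refine Or.inr (Or.inr (Or.inl ⟨h1, ?_⟩))
    rw [h1] at h2; linarith
  · -- 1 - Lx - α Ly = 0, Ly = 0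
    refine Or.inr (Or.inl ⟨?_, h2⟩)
    rw [h2] at h1; linarith
  · -- interior
    refine Or.inr (Or.inr (Or.inr ⟨?_, ?_⟩))
    · have hLx : Lx * (α * β - 1) = α - 1 := by linear_combination h1 - α * h2
      rw [hA, eq_div_iff hne]
      linarith [hLx]
    · have hLy : Ly * (α * β - 1) = β - 1 := by linear_combination h2 - β * h1
      rw [hB, eq_div_iff hne]
      linarith [hLy]

/-- Every forward solution of the Lotka–Volterra competition system starting
in the first quadrant converges to one of the four equilibrium points. -/
theorem stmt_4 (α β δ : ℝ) (hα : 1 < α) (hβ : 1 < β) (hδ : 0 < δ)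
    (A B : ℝ) (hA : A = (α - 1) / (α * β - 1)) (hB : B = (β - 1) / (α * β - 1))
    (x y : ℝ → ℝ)
    (hx : ∀ t ∈ Set.Ici (0 : ℝ),
      HasDerivWithinAt x (x t * (1 - x t - α * y t)) (Set.Ici 0) t)
    (hy : ∀ t ∈ Set.Ici (0 : ℝ),
      HasDerivWithinAt y (δ * y t * (1 - y t - β * x t)) (Set.Ici 0) t)
    (hx0 : 0 ≤ x 0) (hy0 : 0 ≤ y 0) :
    Tendsto (fun t => (x t, y t)) atTop (nhds ((0 : ℝ), (0 : ℝ))) ∨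
    Tendsto (fun t => (x t, y t)) atTop (nhds ((1 : ℝ), (0 : ℝ))) ∨
    Tendsto (fun t => (x t, y t)) atTop (nhds ((0 : ℝ), (1 : ℝ))) ∨
    Tendsto (fun t => (x t, y t)) atTop (nhds (A, B)) := by
  have hα0 : (0:ℝ) < α := by linarith
  have hβ0 : (0:ℝ) < β := by linarith
  have hxcont : ContinuousOn x (Ici 0) := fun s hs => (hx s hs).continuousWithinAt
  have hycont : ContinuousOn y (Ici 0) := fun s hs => (hy s hs).continuousWithinAt
  have hxeq := expSol x (fun t => 1 - x t - α * y t)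
    ((continuousOn_const.sub hxcont).sub (continuousOn_const.mul hycont))
    (fun t ht => by convert hx t ht using 1; ring)
  have hyeq := expSol y (fun t => δ * (1 - y t - β * x t))
    (continuousOn_const.mul ((continuousOn_const.sub hycont).sub
      (continuousOn_const.mul hxcont)))
    (fun t ht => by convert hy t ht using 1; ring)
  have hxnn : ∀ t ∈ Ici (0:ℝ), 0 ≤ x t := fun t ht => by
    rw [hxeq t ht]; exact mul_nonneg hx0 (Real.exp_pos _).le
  have hynn : ∀ t ∈ Ici (0:ℝ), 0 ≤ y t := fun t ht => by
    rw [hyeq t ht]; exact mul_nonneg hy0 (Real.exp_pos _).le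
  have hxle := barrier x (fun t => α * y t) 1 one_pos
    (fun t ht => by convert hx t ht using 1 <;> ring)
    (fun t ht => mul_nonneg hα0.le (hynn t ht)) hxnn
  have hyle := barrier y (fun t => β * x t) δ hδ
    (fun t ht => by convert hy t ht using 1 <;> ring)
    (fun t ht => mul_nonneg hβ0.le (hxnn t ht)) hynn
  -- once both coordinates converge, the limit is an equilibrium
  have final : ∀ Lx Ly : ℝ, Tendsto x atTop (𝓝 Lx) → Tendsto y atTop (𝓝 Ly) →
      (Tendsto (fun t => (x t, y t)) atTop (nhds ((0 : ℝ), (0 : ℝ))) ∨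
       Tendsto (fun t => (x t, y t)) atTop (nhds ((1 : ℝ), (0 : ℝ))) ∨
       Tendsto (fun t => (x t, y t)) atTop (nhds ((0 : ℝ), (1 : ℝ))) ∨
       Tendsto (fun t => (x t, y t)) atTop (nhds (A, B))) := by
    intro Lx Ly hLx hLy
    have hφx : Tendsto (fun t => x t * (1 - x t - α * y t)) atTop
        (𝓝 (Lx * (1 - Lx - α * Ly))) :=
      hLx.mul ((tendsto_const_nhds.sub hLx).sub (tendsto_const_nhds.mul hLy))
    have hφy : Tendsto (fun t => δ * y t * (1 - y t - β * x t)) atTop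
        (𝓝 (δ * Ly * (1 - Ly - β * Lx))) :=
      (tendsto_const_nhds.mul hLy).mul
        ((tendsto_const_nhds.sub hLy).sub (tendsto_const_nhds.mul hLx))
    have e1 := deriv_lim_zero hx hLx hφx
    have e2 := deriv_lim_zero hy hLy hφy
    rcases equilibria α β δ hα hβ hδ A B hA hB Lx Ly e1 e2 with
      ⟨h1, h2⟩ | ⟨h1, h2⟩ | ⟨h1, h2⟩ | ⟨h1, h2⟩
    · have h3 := hLx.prodMk_nhds hLy; rw [h1, h2] at h3; exact Or.inl h3
    · have h3 := hLx.prodMk_nhds hLy; rw [h1, h2] at h3; exact Or.inr (Or.inl h3)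
    · have h3 := hLx.prodMk_nhds hLy; rw [h1, h2] at h3
      exact Or.inr (Or.inr (Or.inl h3))
    · have h3 := hLx.prodMk_nhds hLy; rw [h1, h2] at h3
      exact Or.inr (Or.inr (Or.inr h3))
  rcases eq_or_lt_of_le hx0 with hx00 | hx00
  · -- x 0 = 0 : x ≡ 0, axis dynamics for y
    have hx0t : ∀ t ∈ Ici (0:ℝ), x t = 0 := fun t ht => by
      rw [hxeq t ht, ← hx00, zero_mul]
    have hLx : Tendsto x atTop (𝓝 0) := by
      apply Tendsto.congr' _ (tendsto_const_nhds (α := ℝ) (x := (0:ℝ)))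
      filter_upwards [eventually_ge_atTop (0:ℝ)] with t ht
      exact (hx0t t ht).symm
    have hgder : ∀ t ∈ Ici (0:ℝ), HasDerivWithinAt (fun s => 1 - y s - β * x s)
        ((fun s => -(δ * y s)) t * (fun s => 1 - y s - β * x s) t) (Ici 0) t := by
      intro t ht
      have h1 := ((hasDerivWithinAt_const t (Ici 0) 1).sub (hy t ht)).sub
        ((hx t ht).const_mul β)
      refine h1.congr_deriv ?_
      simp only
      rw [hx0t t ht]; ring
    have hgeq := expSol (fun s => 1 - y s - β * x s) (fun s => -(δ * y s))
      ((continuousOn_const.mul hycont).neg) hgder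
    by_cases hg0 : 0 ≤ 1 - y 0 - β * x 0
    · have hgnn : ∀ t ∈ Ici (0:ℝ), 0 ≤ 1 - y t - β * x t := fun t ht => by
        have := hgeq t ht
        rw [this]; exact mul_nonneg hg0 (Real.exp_pos _).le
      have hm : MonotoneOn y (Ici 0) := monoOn_of_deriv le_rfl hy
        (fun t ht => mul_nonneg (mul_nonneg hδ.le (hynn t ht)) (hgnn t ht))
      obtain ⟨Ly, hLy⟩ := tendsto_of_monotoneOn_bounded hm hyle
      exact final 0 Ly hLx hLy
    · push_neg at hg0
      have hgnp : ∀ t ∈ Ici (0:ℝ), 1 - y t - β * x t ≤ 0 := fun t ht => by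
        have := hgeq t ht
        rw [this]; exact mul_nonpos_of_nonpos_of_nonneg hg0.le (Real.exp_pos _).le
      have hm : AntitoneOn y (Ici 0) := antiOn_of_deriv le_rfl hy
        (fun t ht => mul_nonpos_of_nonneg_of_nonpos
          (mul_nonneg hδ.le (hynn t ht)) (hgnp t ht))
      obtain ⟨Ly, hLy⟩ := tendsto_of_antitoneOn_bounded hm hynn
      exact final 0 Ly hLx hLy
  rcases eq_or_lt_of_le hy0 with hy00 | hy00
  · -- y 0 = 0 : y ≡ 0, axis dynamics for x
    have hy0t : ∀ t ∈ Ici (0:ℝ), y t = 0 := fun t ht => by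
      rw [hyeq t ht, ← hy00, zero_mul]
    have hLy : Tendsto y atTop (𝓝 0) := by
      apply Tendsto.congr' _ (tendsto_const_nhds (α := ℝ) (x := (0:ℝ)))
      filter_upwards [eventually_ge_atTop (0:ℝ)] with t ht
      exact (hy0t t ht).symm
    have hfder : ∀ t ∈ Ici (0:ℝ), HasDerivWithinAt (fun s => 1 - x s - α * y s)
        ((fun s => -(x s)) t * (fun s => 1 - x s - α * y s) t) (Ici 0) t := by
      intro t ht
      have h1 := ((hasDerivWithinAt_const t (Ici 0) 1).sub (hx t ht)).sub
        ((hy t ht).const_mul α)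
      refine h1.congr_deriv ?_
      simp only
      rw [hy0t t ht]; ring
    have hfeq := expSol (fun s => 1 - x s - α * y s) (fun s => -(x s))
      (hxcont.neg) hfder
    by_cases hf0 : 0 ≤ 1 - x 0 - α * y 0
    · have hfnn : ∀ t ∈ Ici (0:ℝ), 0 ≤ 1 - x t - α * y t := fun t ht => by
        have := hfeq t ht
        rw [this]; exact mul_nonneg hf0 (Real.exp_pos _).le
      have hm : MonotoneOn x (Ici 0) := monoOn_of_deriv le_rfl hx
        (fun t ht => mul_nonneg (hxnn t ht) (hfnn t ht))
      obtain ⟨Lx, hLx⟩ := tendsto_of_monotoneOn_bounded hm hxle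
      exact final Lx 0 hLx hLy
    · push_neg at hf0
      have hfnp : ∀ t ∈ Ici (0:ℝ), 1 - x t - α * y t ≤ 0 := fun t ht => by
        have := hfeq t ht
        rw [this]; exact mul_nonpos_of_nonpos_of_nonneg hf0.le (Real.exp_pos _).le
      have hm : AntitoneOn x (Ici 0) := antiOn_of_deriv le_rfl hx
        (fun t ht => mul_nonpos_of_nonneg_of_nonpos (hxnn t ht) (hfnp t ht))
      obtain ⟨Lx, hLx⟩ := tendsto_of_antitoneOn_bounded hm hxnn
      exact final Lx 0 hLx hLy
  -- interior case : x 0 > 0, y 0 > 0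
  have hxpos : ∀ t ∈ Ici (0:ℝ), 0 < x t := fun t ht => by
    rw [hxeq t ht]; exact mul_pos hx00 (Real.exp_pos _)
  have hypos : ∀ t ∈ Ici (0:ℝ), 0 < y t := fun t ht => by
    rw [hyeq t ht]; exact mul_pos hy00 (Real.exp_pos _)
  set f : ℝ → ℝ := fun t => 1 - x t - α * y t with hfdef
  set g : ℝ → ℝ := fun t => 1 - y t - β * x t with hgdef
  have hfder : ∀ t ∈ Ici (0:ℝ), HasDerivWithinAt f
      (-(x t) * f t - (α * δ * y t) * g t) (Ici 0) t := by
    intro t ht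
    have h1 := ((hasDerivWithinAt_const t (Ici 0) 1).sub (hx t ht)).sub
      ((hy t ht).const_mul α)
    refine h1.congr_deriv ?_
    ring
  have hgder : ∀ t ∈ Ici (0:ℝ), HasDerivWithinAt g
      (-(β * x t) * f t - (δ * y t) * g t) (Ici 0) t := by
    intro t ht
    have h1 := ((hasDerivWithinAt_const t (Ici 0) 1).sub (hy t ht)).sub
      ((hx t ht).const_mul β)
    refine h1.congr_deriv ?_
    ring
  set Mx : ℝ := max (x 0) 1 with hMx
  set My : ℝ := max (y 0) 1 with hMy
  set K : ℝ := max (max Mx (α * δ * My)) (max (β * Mx) (δ * My)) with hKdef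
  have hK : ∀ t ∈ Ici (0:ℝ), |x t| ≤ K ∧ |α * δ * y t| ≤ K ∧ |β * x t| ≤ K ∧
      |δ * y t| ≤ K := by
    intro t ht
    have h1 : |x t| ≤ K := by
      rw [abs_of_nonneg (hxnn t ht)]
      exact le_trans (hxle t ht) (le_trans (le_max_left _ _) (le_max_left _ _))
    have h2 : |α * δ * y t| ≤ K := by
      rw [abs_of_nonneg (mul_nonneg (mul_nonneg hα0.le hδ.le) (hynn t ht))]
      calc α * δ * y t ≤ α * δ * My := by
            have := hyle t ht
            nlinarith [mul_pos hα0 hδ]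
        _ ≤ K := le_trans (le_max_right _ _) (le_max_left _ _)
    have h3 : |β * x t| ≤ K := by
      rw [abs_of_nonneg (mul_nonneg hβ0.le (hxnn t ht))]
      calc β * x t ≤ β * Mx := by nlinarith [hxle t ht]
        _ ≤ K := le_trans (le_max_left _ _) (le_max_right _ _)
    have h4 : |δ * y t| ≤ K := by
      rw [abs_of_nonneg (mul_nonneg hδ.le (hynn t ht))]
      calc δ * y t ≤ δ * My := by nlinarith [hyle t ht]
        _ ≤ K := le_trans (le_max_right _ _) (le_max_right _ _)
    exact ⟨h1, h2, h3, h4⟩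
  by_cases hQ1 : ∃ t0, 0 ≤ t0 ∧ f t0 ≤ 0 ∧ 0 ≤ g t0
  · obtain ⟨t0, ht0, hf0, hg0⟩ := hQ1
    have hinv := invariance f g x (fun t => α * δ * y t) (fun t => β * x t)
      (fun t => δ * y t) K hfder hgder
      (fun t ht => mul_pos (mul_pos hα0 hδ) (hypos t ht))
      (fun t ht => mul_pos hβ0 (hxpos t ht)) hK t0 ht0 hf0 hg0
    have hmx : AntitoneOn x (Ici t0) := antiOn_of_deriv ht0 hx
      (fun t ht => mul_nonpos_of_nonneg_of_nonpos
        (hxnn t (le_trans ht0 ht)) ((hinv t ht).1))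
    have hmy : MonotoneOn y (Ici t0) := monoOn_of_deriv ht0 hy
      (fun t ht => mul_nonneg
        (mul_nonneg hδ.le (hynn t (le_trans ht0 ht))) ((hinv t ht).2))
    obtain ⟨Lx, hLx⟩ := tendsto_of_antitoneOn_bounded hmx
      (fun t ht => hxnn t (le_trans ht0 ht))
    obtain ⟨Ly, hLy⟩ := tendsto_of_monotoneOn_bounded hmy
      (fun t ht => hyle t (le_trans ht0 ht))
    exact final Lx Ly hLx hLy
  by_cases hQ2 : ∃ t0, 0 ≤ t0 ∧ 0 ≤ f t0 ∧ g t0 ≤ 0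
  · obtain ⟨t0, ht0, hf0, hg0⟩ := hQ2
    have hinv := invariance (fun t => -(f t)) (fun t => -(g t)) x
      (fun t => α * δ * y t) (fun t => β * x t) (fun t => δ * y t) K
      (fun t ht => by
        have := (hfder t ht).neg
        refine this.congr_deriv ?_
        ring)
      (fun t ht => by
        have := (hgder t ht).neg
        refine this.congr_deriv ?_
        ring)
      (fun t ht => mul_pos (mul_pos hα0 hδ) (hypos t ht))
      (fun t ht => mul_pos hβ0 (hxpos t ht)) hK t0 ht0
      (by simpa using hf0) (by simpa using hg0)
    have hinv' : ∀ t, t0 ≤ t → 0 ≤ f t ∧ g t ≤ 0 := by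
      intro t ht
      obtain ⟨h1, h2⟩ := hinv t ht
      constructor <;> linarith
    have hmx : MonotoneOn x (Ici t0) := monoOn_of_deriv ht0 hx
      (fun t ht => mul_nonneg (hxnn t (le_trans ht0 ht)) ((hinv' t ht).1))
    have hmy : AntitoneOn y (Ici t0) := antiOn_of_deriv ht0 hy
      (fun t ht => mul_nonpos_of_nonneg_of_nonpos
        (mul_nonneg hδ.le (hynn t (le_trans ht0 ht))) ((hinv' t ht).2))
    obtain ⟨Lx, hLx⟩ := tendsto_of_monotoneOn_bounded hmx
      (fun t ht => hxle t (le_trans ht0 ht))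
    obtain ⟨Ly, hLy⟩ := tendsto_of_antitoneOn_bounded hmy
      (fun t ht => hynn t (le_trans ht0 ht))
    exact final Lx Ly hLx hLy
  -- neither region is ever entered : f and g have constant sign
  push_neg at hQ1 hQ2
  have hfne : ∀ t ∈ Ici (0:ℝ), f t ≠ 0 := by
    intro t ht h
    have h1 := hQ1 t ht (le_of_eq h)
    have h2 := hQ2 t ht (ge_of_eq h)
    linarith
  have hfcont : ContinuousOn f (Ici 0) :=
    (continuousOn_const.sub hxcont).sub (continuousOn_const.mul hycont)
  rcases lt_trichotomy (f 0) 0 with hf0 | hf0 | hf0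
  · -- f < 0 everywhere, hence g < 0 everywhere
    have hfneg : ∀ t ∈ Ici (0:ℝ), f t < 0 := sign_const_neg hfcont hfne hf0
    have hgneg : ∀ t ∈ Ici (0:ℝ), g t ≤ 0 := fun t ht =>
      (hQ1 t ht (hfneg t ht).le).le
    have hmx : AntitoneOn x (Ici 0) := antiOn_of_deriv le_rfl hx
      (fun t ht => mul_nonpos_of_nonneg_of_nonpos (hxnn t ht) (hfneg t ht).le)
    have hmy : AntitoneOn y (Ici 0) := antiOn_of_deriv le_rfl hy
      (fun t ht => mul_nonpos_of_nonneg_of_nonpos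
        (mul_nonneg hδ.le (hynn t ht)) (hgneg t ht))
    obtain ⟨Lx, hLx⟩ := tendsto_of_antitoneOn_bounded hmx hxnn
    obtain ⟨Ly, hLy⟩ := tendsto_of_antitoneOn_bounded hmy hynn
    exact final Lx Ly hLx hLy
  · exact absurd hf0 (hfne 0 self_mem_Ici)
  · -- f > 0 everywhere, hence g > 0 everywhere
    have hfpos : ∀ t ∈ Ici (0:ℝ), 0 < f t := sign_const_pos hfcont hfne hf0
    have hgpos : ∀ t ∈ Ici (0:ℝ), 0 ≤ g t := fun t ht =>
      (hQ2 t ht (hfpos t ht).le).le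
    have hmx : MonotoneOn x (Ici 0) := monoOn_of_deriv le_rfl hx
      (fun t ht => mul_nonneg (hxnn t ht) (hfpos t ht).le)
    have hmy : MonotoneOn y (Ici 0) := monoOn_of_deriv le_rfl hy
      (fun t ht => mul_nonneg (mul_nonneg hδ.le (hynn t ht)) (hgpos t ht))
    obtain ⟨Lx, hLx⟩ := tendsto_of_monotoneOn_bounded hmx hxle
    obtain ⟨Ly, hLy⟩ := tendsto_of_monotoneOn_bounded hmy hyle
    exact final Lx Ly hLx hLy
end

section
/- Let α>1, β>1, δ>0, A=(α-1)/(αβ-1), B=(β-1)/(αβ-1), and let K_L=(0,A)×(0,B) and K_R=(A,∞)×(B,∞) be open rectangles. If (x(t),y(t)) is a solution of the system dx/dt = x(1-x-αy), dy/dt = δy(1-y-βx) on an interval [t₀,T] with (x(T),y(T)) ∈ K_L, then (x(t),y(t)) ∈ K_L for all t ∈ [t₀,T]; the same holds with K_L replaced by K_R. In other words, K_L and K_R are negatively invariant under the flow. -/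
open Set

/-- Negative invariance of the rectangles `K_L = (0,A)×(0,B)` and
`K_R = (A,∞)×(B,∞)` under the flow of the Lotka–Volterra competition system:
if a solution on `[t₀,T]` ends in the rectangle, it stays in it on all of
`[t₀,T]`. -/
theorem stmt_5 (α β δ : ℝ) (hα : 1 < α) (hβ : 1 < β) (hδ : 0 < δ)
    (A B : ℝ) (hA : A = (α - 1) / (α * β - 1)) (hB : B = (β - 1) / (α * β - 1))
    (t₀ T : ℝ) (ht : t₀ ≤ T) (x y : ℝ → ℝ)
    (hx : ∀ t ∈ Set.Icc t₀ T,
      HasDerivWithinAt x (x t * (1 - x t - α * y t)) (Set.Icc t₀ T) t)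
    (hy : ∀ t ∈ Set.Icc t₀ T,
      HasDerivWithinAt y (δ * y t * (1 - y t - β * x t)) (Set.Icc t₀ T) t) :
    ((x T, y T) ∈ Set.Ioo 0 A ×ˢ Set.Ioo 0 B →
      ∀ t ∈ Set.Icc t₀ T, (x t, y t) ∈ Set.Ioo 0 A ×ˢ Set.Ioo 0 B) ∧
    ((x T, y T) ∈ Set.Ioi A ×ˢ Set.Ioi B →
      ∀ t ∈ Set.Icc t₀ T, (x t, y t) ∈ Set.Ioi A ×ˢ Set.Ioi B) := by
  have hab : 0 < α * β - 1 := by nlinarith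
  have hApos : 0 < A := by rw [hA]; exact div_pos (by linarith) hab
  have hBpos : 0 < B := by rw [hB]; exact div_pos (by linarith) hab
  have hAB : A + α * B = 1 := by
    rw [hA, hB]; field_simp; ring
  have hBA : B + β * A = 1 := by
    rw [hA, hB]; rw [mul_div_assoc', ← add_div, div_eq_one_iff_eq hab.ne']; ring
  have hcx : ContinuousOn x (Icc t₀ T) := fun u hu => (hx u hu).continuousWithinAt
  have hcy : ContinuousOn y (Icc t₀ T) := fun u hu => (hy u hu).continuousWithinAt
  have hTmem : T ∈ Icc t₀ T := ⟨ht, le_rfl⟩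
  -- auxiliary: membership of Icc t₀ T in 𝓝[Ici u] u for u ∈ [t₀, T)
  have hnhds : ∀ u, t₀ ≤ u → u < T → Icc t₀ T ∈ nhdsWithin u (Ici u) := by
    intro u h0 h1
    refine mem_nhdsWithin.2 ⟨Iio T, isOpen_Iio, h1, fun v hv => ⟨le_trans h0 hv.2, hv.1.le⟩⟩
  constructor
  · -- left rectangle
    intro hT t htI
    by_contra hbad
    have hxT : x T ∈ Ioo 0 A := hT.1
    have hyT : y T ∈ Ioo 0 B := hT.2
    set S : Set ℝ := Icc t₀ T ∩ (fun u => (x u, y u)) ⁻¹' (Ioo 0 A ×ˢ Ioo 0 B)ᶜ with hSdef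
    have hSne : S.Nonempty := ⟨t, htI, hbad⟩
    have hSbdd : BddAbove S := ⟨T, fun u hu => hu.1.2⟩
    have hSclosed : IsClosed S :=
      (hcx.prodMk hcy).preimage_isClosed_of_isClosed isClosed_Icc
        (isOpen_Ioo.prod isOpen_Ioo).isClosed_compl
    set s := sSup S with hsdef
    have hsS : s ∈ S := hSclosed.csSup_mem hSne hSbdd
    have hst0 : t₀ ≤ s := hsS.1.1
    have hsT : s ≤ T := hsS.1.2
    have hsltT : s < T := by
      rcases lt_or_eq_of_le hsT with h | h
      · exact h
      · exact absurd hT (by rw [← h]; exact hsS.2)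
    have hin : ∀ u, s < u → u ≤ T → 0 < x u ∧ x u < A ∧ 0 < y u ∧ y u < B := by
      intro u h1 h2
      have huI : u ∈ Icc t₀ T := ⟨le_trans hst0 h1.le, h2⟩
      have : (x u, y u) ∈ Ioo 0 A ×ˢ Ioo 0 B := by
        by_contra hc
        exact absurd (le_csSup hSbdd ⟨huI, hc⟩) (not_le.2 h1)
      exact ⟨this.1.1, this.1.2, this.2.1, this.2.2⟩
    -- strict monotonicity of x and y on [s, T]
    have hmono : StrictMonoOn x (Icc s T) := by
      refine strictMonoOn_of_deriv_pos (convex_Icc s T)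
        (hcx.mono (Icc_subset_Icc hst0 le_rfl)) ?_
      intro u hu
      rw [interior_Icc] at hu
      have huI : u ∈ Icc t₀ T := ⟨le_trans hst0 hu.1.le, hu.2.le⟩
      have hd : HasDerivAt x (x u * (1 - x u - α * y u)) u :=
        (hx u huI).hasDerivAt (Icc_mem_nhds (lt_of_le_of_lt hst0 hu.1) hu.2)
      rw [hd.deriv]
      obtain ⟨h1, h2, h3, h4⟩ := hin u hu.1 hu.2.le
      have : x u + α * y u < 1 := by nlinarith
      nlinarith
    have hmono' : StrictMonoOn y (Icc s T) := by
      refine strictMonoOn_of_deriv_pos (convex_Icc s T)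
        (hcy.mono (Icc_subset_Icc hst0 le_rfl)) ?_
      intro u hu
      rw [interior_Icc] at hu
      have huI : u ∈ Icc t₀ T := ⟨le_trans hst0 hu.1.le, hu.2.le⟩
      have hd : HasDerivAt y (δ * y u * (1 - y u - β * x u)) u :=
        (hy u huI).hasDerivAt (Icc_mem_nhds (lt_of_le_of_lt hst0 hu.1) hu.2)
      rw [hd.deriv]
      obtain ⟨h1, h2, h3, h4⟩ := hin u hu.1 hu.2.le
      have hlt : y u + β * x u < 1 := by nlinarith
      exact mul_pos (mul_pos hδ h3) (by linarith)
    have hxsA : x s < A := lt_trans (hmono ⟨le_rfl, hsT⟩ ⟨hsT, le_rfl⟩ hsltT) hxT.2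
    have hysB : y s < B := lt_trans (hmono' ⟨le_rfl, hsT⟩ ⟨hsT, le_rfl⟩ hsltT) hyT.2
    -- nonnegativity of x s, y s from one-sided continuity
    haveI : (nhdsWithin s (Ioc s T)).NeBot := by
      rw [nhdsWithin_Ioc_eq_nhdsGT hsltT]; infer_instance
    have hxlim : Filter.Tendsto x (nhdsWithin s (Ioc s T)) (nhds (x s)) :=
      ((hcx s ⟨hst0, hsT⟩).mono_left
        (nhdsWithin_mono s (fun v hv => ⟨le_trans hst0 hv.1.le, hv.2⟩)))
    have hylim : Filter.Tendsto y (nhdsWithin s (Ioc s T)) (nhds (y s)) :=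
      ((hcy s ⟨hst0, hsT⟩).mono_left
        (nhdsWithin_mono s (fun v hv => ⟨le_trans hst0 hv.1.le, hv.2⟩)))
    have hxs0 : 0 ≤ x s := by
      refine ge_of_tendsto hxlim ?_
      filter_upwards [self_mem_nhdsWithin] with u hu
      exact (hin u hu.1 hu.2).1.le
    have hys0 : 0 ≤ y s := by
      refine ge_of_tendsto hylim ?_
      filter_upwards [self_mem_nhdsWithin] with u hu
      exact (hin u hu.1 hu.2).2.2.1.le
    -- the boundary point must be on an axis
    have hcase : x s = 0 ∨ y s = 0 := by
      by_contra h
      push_neg at h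
      exact hsS.2 ⟨⟨lt_of_le_of_ne hxs0 (Ne.symm h.1), hxsA⟩,
        ⟨lt_of_le_of_ne hys0 (Ne.symm h.2), hysB⟩⟩
    -- uniform bounds on [s, T]
    have hbox : ∀ u ∈ Icc s T, 0 ≤ x u ∧ x u ≤ A ∧ 0 ≤ y u ∧ y u ≤ B := by
      intro u hu
      rcases eq_or_lt_of_le hu.1 with h | h
      · rw [← h]; exact ⟨hxs0, hxsA.le, hys0, hysB.le⟩
      · obtain ⟨h1, h2, h3, h4⟩ := hin u h hu.2
        exact ⟨h1.le, h2.le, h3.le, h4.le⟩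
    have hderiv_x : ∀ u ∈ Ico s T,
        HasDerivWithinAt x (x u * (1 - x u - α * y u)) (Ici u) u := by
      intro u hu
      have huI : u ∈ Icc t₀ T := ⟨le_trans hst0 hu.1, hu.2.le⟩
      exact (hx u huI).mono_of_mem_nhdsWithin (hnhds u huI.1 hu.2)
    have hderiv_y : ∀ u ∈ Ico s T,
        HasDerivWithinAt y (δ * y u * (1 - y u - β * x u)) (Ici u) u := by
      intro u hu
      have huI : u ∈ Icc t₀ T := ⟨le_trans hst0 hu.1, hu.2.le⟩
      exact (hy u huI).mono_of_mem_nhdsWithin (hnhds u huI.1 hu.2)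
    rcases hcase with h0 | h0
    · -- Gronwall for x : x ≡ 0 on [s,T], contradicting 0 < x T
      have key := norm_le_gronwallBound_of_norm_deriv_right_le
        (f := x) (f' := fun u => x u * (1 - x u - α * y u)) (δ := 0) (K := 1) (ε := 0)
        (a := s) (b := T) (hcx.mono (Icc_subset_Icc hst0 le_rfl)) hderiv_x
        (by rw [h0]; simp) ?_
      · have := key T ⟨hsltT.le, le_rfl⟩
        rw [gronwallBound_ε0] at this
        simp only [zero_mul] at this
        have hxTpos := hxT.1
        rw [Real.norm_eq_abs, abs_of_pos hxTpos] at this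
        linarith
      · intro u hu
        obtain ⟨h1, h2, h3, h4⟩ := hbox u ⟨hu.1, hu.2.le⟩
        have hc0 : 0 ≤ 1 - x u - α * y u := by nlinarith
        have hc1 : 1 - x u - α * y u ≤ 1 := by nlinarith
        rw [Real.norm_eq_abs, abs_of_nonneg (mul_nonneg h1 hc0),
          Real.norm_eq_abs, abs_of_nonneg h1]
        nlinarith
    · -- Gronwall for y
      have key := norm_le_gronwallBound_of_norm_deriv_right_le
        (f := y) (f' := fun u => δ * y u * (1 - y u - β * x u)) (δ := 0) (K := δ) (ε := 0)
        (a := s) (b := T) (hcy.mono (Icc_subset_Icc hst0 le_rfl)) hderiv_y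
        (by rw [h0]; simp) ?_
      · have := key T ⟨hsltT.le, le_rfl⟩
        rw [gronwallBound_ε0] at this
        simp only [zero_mul] at this
        have hyTpos := hyT.1
        rw [Real.norm_eq_abs, abs_of_pos hyTpos] at this
        linarith
      · intro u hu
        obtain ⟨h1, h2, h3, h4⟩ := hbox u ⟨hu.1, hu.2.le⟩
        have hc0 : 0 ≤ 1 - y u - β * x u := by nlinarith
        have hc1 : 1 - y u - β * x u ≤ 1 := by nlinarith
        rw [Real.norm_eq_abs, abs_of_nonneg (mul_nonneg (mul_nonneg hδ.le h3) hc0),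
          Real.norm_eq_abs, abs_of_nonneg h3]
        have := mul_le_of_le_one_right (mul_nonneg hδ.le h3) hc1
        linarith
  · -- right rectangle
    intro hT t htI
    by_contra hbad
    have hxT : A < x T := hT.1
    have hyT : B < y T := hT.2
    set S : Set ℝ := Icc t₀ T ∩ (fun u => (x u, y u)) ⁻¹' (Ioi A ×ˢ Ioi B)ᶜ with hSdef
    have hSne : S.Nonempty := ⟨t, htI, hbad⟩
    have hSbdd : BddAbove S := ⟨T, fun u hu => hu.1.2⟩
    have hSclosed : IsClosed S :=
      (hcx.prodMk hcy).preimage_isClosed_of_isClosed isClosed_Icc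
        (isOpen_Ioi.prod isOpen_Ioi).isClosed_compl
    set s := sSup S with hsdef
    have hsS : s ∈ S := hSclosed.csSup_mem hSne hSbdd
    have hst0 : t₀ ≤ s := hsS.1.1
    have hsT : s ≤ T := hsS.1.2
    have hsltT : s < T := by
      rcases lt_or_eq_of_le hsT with h | h
      · exact h
      · exact absurd hT (by rw [← h]; exact hsS.2)
    have hin : ∀ u, s < u → u ≤ T → A < x u ∧ B < y u := by
      intro u h1 h2
      have huI : u ∈ Icc t₀ T := ⟨le_trans hst0 h1.le, h2⟩
      have : (x u, y u) ∈ Ioi A ×ˢ Ioi B := by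
        by_contra hc
        exact absurd (le_csSup hSbdd ⟨huI, hc⟩) (not_le.2 h1)
      exact ⟨this.1, this.2⟩
    have hanti : StrictAntiOn x (Icc s T) := by
      refine strictAntiOn_of_deriv_neg (convex_Icc s T)
        (hcx.mono (Icc_subset_Icc hst0 le_rfl)) ?_
      intro u hu
      rw [interior_Icc] at hu
      have huI : u ∈ Icc t₀ T := ⟨le_trans hst0 hu.1.le, hu.2.le⟩
      have hd : HasDerivAt x (x u * (1 - x u - α * y u)) u :=
        (hx u huI).hasDerivAt (Icc_mem_nhds (lt_of_le_of_lt hst0 hu.1) hu.2)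
      rw [hd.deriv]
      obtain ⟨h1, h2⟩ := hin u hu.1 hu.2.le
      have hαy : α * B < α * y u := by nlinarith
      exact mul_neg_of_pos_of_neg (lt_trans hApos h1) (by linarith)
    have hanti' : StrictAntiOn y (Icc s T) := by
      refine strictAntiOn_of_deriv_neg (convex_Icc s T)
        (hcy.mono (Icc_subset_Icc hst0 le_rfl)) ?_
      intro u hu
      rw [interior_Icc] at hu
      have huI : u ∈ Icc t₀ T := ⟨le_trans hst0 hu.1.le, hu.2.le⟩
      have hd : HasDerivAt y (δ * y u * (1 - y u - β * x u)) u :=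
        (hy u huI).hasDerivAt (Icc_mem_nhds (lt_of_le_of_lt hst0 hu.1) hu.2)
      rw [hd.deriv]
      obtain ⟨h1, h2⟩ := hin u hu.1 hu.2.le
      have hβx : β * A < β * x u := by nlinarith
      exact mul_neg_of_pos_of_neg (mul_pos hδ (lt_trans hBpos h2)) (by linarith)
    have hxs : A < x s := lt_trans hxT (hanti ⟨le_rfl, hsT⟩ ⟨hsT, le_rfl⟩ hsltT)
    have hys : B < y s := lt_trans hyT (hanti' ⟨le_rfl, hsT⟩ ⟨hsT, le_rfl⟩ hsltT)
    exact hsS.2 ⟨hxs, hys⟩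
end

section
/- Let α>1, β>1, δ>0, A=(α-1)/(αβ-1), B=(β-1)/(αβ-1). If (x(t),y(t)) is a solution of the system dx/dt = x(1-x-αy), dy/dt = δy(1-y-βx) defined on all of ℝ such that 0<x(0)<A, 0<y(0)<B, and (x(t),y(t))→(A,B) as t→∞, then (x(t),y(t))→(0,0) as t→-∞; that is, the left branch of the stable manifold of the saddle (A,B) is a heteroclinic connection from (0,0) to (A,B). -/
open Filter

/-- Positivity: if `x' = x * g` with `g` continuous and `x 0 > 0`, then `x` is
everywhere positive. -/
lemma ode_pos (x g : ℝ → ℝ) (hg : Continuous g)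
    (hx : ∀ t, HasDerivAt x (x t * g t) t) (h0 : 0 < x 0) : ∀ t, 0 < x t := by
  set G : ℝ → ℝ := fun t => ∫ s in (0:ℝ)..t, g s with hGdef
  have hG : ∀ t, HasDerivAt G (g t) t := by
    intro t
    exact intervalIntegral.integral_hasDerivAt_right (hg.intervalIntegrable _ _)
      hg.aestronglyMeasurable.stronglyMeasurableAtFilter hg.continuousAt
  set h : ℝ → ℝ := fun t => x t * Real.exp (-G t) with hhdef
  have hh : ∀ t, HasDerivAt h 0 t := by
    intro t
    have h1 : HasDerivAt (fun t => Real.exp (-G t)) (Real.exp (-G t) * (-g t)) t :=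
      ((hG t).neg).exp
    have := (hx t).mul h1
    exact this.congr_deriv (by ring)
  have hconst : ∀ t, h t = h 0 := by
    intro t
    exact is_const_of_deriv_eq_zero (fun s => (hh s).differentiableAt)
      (fun s => (hh s).deriv) t 0
  intro t
  have h0' : h 0 = x 0 := by
    simp [hhdef, hGdef]
  have ht : x t * Real.exp (-G t) = x 0 := by
    have := hconst t; rw [h0'] at this; exact this
  have hexp : 0 < Real.exp (-G t) := Real.exp_pos _
  nlinarith [Real.exp_pos (-G t)]

/-- If `x` is everywhere positive, differentiable with derivative `d`, and `d`
tends to a positive constant at `-∞`, we get a contradiction. -/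
lemma no_pos_deriv_limit (x d : ℝ → ℝ) (hx : ∀ t, HasDerivAt x (d t) t)
    (hpos : ∀ t, 0 < x t) (c : ℝ) (hc : 0 < c)
    (hd : Tendsto d atBot (nhds c)) : False := by
  have hev : ∀ᶠ t in atBot, c / 2 < d t :=
    hd.eventually (eventually_gt_nhds (by linarith))
  obtain ⟨T, hT⟩ := eventually_atBot.1 hev
  -- φ t = x t - (c/2) t is monotone on Iic T
  set φ : ℝ → ℝ := fun t => x t - c / 2 * t with hφdef
  have hφ : ∀ t, HasDerivAt φ (d t - c / 2) t := by
    intro t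
    exact ((hx t).sub ((hasDerivAt_id t).const_mul (c / 2))).congr_deriv (by ring)
  have hmono : MonotoneOn φ (Set.Iic T) := by
    apply monotoneOn_of_deriv_nonneg (convex_Iic T)
      (fun t _ => (hφ t).continuousAt.continuousWithinAt)
      (fun t _ => (hφ t).differentiableAt.differentiableWithinAt)
    intro t ht
    rw [(hφ t).deriv]
    have : t ≤ T := le_of_lt (by simpa using ht)
    have := hT t this
    linarith
  -- pick a very negative time
  set t0 : ℝ := T - 2 * x T / c - 1 with ht0def
  have ht0 : t0 ≤ T := by
    have : 0 < 2 * x T / c := div_pos (by linarith [hpos T]) hc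
    simp only [ht0def]; linarith
  have := hmono (Set.mem_Iic.2 ht0) (Set.mem_Iic.2 le_rfl) ht0
  -- φ t0 ≤ φ T, i.e. x t0 ≤ x T + (c/2)(t0 - T) = -c/2 < 0
  have hxt0 : x t0 ≤ x T + c / 2 * (t0 - T) := by
    simp only [hφdef] at this; linarith
  have : c / 2 * (t0 - T) = -(x T) - c / 2 := by
    rw [ht0def]; field_simp; ring
  have := hpos t0
  linarith

/-- Monotone on `Iic 0`, positive ⇒ converges at `-∞` to some `L ∈ [0, x 0]`. -/
lemma mono_tendsto (x : ℝ → ℝ) (hmono : MonotoneOn x (Set.Iic 0))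
    (hpos : ∀ t, 0 < x t) :
    ∃ L, 0 ≤ L ∧ L ≤ x 0 ∧ Tendsto x atBot (nhds L) := by
  set f : ℝ → ℝ := fun t => x (min t 0) with hfdef
  have hf : Monotone f := by
    intro s t hst
    exact hmono (Set.mem_Iic.2 (min_le_right s 0)) (Set.mem_Iic.2 (min_le_right t 0))
      (min_le_min hst le_rfl)
  have hbdd : BddBelow (Set.range f) := by
    refine ⟨0, ?_⟩
    rintro _ ⟨t, rfl⟩
    exact le_of_lt (hpos _)
  have htend : Tendsto f atBot (nhds (⨅ t, f t)) := tendsto_atBot_ciInf hf hbdd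
  refine ⟨⨅ t, f t, ?_, ?_, ?_⟩
  · exact le_ciInf fun t => le_of_lt (hpos _)
  · have : (⨅ t, f t) ≤ f 0 := ciInf_le hbdd 0
    simpa [hfdef] using this
  · apply htend.congr'
    filter_upwards [eventually_le_atBot (0:ℝ)] with t ht
    simp [hfdef, min_eq_left ht]

/-- The left branch of the stable manifold of the saddle `(A,B)` is a
heteroclinic connection from `(0,0)` to `(A,B)`: a full solution starting in
`(0,A)×(0,B)` which converges to `(A,B)` as `t → ∞` converges to `(0,0)` as
`t → -∞`. -/
theorem stmt_7 (α β δ : ℝ) (hα : 1 < α) (hβ : 1 < β) (hδ : 0 < δ)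
    (A B : ℝ) (hA : A = (α - 1) / (α * β - 1)) (hB : B = (β - 1) / (α * β - 1))
    (x y : ℝ → ℝ)
    (hx : ∀ t, HasDerivAt x (x t * (1 - x t - α * y t)) t)
    (hy : ∀ t, HasDerivAt y (δ * y t * (1 - y t - β * x t)) t)
    (hx0 : 0 < x 0) (hxA : x 0 < A) (hy0 : 0 < y 0) (hyB : y 0 < B)
    (hconv : Tendsto (fun t => (x t, y t)) atTop (nhds (A, B))) :
    Tendsto (fun t => (x t, y t)) atBot (nhds ((0 : ℝ), (0 : ℝ))) := by
  have hxc : Continuous x :=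
    continuous_iff_continuousAt.2 fun t => (hx t).differentiableAt.continuousAt
  have hyc : Continuous y :=
    continuous_iff_continuousAt.2 fun t => (hy t).differentiableAt.continuousAt
  have hα0 : (0:ℝ) < α := by linarith
  have hβ0 : (0:ℝ) < β := by linarith
  -- basic parameter facts
  have hden : 0 < α * β - 1 := by nlinarith
  have hApos : 0 < A := by rw [hA]; exact div_pos (by linarith) hden
  have hBpos : 0 < B := by rw [hB]; exact div_pos (by linarith) hden
  have hA1 : A < 1 := by rw [hA, div_lt_one hden]; nlinarith
  have hB1 : B < 1 := by rw [hB, div_lt_one hden]; nlinarith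
  have hAαB : A + α * B = 1 := by
    rw [hA, hB]; field_simp; ring
  have hBβA : B + β * A = 1 := by
    rw [hA, hB, mul_div_assoc', ← add_div, div_eq_one_iff_eq hden.ne']; ring
  -- positivity of solutions
  have hxpos : ∀ t, 0 < x t := by
    apply ode_pos x (fun t => 1 - x t - α * y t)
    · exact (continuous_const.sub hxc).sub (continuous_const.mul hyc)
    · exact hx
    · exact hx0
  have hypos : ∀ t, 0 < y t := by
    apply ode_pos y (fun t => δ * (1 - y t - β * x t))
    · exact continuous_const.mul ((continuous_const.sub hyc).sub (continuous_const.mul hxc))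
    · intro t
      have h : δ * y t * (1 - y t - β * x t) = y t * (δ * (1 - y t - β * x t)) := by ring
      exact h ▸ hy t
    · exact hy0
  -- backward invariance of the rectangle
  have hinv : ∀ t ≤ (0:ℝ), x t < A ∧ y t < B := by
    by_contra hcon
    push_neg at hcon
    obtain ⟨t1, ht1, hbad1⟩ := hcon
    set Bad : Set ℝ := {t | t ≤ 0 ∧ (A ≤ x t ∨ B ≤ y t)} with hBaddef
    have hne : Bad.Nonempty := by
      refine ⟨t1, ht1, ?_⟩
      rcases le_or_gt A (x t1) with h | h
      · exact Or.inl h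
      · exact Or.inr (hbad1 h)
    have hclosed : IsClosed Bad := by
      have : Bad = Set.Iic 0 ∩ ({t | A ≤ x t} ∪ {t | B ≤ y t}) := by
        ext t; simp [hBaddef, Set.mem_Iic]
      rw [this]
      exact isClosed_Iic.inter ((isClosed_le continuous_const hxc).union
        (isClosed_le continuous_const hyc))
    have hbdd : BddAbove Bad := ⟨0, fun t ht => ht.1⟩
    set τ := sSup Bad with hτdef
    have hτmem : τ ∈ Bad := hclosed.csSup_mem hne hbdd
    have hτ0 : τ ≤ 0 := hτmem.1
    have hτne : τ ≠ 0 := by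
      intro h
      rcases hτmem.2 with h1 | h1
      · rw [h] at h1; linarith
      · rw [h] at h1; linarith
    have hτlt : τ < 0 := lt_of_le_of_ne hτ0 hτne
    -- on (τ, 0], the solution is inside the rectangle
    have hin : ∀ s, τ < s → s ≤ 0 → x s < A ∧ y s < B := by
      intro s hs1 hs2
      by_contra hc
      push_neg at hc
      have hmem : s ∈ Bad := by
        refine ⟨hs2, ?_⟩
        rcases le_or_gt A (x s) with h | h
        · exact Or.inl h
        · exact Or.inr (hc h)
      exact absurd (le_csSup hbdd hmem) (not_le.2 hs1)
    -- x and y are strictly monotone on [τ, 0]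
    have hxm : StrictMonoOn x (Set.Icc τ 0) := by
      apply strictMonoOn_of_deriv_pos (convex_Icc τ 0) hxc.continuousOn
      intro t ht
      rw [interior_Icc] at ht
      rw [(hx t).deriv]
      obtain ⟨hxt, hyt⟩ := hin t ht.1 (le_of_lt ht.2)
      have h1 : 0 < 1 - x t - α * y t := by
        nlinarith [mul_lt_mul_of_pos_left hyt hα0]
      exact mul_pos (hxpos t) h1
    have hym : StrictMonoOn y (Set.Icc τ 0) := by
      apply strictMonoOn_of_deriv_pos (convex_Icc τ 0) hyc.continuousOn
      intro t ht
      rw [interior_Icc] at ht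
      rw [(hy t).deriv]
      obtain ⟨hxt, hyt⟩ := hin t ht.1 (le_of_lt ht.2)
      have h1 : 0 < 1 - y t - β * x t := by
        nlinarith [mul_lt_mul_of_pos_left hxt hβ0]
      exact mul_pos (mul_pos hδ (hypos t)) h1
    have h1 : x τ < x 0 := hxm (Set.mem_Icc.2 ⟨le_rfl, hτ0⟩) (Set.mem_Icc.2 ⟨hτ0, le_rfl⟩) hτlt
    have h2 : y τ < y 0 := hym (Set.mem_Icc.2 ⟨le_rfl, hτ0⟩) (Set.mem_Icc.2 ⟨hτ0, le_rfl⟩) hτlt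
    rcases hτmem.2 with h | h
    · linarith
    · linarith
  -- monotonicity on Iic 0
  have hxmono : MonotoneOn x (Set.Iic 0) := by
    apply monotoneOn_of_deriv_nonneg (convex_Iic 0) hxc.continuousOn
      (fun t _ => (hx t).differentiableAt.differentiableWithinAt)
    intro t ht
    rw [interior_Iic] at ht
    rw [(hx t).deriv]
    obtain ⟨hxt, hyt⟩ := hinv t (le_of_lt ht)
    have h1 : 0 < 1 - x t - α * y t := by
      nlinarith [mul_lt_mul_of_pos_left hyt hα0]
    exact le_of_lt (mul_pos (hxpos t) h1)
  have hymono : MonotoneOn y (Set.Iic 0) := by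
    apply monotoneOn_of_deriv_nonneg (convex_Iic 0) hyc.continuousOn
      (fun t _ => (hy t).differentiableAt.differentiableWithinAt)
    intro t ht
    rw [interior_Iic] at ht
    rw [(hy t).deriv]
    obtain ⟨hxt, hyt⟩ := hinv t (le_of_lt ht)
    have h1 : 0 < 1 - y t - β * x t := by
      nlinarith [mul_lt_mul_of_pos_left hxt hβ0]
    exact le_of_lt (mul_pos (mul_pos hδ (hypos t)) h1)
  -- limits at -∞
  obtain ⟨L, hL0, hLx, htendx⟩ := mono_tendsto x hxmono hxpos
  obtain ⟨M, hM0, hMy, htendy⟩ := mono_tendsto y hymono hypos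
  -- the limit must be the origin
  have hLA : L < A := lt_of_le_of_lt hLx hxA
  have hMB : M < B := lt_of_le_of_lt hMy hyB
  have hL : L = 0 := by
    by_contra hne
    have hLpos : 0 < L := lt_of_le_of_ne hL0 (Ne.symm hne)
    have hc : 0 < L * (1 - L - α * M) := by
      have h1 : 0 < 1 - L - α * M := by
        nlinarith [mul_lt_mul_of_pos_left hMB hα0]
      exact mul_pos hLpos h1
    have hd : Tendsto (fun t => x t * (1 - x t - α * y t)) atBot
        (nhds (L * (1 - L - α * M))) :=
      htendx.mul ((tendsto_const_nhds.sub htendx).sub (tendsto_const_nhds.mul htendy))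
    exact no_pos_deriv_limit x _ hx hxpos _ hc hd
  have hM : M = 0 := by
    by_contra hne
    have hMpos : 0 < M := lt_of_le_of_ne hM0 (Ne.symm hne)
    have hc : 0 < δ * M * (1 - M - β * L) := by
      rw [hL]
      have h1 : 0 < 1 - M - β * 0 := by linarith
      exact mul_pos (mul_pos hδ hMpos) h1
    have hd : Tendsto (fun t => δ * y t * (1 - y t - β * x t)) atBot
        (nhds (δ * M * (1 - M - β * L))) :=
      (tendsto_const_nhds.mul htendy).mul
        ((tendsto_const_nhds.sub htendy).sub (tendsto_const_nhds.mul htendx))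
    exact no_pos_deriv_limit y _ hy hypos _ hc hd
  rw [hL] at htendx
  rw [hM] at htendy
  exact htendx.prodMk_nhds htendy
end

section
/- Let α>1, β>1, δ>0, A=(α-1)/(αβ-1), B=(β-1)/(αβ-1). Let x₀>0 and let y*>0 be such that the solution of the system dx/dt = x(1-x-αy), dy/dt = δy(1-y-βx) on [0,∞) with initial condition (x₀,y*) converges to (A,B) as t→∞. Then: (i) for every y₀ with 0<y₀<y*, the solution with initial condition (x₀,y₀) converges to (1,0) as t→∞; (ii) for every y₀>y*, the solution with initial condition (x₀,y₀) converges to (0,1) as t→∞. -/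
open Filter Set

lemma LV_hasDerivAt_minsq (z : ℝ) : HasDerivAt (fun w : ℝ => (min w 0)^2) (2 * min z 0) z := by
  rcases lt_trichotomy z 0 with hz | hz | hz
  · have hev : (fun w : ℝ => (min w 0)^2) =ᶠ[nhds z] (fun w => w^2) := by
      filter_upwards [Iio_mem_nhds hz] with w (hw : w < 0)
      simp [min_eq_left hw.le]
    have h2 : HasDerivAt (fun w : ℝ => w^2) (2*z) z := by
      simpa using (hasDerivAt_pow 2 z)
    rw [min_eq_left hz.le]
    exact h2.congr_of_eventuallyEq hev
  · subst hz
    rw [hasDerivAt_iff_tendsto_slope]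
    simp only [min_self, ne_eq, OfNat.ofNat_ne_zero, not_false_eq_true, zero_pow, mul_zero]
    have habs : Tendsto (fun w : ℝ => |w|) (nhdsWithin 0 {(0:ℝ)}ᶜ) (nhds 0) := by
      have : Tendsto (fun w : ℝ => |w|) (nhds 0) (nhds 0) := by
        simpa using continuous_abs.tendsto (0:ℝ)
      exact this.mono_left nhdsWithin_le_nhds
    apply squeeze_zero_norm' _ habs
    filter_upwards [self_mem_nhdsWithin] with w (hw : w ≠ 0)
    have hs : slope (fun w : ℝ => (min w 0)^2) 0 w = (min w 0)^2 / w := by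
      simp [slope_def_field, div_eq_iff hw]
    rw [Real.norm_eq_abs, hs, abs_div, abs_of_nonneg (sq_nonneg _)]
    have h2 : (min w 0)^2 ≤ |w|^2 := by
      rcases le_or_gt w 0 with h | h
      · rw [min_eq_left h, sq_abs]
      · rw [min_eq_right h.le]
        simpa using sq_nonneg |w|
    have hw0 : 0 < |w| := abs_pos.2 hw
    calc (min w 0)^2 / |w| ≤ |w|^2 / |w| := by
          exact div_le_div_of_nonneg_right h2 hw0.le |>.trans_eq rfl
      _ = |w| := by rw [pow_two, mul_div_assoc, div_self hw0.ne', mul_one]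
  · have hev : (fun w : ℝ => (min w 0)^2) =ᶠ[nhds z] (fun _ => (0:ℝ)) := by
      filter_upwards [Ioi_mem_nhds hz] with w (hw : 0 < w)
      simp [min_eq_right hw.le]
    rw [min_eq_right hz.le, mul_zero]
    exact (hasDerivAt_const z 0).congr_of_eventuallyEq hev

lemma LV_hasDerivAt_maxsq (z : ℝ) : HasDerivAt (fun w : ℝ => (max w 0)^2) (2 * max z 0) z := by
  have h := (LV_hasDerivAt_minsq (-z)).comp z (hasDerivAt_neg z)
  have heq : (fun w : ℝ => (max w 0)^2) = (fun w : ℝ => (min w 0)^2) ∘ (fun w : ℝ => -w) := by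
    funext w
    have : min (-w) 0 = -(max w 0) := by rw [← neg_zero, min_neg_neg, neg_zero]
    simp [Function.comp, this]
  rw [heq]
  have : min (-z) 0 = -(max z 0) := by rw [← neg_zero, min_neg_neg, neg_zero]
  refine h.congr_deriv ?_
  rw [this]; ring

/-- If `w' ≥ L w` on `(c,b)` then `w t ≥ w c * exp (L (t - c))` on `[c,b]`. -/
lemma LV_expbound {w w' : ℝ → ℝ} {c b L : ℝ}
    (hcont : ContinuousOn w (Icc c b))
    (hder : ∀ t ∈ Ioo c b, HasDerivAt w (w' t) t)
    (hineq : ∀ t ∈ Ioo c b, L * w t ≤ w' t) :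
    ∀ t ∈ Icc c b, w c * Real.exp (L * (t - c)) ≤ w t := by
  have hexp : ∀ t : ℝ, HasDerivAt (fun s => Real.exp (-(L * s))) (-L * Real.exp (-(L * t))) t := by
    intro t
    have h1 : HasDerivAt (fun s : ℝ => -(L * s)) (-L) t := by
      exact ((hasDerivAt_id t).const_mul L).neg.congr_deriv (by simp)
    refine ((Real.hasDerivAt_exp (-(L * t))).comp t h1).congr_deriv ?_; ring
  have hmono : MonotoneOn (fun t => w t * Real.exp (-(L * t))) (Icc c b) := by
    apply monotoneOn_of_hasDerivWithinAt_nonneg (convex_Icc c b)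
      (f' := fun t => w' t * Real.exp (-(L * t)) + w t * (-L * Real.exp (-(L * t))))
    · exact hcont.mul ((Real.continuous_exp.comp (continuous_const.mul continuous_id).neg).continuousOn)
    · intro t ht
      rw [interior_Icc] at ht
      exact ((hder t ht).mul (hexp t)).hasDerivWithinAt
    · intro t ht
      rw [interior_Icc] at ht
      have h1 := hineq t ht
      have h2 : (0:ℝ) < Real.exp (-(L * t)) := Real.exp_pos _
      nlinarith [h2]
  intro t ht
  rcases ht with ⟨htc, htb⟩
  have h := hmono (left_mem_Icc.2 (htc.trans htb)) ⟨htc, htb⟩ htc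
  have h2 : (0:ℝ) < Real.exp (-(L * t)) := Real.exp_pos _
  have h3 : w c * Real.exp (-(L * c)) ≤ w t * Real.exp (-(L * t)) := h
  have := mul_le_mul_of_nonneg_right h3 (le_of_lt (Real.exp_pos (L * t)))
  calc w c * Real.exp (L * (t - c))
      = (w c * Real.exp (-(L * c))) * Real.exp (L * t) := by
        rw [mul_assoc, ← Real.exp_add]; ring_nf
    _ ≤ (w t * Real.exp (-(L * t))) * Real.exp (L * t) := this
    _ = w t := by rw [mul_assoc, ← Real.exp_add]; ring_nf; rw [Real.exp_zero, mul_one]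

/-- Gronwall-type vanishing: if `g ≥ 0`, `g c = 0` and `g' ≤ K g`, then `g ≡ 0` on `[c,b]`. -/
lemma LV_gronwall_zero {g g' : ℝ → ℝ} {c b K : ℝ}
    (hcont : ContinuousOn g (Icc c b))
    (hder : ∀ t ∈ Ioo c b, HasDerivAt g (g' t) t)
    (hineq : ∀ t ∈ Ioo c b, g' t ≤ K * g t)
    (hg0 : g c = 0) (hgnn : ∀ t ∈ Icc c b, 0 ≤ g t) :
    ∀ t ∈ Icc c b, g t = 0 := by
  have key := LV_expbound (w := fun t => -g t) (w' := fun t => -g' t) (L := K)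
    hcont.neg (fun t ht => (hder t ht).neg)
    (fun t ht => by have := hineq t ht; linarith)
  intro t ht
  have h1 := key t ht
  rw [hg0] at h1
  simp only [neg_zero, zero_mul] at h1
  have h2 := hgnn t ht
  linarith

lemma LV_tendsto_of_monotoneOn {f : ℝ → ℝ} {c : ℝ}
    (hf : MonotoneOn f (Ici c)) (hb : BddAbove (f '' Ici c)) :
    ∃ L, Tendsto f atTop (nhds L) ∧ ∀ t ∈ Ici c, f t ≤ L := by
  set L := sSup (f '' Ici c) with hL
  have hne : (f '' Ici c).Nonempty := ⟨f c, mem_image_of_mem f self_mem_Ici⟩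
  have hub : ∀ t ∈ Ici c, f t ≤ L := fun t ht => le_csSup hb (mem_image_of_mem f ht)
  refine ⟨L, ?_, hub⟩
  rw [tendsto_order]
  constructor
  · intro a ha
    obtain ⟨y, hy, hay⟩ := exists_lt_of_lt_csSup hne ha
    obtain ⟨t₀, ht₀, rfl⟩ := hy
    filter_upwards [eventually_ge_atTop t₀] with t ht
    exact lt_of_lt_of_le hay (hf ht₀ (le_trans ht₀ ht) ht)
  · intro a ha
    filter_upwards [eventually_ge_atTop c] with t ht
    exact lt_of_le_of_lt (hub t ht) ha

lemma LV_tendsto_of_antitoneOn {f : ℝ → ℝ} {c : ℝ}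
    (hf : AntitoneOn f (Ici c)) (hb : BddBelow (f '' Ici c)) :
    ∃ L, Tendsto f atTop (nhds L) ∧ ∀ t ∈ Ici c, L ≤ f t := by
  have hbdd : BddAbove ((fun t => -f t) '' Ici c) := by
    obtain ⟨m, hm⟩ := hb
    refine ⟨-m, fun y hy => ?_⟩
    obtain ⟨t, ht, rfl⟩ := hy
    have := hm (mem_image_of_mem f ht)
    dsimp only
    linarith
  obtain ⟨L, hL, hub⟩ := LV_tendsto_of_monotoneOn (f := fun t => -f t) (c := c)
    (fun a ha b hb hab => neg_le_neg (hf ha hb hab)) hbdd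
  refine ⟨-L, ?_, fun t ht => by have := hub t ht; simp only [neg_le] at this ⊢; linarith⟩
  have := hL.neg
  simpa using this

lemma LV_deriv_limit_nonpos {f f' : ℝ → ℝ} {Lf M : ℝ}
    (hder : ∀ t ∈ Ioi (0:ℝ), HasDerivAt f (f' t) t)
    (hf : Tendsto f atTop (nhds Lf)) (hf' : Tendsto f' atTop (nhds M)) : M ≤ 0 := by
  by_contra hM
  push_neg at hM
  have hev : ∀ᶠ t in atTop, M / 2 < f' t :=
    hf'.eventually (eventually_gt_nhds (by linarith))
  obtain ⟨T₀, hT₀⟩ := eventually_atTop.1 hev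
  set T := max T₀ 1 with hT
  have hT1 : (1:ℝ) ≤ T := le_max_right _ _
  have hTpos : (0:ℝ) < T := lt_of_lt_of_le one_pos hT1
  have hmono : MonotoneOn (fun t => f t - M / 2 * t) (Ici T) := by
    apply monotoneOn_of_hasDerivWithinAt_nonneg (convex_Ici T)
      (f' := fun t => f' t - M / 2)
    · intro t ht
      have htpos : (0:ℝ) < t := lt_of_lt_of_le hTpos ht
      exact (((hder t htpos).sub ((hasDerivAt_id t).const_mul (M/2))).continuousAt.continuousWithinAt)
    · intro t ht
      rw [interior_Ici] at ht
      have htpos : (0:ℝ) < t := lt_trans hTpos ht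
      have := ((hder t htpos).sub ((hasDerivAt_id t).const_mul (M/2))).hasDerivWithinAt
        (s := interior (Ici T))
      exact this.congr_deriv (by ring)
    · intro t ht
      rw [interior_Ici] at ht
      have := hT₀ t (le_trans (le_max_left _ _) (le_of_lt ht))
      linarith
  have hub : ∀ᶠ t in atTop, f t < Lf + 1 :=
    hf.eventually (eventually_lt_nhds (by linarith))
  obtain ⟨T₂, hT₂⟩ := eventually_atTop.1 hub
  set t := max (max T T₂) (T + (Lf + 1 - (f T - M/2*T)) * 2 / M) with hts
  have htT : T ≤ t := le_trans (le_max_left _ _) (le_max_left _ _)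
  have h1 := hmono self_mem_Ici (mem_Ici.2 htT) htT
  dsimp only at h1
  have h2 : f t < Lf + 1 := hT₂ t (le_trans (le_max_right _ _) (le_max_left _ _))
  have h3 : T + (Lf + 1 - (f T - M/2*T)) * 2 / M ≤ t := le_max_right _ _
  have h5 : (Lf + 1 - (f T - M/2*T)) * 2 / M ≤ t - T := by linarith
  have h6 := mul_le_mul_of_nonneg_left h5 (by linarith : (0:ℝ) ≤ M/2)
  have hid : M/2 * ((Lf + 1 - (f T - M/2*T)) * 2 / M) = Lf + 1 - (f T - M/2*T) := by
    field_simp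
  rw [hid] at h6
  have h7 : M/2*(t-T) = M/2*t - M/2*T := by ring
  rw [h7] at h6
  nlinarith

lemma LV_minsq_self (a : ℝ) : min a 0 * a = (min a 0)^2 := by
  rcases le_or_gt a 0 with h | h
  · rw [min_eq_left h]; ring
  · rw [min_eq_right h.le]; ring

lemma LV_maxsq_self (a : ℝ) : max a 0 * a = (max a 0)^2 := by
  rcases le_or_gt a 0 with h | h
  · rw [max_eq_right h]; ring
  · rw [max_eq_left h.le]; ring

lemma LV_scalar_pos {f q : ℝ → ℝ}
    (hq : ContinuousOn q (Ici 0))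
    (hf : ∀ t ∈ Ici (0:ℝ), HasDerivWithinAt f (f t * q t) (Ici 0) t)
    (h0 : 0 < f 0) : ∀ t ∈ Ici (0:ℝ), 0 < f t := by
  have hfc : ContinuousOn f (Ici 0) := fun t ht => (hf t ht).continuousWithinAt
  have hf' : ∀ t ∈ Ioi (0:ℝ), HasDerivAt f (f t * q t) t := fun t ht =>
    (hf t (mem_Ici.2 (le_of_lt ht))).hasDerivAt (Ici_mem_nhds ht)
  intro T hT
  rcases eq_or_lt_of_le (mem_Ici.1 hT) with hT0 | hT0
  · rwa [← hT0]
  obtain ⟨K, hK⟩ := (isCompact_Icc (a := (0:ℝ)) (b := T)).exists_bound_of_continuousOn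
    (hq.mono (Icc_subset_Ici_self))
  have hK0 : 0 ≤ K := le_trans (norm_nonneg _) (hK 0 (left_mem_Icc.2 hT0.le))
  -- Step 1 : f is nonnegative on [0,T]
  have hnn : ∀ t ∈ Icc (0:ℝ) T, 0 ≤ f t := by
    have hg0 : (fun t => (min (f t) 0)^2) 0 = 0 := by
      simp [min_eq_right h0.le]
    have key := LV_gronwall_zero (g := fun t => (min (f t) 0)^2)
      (g' := fun t => 2 * min (f t) 0 * (f t * q t)) (c := 0) (b := T) (K := 2*K)
      (((continuous_id.min continuous_const).pow 2).comp_continuousOn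
        (hfc.mono Icc_subset_Ici_self))
      (fun t ht => (LV_hasDerivAt_minsq (f t)).comp t (hf' t ht.1))
      (fun t ht => by
        have hb := hK t (Ioo_subset_Icc_self ht)
        rw [Real.norm_eq_abs] at hb
        have hid : 2 * min (f t) 0 * (f t * q t) = 2 * q t * (min (f t) 0)^2 := by
          rw [← LV_minsq_self (f t)]; ring
        rw [hid]
        have h1 : (0:ℝ) ≤ (min (f t) 0)^2 := sq_nonneg _
        nlinarith [abs_le.1 hb])
      hg0 (fun t _ => sq_nonneg _)
    intro t ht
    have := key t ht
    have h2 : min (f t) 0 = 0 := by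
      have := sq_eq_zero_iff.1 this
      exact this
    rcases le_or_gt 0 (f t) with h | h
    · exact h
    · rw [min_eq_left h.le] at h2; linarith
  -- Step 2 : strict positivity via exponential lower bound
  have key := LV_expbound (w := f) (w' := fun t => f t * q t) (c := 0) (b := T) (L := -K)
    (hfc.mono Icc_subset_Ici_self) (fun t ht => hf' t ht.1)
    (fun t ht => by
      have hb := hK t (Ioo_subset_Icc_self ht)
      rw [Real.norm_eq_abs] at hb
      have h1 := hnn t (Ioo_subset_Icc_self ht)
      nlinarith [abs_le.1 hb])
  have := key T (right_mem_Icc.2 hT0.le)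
  have hp : 0 < f 0 * Real.exp (-K * (T - 0)) := mul_pos h0 (Real.exp_pos _)
  linarith

section LVGeneral

variable {α β γ₁ γ₂ : ℝ} {x y : ℝ → ℝ}

lemma LV_contx (hx : ∀ t ∈ Ici (0:ℝ), HasDerivWithinAt x (γ₁ * x t * (1 - x t - α * y t)) (Ici 0) t) :
    ContinuousOn x (Ici 0) := fun t ht => (hx t ht).continuousWithinAt

lemma LV_derivx (hx : ∀ t ∈ Ici (0:ℝ), HasDerivWithinAt x (γ₁ * x t * (1 - x t - α * y t)) (Ici 0) t) :
    ∀ t ∈ Ioi (0:ℝ), HasDerivAt x (γ₁ * x t * (1 - x t - α * y t)) t := fun t ht =>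
  (hx t (mem_Ici.2 (le_of_lt ht))).hasDerivAt (Ici_mem_nhds ht)

lemma LV_xpos
    (hx : ∀ t ∈ Ici (0:ℝ), HasDerivWithinAt x (γ₁ * x t * (1 - x t - α * y t)) (Ici 0) t)
    (hyc : ContinuousOn y (Ici 0))
    (hx0 : 0 < x 0) : ∀ t ∈ Ici (0:ℝ), 0 < x t := by
  apply LV_scalar_pos (q := fun t => γ₁ * (1 - x t - α * y t))
  · exact (continuousOn_const.mul ((continuousOn_const.sub (LV_contx hx)).sub
      (continuousOn_const.mul hyc)))
  · intro t ht
    have := hx t ht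
    convert this using 1
    ring
  · exact hx0

set_option maxHeartbeats 1000000 in
/-- Forward invariance of the region `{P ≥ 0, Q ≤ 0}` where
`P = 1 - x - αy`, `Q = 1 - y - βx`. -/
lemma LV_region (hα : 0 < α) (hβ : 0 < β) (hγ₁ : 0 < γ₁) (hγ₂ : 0 < γ₂)
    (hx : ∀ t ∈ Ici (0:ℝ), HasDerivWithinAt x (γ₁ * x t * (1 - x t - α * y t)) (Ici 0) t)
    (hy : ∀ t ∈ Ici (0:ℝ), HasDerivWithinAt y (γ₂ * y t * (1 - y t - β * x t)) (Ici 0) t)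
    (hxpos : ∀ t ∈ Ici (0:ℝ), 0 < x t) (hypos : ∀ t ∈ Ici (0:ℝ), 0 < y t)
    {t₁ : ℝ} (ht₁ : 0 ≤ t₁)
    (hP1 : 0 ≤ 1 - x t₁ - α * y t₁) (hQ1 : 1 - y t₁ - β * x t₁ ≤ 0) :
    ∀ t, t₁ ≤ t → 0 ≤ 1 - x t - α * y t ∧ 1 - y t - β * x t ≤ 0 := by
  have hxc := LV_contx hx
  have hyc := LV_contx hy
  have hx' := LV_derivx hx
  have hy' := LV_derivx hy
  set P : ℝ → ℝ := fun t => 1 - x t - α * y t with hPdef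
  set Q : ℝ → ℝ := fun t => 1 - y t - β * x t with hQdef
  have hPc : ContinuousOn P (Ici 0) :=
    (continuousOn_const.sub hxc).sub (continuousOn_const.mul hyc)
  have hQc : ContinuousOn Q (Ici 0) :=
    (continuousOn_const.sub hyc).sub (continuousOn_const.mul hxc)
  have hP' : ∀ t ∈ Ioi (0:ℝ), HasDerivAt P
      (-(γ₁ * x t * P t) - α * (γ₂ * y t * Q t)) t := by
    intro t ht
    have h := ((hasDerivAt_const t (1:ℝ)).sub (hx' t ht)).sub ((hy' t ht).const_mul α)
    refine h.congr_deriv ?_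
    simp only [hPdef, hQdef]; ring
  have hQ' : ∀ t ∈ Ioi (0:ℝ), HasDerivAt Q
      (-(γ₂ * y t * Q t) - β * (γ₁ * x t * P t)) t := by
    intro t ht
    have h := ((hasDerivAt_const t (1:ℝ)).sub (hy' t ht)).sub ((hx' t ht).const_mul β)
    refine h.congr_deriv ?_
    simp only [hPdef, hQdef]; ring
  intro T hT
  have hT0 : 0 ≤ T := le_trans ht₁ hT
  -- bound on coefficients on [t₁, T]
  obtain ⟨Kx, hKx⟩ := (isCompact_Icc (a := t₁) (b := T)).exists_bound_of_continuousOn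
    (hxc.mono (fun s hs => le_trans ht₁ hs.1))
  obtain ⟨Ky, hKy⟩ := (isCompact_Icc (a := t₁) (b := T)).exists_bound_of_continuousOn
    (hyc.mono (fun s hs => le_trans ht₁ hs.1))
  set K : ℝ := α * γ₂ * Ky + β * γ₁ * Kx with hKdef
  set g : ℝ → ℝ := fun t => (min (P t) 0)^2 + (max (Q t) 0)^2 with hgdef
  have hsub : Icc t₁ T ⊆ Ici (0:ℝ) := fun s hs => le_trans ht₁ hs.1
  have key := LV_gronwall_zero (g := g)
    (g' := fun t => 2 * min (P t) 0 * (-(γ₁ * x t * P t) - α * (γ₂ * y t * Q t))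
      + 2 * max (Q t) 0 * (-(γ₂ * y t * Q t) - β * (γ₁ * x t * P t)))
    (c := t₁) (b := T) (K := K)
    (ContinuousOn.add
      (((continuous_id.min continuous_const).pow 2).comp_continuousOn (hPc.mono hsub))
      (((continuous_id.max continuous_const).pow 2).comp_continuousOn (hQc.mono hsub)))
    (fun t ht => by
      have h1 := (LV_hasDerivAt_minsq (P t)).comp t (hP' t (lt_of_le_of_lt ht₁ ht.1))
      have h2 := (LV_hasDerivAt_maxsq (Q t)).comp t (hQ' t (lt_of_le_of_lt ht₁ ht.1))
      exact h1.add h2)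
    (fun t ht => by
      have hxt := hxpos t (le_trans ht₁ ht.1.le)
      have hyt := hypos t (le_trans ht₁ ht.1.le)
      have hxK : x t ≤ Kx := by
        have := hKx t (Ioo_subset_Icc_self ht); rw [Real.norm_eq_abs] at this
        exact (abs_le.1 this).2
      have hyK : y t ≤ Ky := by
        have := hKy t (Ioo_subset_Icc_self ht); rw [Real.norm_eq_abs] at this
        exact (abs_le.1 this).2
      set mP := min (P t) 0 with hmP
      set MQ := max (Q t) 0 with hMQ
      have e1 : mP * P t = mP^2 := LV_minsq_self (P t)
      have e2 : MQ * Q t = MQ^2 := LV_maxsq_self (Q t)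
      have f3 : mP * MQ ≤ mP * Q t :=
        mul_le_mul_of_nonpos_left (le_max_left _ _) (min_le_right _ _)
      have f4 : MQ * mP ≤ MQ * P t :=
        mul_le_mul_of_nonneg_left (min_le_left _ _) (le_max_right _ _)
      have f5 : 2 * (-mP) * MQ ≤ (-mP)^2 + MQ^2 := two_mul_le_add_sq _ _
      have hg : (0:ℝ) ≤ mP^2 + MQ^2 := by positivity
      -- term with mP * Q t
      have t2 : -(2 * α * γ₂ * y t) * (mP * Q t) ≤ α * γ₂ * y t * (mP^2 + MQ^2) := by
        have c1 : (0:ℝ) ≤ 2 * α * γ₂ * y t := by positivity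
        have h := mul_le_mul_of_nonneg_left f3 c1
        have h2 : -(2 * α * γ₂ * y t) * (mP * Q t) ≤ -(2 * α * γ₂ * y t) * (mP * MQ) := by
          nlinarith [h]
        refine h2.trans ?_
        have h3 : -(2 * α * γ₂ * y t) * (mP * MQ) = (α * γ₂ * y t) * (2 * (-mP) * MQ) := by ring
        rw [h3]
        have := mul_le_mul_of_nonneg_left f5 (by positivity : (0:ℝ) ≤ α * γ₂ * y t)
        nlinarith [this]
      have t4 : -(2 * β * γ₁ * x t) * (MQ * P t) ≤ β * γ₁ * x t * (mP^2 + MQ^2) := by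
        have c1 : (0:ℝ) ≤ 2 * β * γ₁ * x t := by positivity
        have h := mul_le_mul_of_nonneg_left f4 c1
        have h2 : -(2 * β * γ₁ * x t) * (MQ * P t) ≤ -(2 * β * γ₁ * x t) * (MQ * mP) := by
          nlinarith [h]
        refine h2.trans ?_
        have h3 : -(2 * β * γ₁ * x t) * (MQ * mP) = (β * γ₁ * x t) * (2 * (-mP) * MQ) := by ring
        rw [h3]
        have := mul_le_mul_of_nonneg_left f5 (by positivity : (0:ℝ) ≤ β * γ₁ * x t)
        nlinarith [this]
      have t1 : -(2 * γ₁ * x t) * mP^2 ≤ 0 := by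
        have := mul_nonneg (mul_pos hγ₁ hxt).le (sq_nonneg mP); linarith
      have t3 : -(2 * γ₂ * y t) * MQ^2 ≤ 0 := by
        have := mul_nonneg (mul_pos hγ₂ hyt).le (sq_nonneg MQ); linarith
      have hKK : α * γ₂ * y t * (mP^2 + MQ^2) + β * γ₁ * x t * (mP^2 + MQ^2)
          ≤ K * (mP^2 + MQ^2) := by
        rw [hKdef]
        have h1 : α * γ₂ * y t ≤ α * γ₂ * Ky :=
          mul_le_mul_of_nonneg_left hyK (by positivity)
        have h2 : β * γ₁ * x t ≤ β * γ₁ * Kx :=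
          mul_le_mul_of_nonneg_left hxK (by positivity)
        nlinarith [mul_le_mul_of_nonneg_right h1 hg, mul_le_mul_of_nonneg_right h2 hg]
      have expand : 2 * mP * (-(γ₁ * x t * P t) - α * (γ₂ * y t * Q t))
          + 2 * MQ * (-(γ₂ * y t * Q t) - β * (γ₁ * x t * P t))
          = -(2 * γ₁ * x t) * (mP * P t) + (-(2 * α * γ₂ * y t)) * (mP * Q t)
            + (-(2 * γ₂ * y t)) * (MQ * Q t) + (-(2 * β * γ₁ * x t)) * (MQ * P t) := by
        ring
      have hgt : g t = mP^2 + MQ^2 := rfl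
      rw [expand, e1, e2, hgt]
      linarith [t1, t2, t3, t4, hKK])
    (by
      show (min (P t₁) 0)^2 + (max (Q t₁) 0)^2 = 0
      rw [min_eq_right (show (0:ℝ) ≤ P t₁ from hP1),
        max_eq_right (show Q t₁ ≤ (0:ℝ) from hQ1)]
      norm_num)
    (fun t _ => by positivity)
  have hTmem : T ∈ Icc t₁ T := right_mem_Icc.2 hT
  have hgT : (min (P T) 0)^2 + (max (Q T) 0)^2 = 0 := key T hTmem
  have h1 : min (P T) 0 = 0 ∧ max (Q T) 0 = 0 := by
    constructor <;> nlinarith [sq_nonneg (min (P T) 0), sq_nonneg (max (Q T) 0)]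
  constructor
  · rcases le_or_gt 0 (P T) with h | h
    · exact h
    · exfalso; have := h1.1; rw [min_eq_left h.le] at this; linarith
  · rcases le_or_gt (Q T) 0 with h | h
    · exact h
    · exfalso; have := h1.2; rw [max_eq_left h.le] at this; linarith

lemma LV_deriv_limit_zero {f f' : ℝ → ℝ} {Lf M : ℝ}
    (hder : ∀ t ∈ Ioi (0:ℝ), HasDerivAt f (f' t) t)
    (hf : Tendsto f atTop (nhds Lf)) (hf' : Tendsto f' atTop (nhds M)) : M = 0 := by
  have h1 := LV_deriv_limit_nonpos hder hf hf'
  have h2 := LV_deriv_limit_nonpos (f := fun t => -f t) (f' := fun t => -f' t)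
    (fun t ht => (hder t ht).neg) hf.neg hf'.neg
  simp only [neg_nonpos] at h2
  linarith

/-- If the trajectory converges, its limit is an equilibrium. -/
lemma LV_limit_eq (hγ₁ : γ₁ ≠ 0)
    (hx : ∀ t ∈ Ici (0:ℝ), HasDerivWithinAt x (γ₁ * x t * (1 - x t - α * y t)) (Ici 0) t)
    {Lx Ly : ℝ} (hLx : Tendsto x atTop (nhds Lx)) (hLy : Tendsto y atTop (nhds Ly)) :
    Lx * (1 - Lx - α * Ly) = 0 := by
  have hx' := LV_derivx hx
  have hf' : Tendsto (fun t => γ₁ * x t * (1 - x t - α * y t)) atTop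
      (nhds (γ₁ * Lx * (1 - Lx - α * Ly))) := by
    exact ((tendsto_const_nhds.mul hLx).mul
      ((tendsto_const_nhds.sub hLx).sub (tendsto_const_nhds.mul hLy)))
  have h := LV_deriv_limit_zero hx' hLx hf'
  rcases mul_eq_zero.1 h with h' | h'
  · rcases mul_eq_zero.1 h' with h'' | h''
    · exact absurd h'' hγ₁
    · rw [h'']; ring
  · rw [h']; ring

/-- Convergence of a trajectory that enters the invariant region `{P ≥ 0, Q ≤ 0}`. -/
lemma LV_conv_region (hα : 0 < α) (hβ : 0 < β) (hγ₁ : 0 < γ₁) (hγ₂ : 0 < γ₂)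
    (hx : ∀ t ∈ Ici (0:ℝ), HasDerivWithinAt x (γ₁ * x t * (1 - x t - α * y t)) (Ici 0) t)
    (hy : ∀ t ∈ Ici (0:ℝ), HasDerivWithinAt y (γ₂ * y t * (1 - y t - β * x t)) (Ici 0) t)
    (hxpos : ∀ t ∈ Ici (0:ℝ), 0 < x t) (hypos : ∀ t ∈ Ici (0:ℝ), 0 < y t)
    {t₁ : ℝ} (ht₁ : 0 ≤ t₁)
    (hP1 : 0 ≤ 1 - x t₁ - α * y t₁) (hQ1 : 1 - y t₁ - β * x t₁ ≤ 0) :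
    ∃ Lx Ly, Tendsto x atTop (nhds Lx) ∧ Tendsto y atTop (nhds Ly) ∧
      0 ≤ Lx ∧ 0 ≤ Ly := by
  have hreg := LV_region hα hβ hγ₁ hγ₂ hx hy hxpos hypos ht₁ hP1 hQ1
  have hxc := LV_contx hx
  have hyc := LV_contx hy
  have hx' := LV_derivx hx
  have hy' := LV_derivx hy
  have hsub : Ici t₁ ⊆ Ici (0:ℝ) := Ici_subset_Ici.2 ht₁
  -- x is monotone and bounded above by 1 on [t₁, ∞)
  have hxmono : MonotoneOn x (Ici t₁) := by
    apply monotoneOn_of_hasDerivWithinAt_nonneg (convex_Ici t₁)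
      (f' := fun t => γ₁ * x t * (1 - x t - α * y t)) (hxc.mono hsub)
    · intro t ht
      rw [interior_Ici] at ht
      exact (hx' t (lt_of_le_of_lt ht₁ ht)).hasDerivWithinAt
    · intro t ht
      rw [interior_Ici] at ht
      have h1 := (hreg t ht.le).1
      have h2 := hxpos t (le_trans ht₁ ht.le)
      positivity
  have hymono : AntitoneOn y (Ici t₁) := by
    apply antitoneOn_of_hasDerivWithinAt_nonpos (convex_Ici t₁)
      (f' := fun t => γ₂ * y t * (1 - y t - β * x t)) (hyc.mono hsub)
    · intro t ht
      rw [interior_Ici] at ht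
      exact (hy' t (lt_of_le_of_lt ht₁ ht)).hasDerivWithinAt
    · intro t ht
      rw [interior_Ici] at ht
      have h1 := (hreg t ht.le).2
      have h2 := hypos t (le_trans ht₁ ht.le)
      exact mul_nonpos_of_nonneg_of_nonpos (mul_pos hγ₂ h2).le h1
  obtain ⟨Lx, hLx, _⟩ := LV_tendsto_of_monotoneOn hxmono
    ⟨1, fun z hz => by
      obtain ⟨t, ht, rfl⟩ := hz
      have h1 := (hreg t ht).1
      have h2 := hypos t (le_trans ht₁ ht)
      nlinarith⟩
  obtain ⟨Ly, hLy, hLyle⟩ := LV_tendsto_of_antitoneOn hymono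
    ⟨0, fun z hz => by
      obtain ⟨t, ht, rfl⟩ := hz
      exact (hypos t (le_trans ht₁ ht)).le⟩
  refine ⟨Lx, Ly, hLx, hLy, ?_, ?_⟩
  · exact ge_of_tendsto hLx ((eventually_ge_atTop (0:ℝ)).mono fun t ht => (hxpos t ht).le)
  · exact ge_of_tendsto hLy ((eventually_ge_atTop (0:ℝ)).mono fun t ht => (hypos t ht).le)

set_option maxHeartbeats 1000000 in
/-- Every trajectory with positive initial data converges to some point. -/
lemma LV_classify (hα : 0 < α) (hβ : 0 < β) (hγ₁ : 0 < γ₁) (hγ₂ : 0 < γ₂)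
    (hx : ∀ t ∈ Ici (0:ℝ), HasDerivWithinAt x (γ₁ * x t * (1 - x t - α * y t)) (Ici 0) t)
    (hy : ∀ t ∈ Ici (0:ℝ), HasDerivWithinAt y (γ₂ * y t * (1 - y t - β * x t)) (Ici 0) t)
    (hxpos : ∀ t ∈ Ici (0:ℝ), 0 < x t) (hypos : ∀ t ∈ Ici (0:ℝ), 0 < y t) :
    ∃ Lx Ly, Tendsto x atTop (nhds Lx) ∧ Tendsto y atTop (nhds Ly) ∧
      0 ≤ Lx ∧ 0 ≤ Ly := by
  have hxc := LV_contx hx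
  have hyc := LV_contx hy
  have hx' := LV_derivx hx
  have hy' := LV_derivx hy
  by_cases hA : ∃ t₁, 0 ≤ t₁ ∧ 0 ≤ 1 - x t₁ - α * y t₁ ∧ 1 - y t₁ - β * x t₁ ≤ 0
  · obtain ⟨t₁, ht₁, hP1, hQ1⟩ := hA
    exact LV_conv_region hα hβ hγ₁ hγ₂ hx hy hxpos hypos ht₁ hP1 hQ1
  by_cases hB : ∃ t₁, 0 ≤ t₁ ∧ 0 ≤ 1 - y t₁ - β * x t₁ ∧ 1 - x t₁ - α * y t₁ ≤ 0
  · obtain ⟨t₁, ht₁, hP1, hQ1⟩ := hB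
    obtain ⟨Ly, Lx, hLy, hLx, hLy0, hLx0⟩ :=
      LV_conv_region hβ hα hγ₂ hγ₁ hy hx hypos hxpos ht₁ hP1 hQ1
    exact ⟨Lx, Ly, hLx, hLy, hLx0, hLy0⟩
  push_neg at hA hB
  have hsign : ∀ t, 0 ≤ t →
      (0 < 1 - x t - α * y t ∧ 0 < 1 - y t - β * x t) ∨
      (1 - x t - α * y t < 0 ∧ 1 - y t - β * x t < 0) := by
    intro t ht
    rcases lt_trichotomy (1 - x t - α * y t) 0 with h | h | h
    · right
      refine ⟨h, ?_⟩
      by_contra hq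
      push_neg at hq
      have := hB t ht hq
      linarith
    · exfalso
      have h1 := hA t ht (le_of_eq h.symm)
      have h2 := hB t ht h1.le
      linarith
    · left
      exact ⟨h, hA t ht h.le⟩
  have hPc : ContinuousOn (fun t => 1 - x t - α * y t) (Ici 0) :=
    (continuousOn_const.sub hxc).sub (continuousOn_const.mul hyc)
  have hQc : ContinuousOn (fun t => 1 - y t - β * x t) (Ici 0) :=
    (continuousOn_const.sub hyc).sub (continuousOn_const.mul hxc)
  rcases hsign 0 le_rfl with hcase | hcase
  · -- P > 0 and Q > 0 for all time
    have hall : ∀ t, 0 ≤ t → 0 < 1 - x t - α * y t ∧ 0 < 1 - y t - β * x t := by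
      intro t ht
      rcases hsign t ht with h | h
      · exact h
      · exfalso
        have hivt := intermediate_value_Icc' (a := 0) (b := t) ht
          (hPc.mono (fun s hs => hs.1))
        have h0 : (0:ℝ) ∈ Icc (1 - x t - α * y t) (1 - x 0 - α * y 0) :=
          ⟨h.1.le, hcase.1.le⟩
        obtain ⟨s, hs, hPs⟩ := hivt h0
        rcases hsign s hs.1 with h' | h' <;> dsimp only at hPs <;> linarith [h'.1]
    have hxmono : MonotoneOn x (Ici 0) := by
      apply monotoneOn_of_hasDerivWithinAt_nonneg (convex_Ici 0)
        (f' := fun t => γ₁ * x t * (1 - x t - α * y t)) hxc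
      · intro t ht
        rw [interior_Ici] at ht
        exact (hx' t ht).hasDerivWithinAt
      · intro t ht
        rw [interior_Ici] at ht
        have h1 := (hall t ht.le).1
        have h2 := hxpos t (mem_Ici.2 ht.le)
        positivity
    have hymono : MonotoneOn y (Ici 0) := by
      apply monotoneOn_of_hasDerivWithinAt_nonneg (convex_Ici 0)
        (f' := fun t => γ₂ * y t * (1 - y t - β * x t)) hyc
      · intro t ht
        rw [interior_Ici] at ht
        exact (hy' t ht).hasDerivWithinAt
      · intro t ht
        rw [interior_Ici] at ht
        have h1 := (hall t ht.le).2
        have h2 := hypos t (mem_Ici.2 ht.le)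
        positivity
    obtain ⟨Lx, hLx, _⟩ := LV_tendsto_of_monotoneOn hxmono
      ⟨1, fun z hz => by
        obtain ⟨t, ht, rfl⟩ := hz
        have h1 := (hall t ht).1
        have h2 := hypos t ht
        nlinarith⟩
    obtain ⟨Ly, hLy, _⟩ := LV_tendsto_of_monotoneOn hymono
      ⟨1, fun z hz => by
        obtain ⟨t, ht, rfl⟩ := hz
        have h1 := (hall t ht).2
        have h2 := hxpos t ht
        nlinarith⟩
    exact ⟨Lx, Ly, hLx, hLy,
      ge_of_tendsto hLx ((eventually_ge_atTop (0:ℝ)).mono fun t ht => (hxpos t ht).le),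
      ge_of_tendsto hLy ((eventually_ge_atTop (0:ℝ)).mono fun t ht => (hypos t ht).le)⟩
  · -- P < 0 and Q < 0 for all time
    have hall : ∀ t, 0 ≤ t → 1 - x t - α * y t < 0 ∧ 1 - y t - β * x t < 0 := by
      intro t ht
      rcases hsign t ht with h | h
      · exfalso
        have hivt := intermediate_value_Icc (a := 0) (b := t) ht
          (hPc.mono (fun s hs => hs.1))
        have h0 : (0:ℝ) ∈ Icc (1 - x 0 - α * y 0) (1 - x t - α * y t) :=
          ⟨hcase.1.le, h.1.le⟩
        obtain ⟨s, hs, hPs⟩ := hivt h0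
        rcases hsign s hs.1 with h' | h' <;> dsimp only at hPs <;> linarith [h'.1]
      · exact h
    have hxmono : AntitoneOn x (Ici 0) := by
      apply antitoneOn_of_hasDerivWithinAt_nonpos (convex_Ici 0)
        (f' := fun t => γ₁ * x t * (1 - x t - α * y t)) hxc
      · intro t ht
        rw [interior_Ici] at ht
        exact (hx' t ht).hasDerivWithinAt
      · intro t ht
        rw [interior_Ici] at ht
        have h1 := (hall t ht.le).1
        have h2 := hxpos t (mem_Ici.2 ht.le)
        exact mul_nonpos_of_nonneg_of_nonpos (mul_pos hγ₁ h2).le h1.le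
    have hymono : AntitoneOn y (Ici 0) := by
      apply antitoneOn_of_hasDerivWithinAt_nonpos (convex_Ici 0)
        (f' := fun t => γ₂ * y t * (1 - y t - β * x t)) hyc
      · intro t ht
        rw [interior_Ici] at ht
        exact (hy' t ht).hasDerivWithinAt
      · intro t ht
        rw [interior_Ici] at ht
        have h1 := (hall t ht.le).2
        have h2 := hypos t (mem_Ici.2 ht.le)
        exact mul_nonpos_of_nonneg_of_nonpos (mul_pos hγ₂ h2).le h1.le
    obtain ⟨Lx, hLx, _⟩ := LV_tendsto_of_antitoneOn hxmono
      ⟨0, fun z hz => by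
        obtain ⟨t, ht, rfl⟩ := hz
        exact (hxpos t ht).le⟩
    obtain ⟨Ly, hLy, _⟩ := LV_tendsto_of_antitoneOn hymono
      ⟨0, fun z hz => by
        obtain ⟨t, ht, rfl⟩ := hz
        exact (hypos t ht).le⟩
    exact ⟨Lx, Ly, hLx, hLy,
      ge_of_tendsto hLx ((eventually_ge_atTop (0:ℝ)).mono fun t ht => (hxpos t ht).le),
      ge_of_tendsto hLy ((eventually_ge_atTop (0:ℝ)).mono fun t ht => (hypos t ht).le)⟩

end LVGeneral

section LVOrder

variable {α β γ₁ γ₂ : ℝ} {x1 y1 x2 y2 : ℝ → ℝ}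

set_option maxHeartbeats 1000000 in
/-- Comparison/order preservation for the competitive order:
if `x1 0 ≥ x2 0` and `y1 0 ≤ y2 0` then this persists for all `t ≥ 0`. -/
lemma LV_order (hα : 0 < α) (hβ : 0 < β) (hγ₁ : 0 < γ₁) (hγ₂ : 0 < γ₂)
    (hx1 : ∀ t ∈ Ici (0:ℝ), HasDerivWithinAt x1 (γ₁ * x1 t * (1 - x1 t - α * y1 t)) (Ici 0) t)
    (hy1 : ∀ t ∈ Ici (0:ℝ), HasDerivWithinAt y1 (γ₂ * y1 t * (1 - y1 t - β * x1 t)) (Ici 0) t)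
    (hx2 : ∀ t ∈ Ici (0:ℝ), HasDerivWithinAt x2 (γ₁ * x2 t * (1 - x2 t - α * y2 t)) (Ici 0) t)
    (hy2 : ∀ t ∈ Ici (0:ℝ), HasDerivWithinAt y2 (γ₂ * y2 t * (1 - y2 t - β * x2 t)) (Ici 0) t)
    (hx2nn : ∀ t ∈ Ici (0:ℝ), 0 ≤ x2 t) (hy1nn : ∀ t ∈ Ici (0:ℝ), 0 ≤ y1 t)
    (hu0 : x2 0 ≤ x1 0) (hv0 : y1 0 ≤ y2 0) :
    ∀ t ∈ Ici (0:ℝ), x2 t ≤ x1 t ∧ y1 t ≤ y2 t := by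
  have hx1c := LV_contx hx1
  have hy1c := LV_contx hy1
  have hx2c := LV_contx hx2
  have hy2c := LV_contx hy2
  have hx1' := LV_derivx hx1
  have hy1' := LV_derivx hy1
  have hx2' := LV_derivx hx2
  have hy2' := LV_derivx hy2
  set u : ℝ → ℝ := fun t => x1 t - x2 t with hudef
  set v : ℝ → ℝ := fun t => y2 t - y1 t with hvdef
  set a : ℝ → ℝ := fun t => γ₁ * (1 - x1 t - x2 t - α * y1 t) with hadef
  set bb : ℝ → ℝ := fun t => γ₁ * α * x2 t with hbdef
  set cc : ℝ → ℝ := fun t => γ₂ * β * y1 t with hcdef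
  set d : ℝ → ℝ := fun t => γ₂ * (1 - y1 t - y2 t - β * x2 t) with hddef
  have hac : ContinuousOn a (Ici 0) := continuousOn_const.mul
    (((continuousOn_const.sub hx1c).sub hx2c).sub (continuousOn_const.mul hy1c))
  have hbc : ContinuousOn bb (Ici 0) := continuousOn_const.mul hx2c
  have hccc : ContinuousOn cc (Ici 0) := continuousOn_const.mul hy1c
  have hdc : ContinuousOn d (Ici 0) := continuousOn_const.mul
    (((continuousOn_const.sub hy1c).sub hy2c).sub (continuousOn_const.mul hx2c))
  have hu' : ∀ t ∈ Ioi (0:ℝ), HasDerivAt u (a t * u t + bb t * v t) t := by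
    intro t ht
    have h := (hx1' t ht).sub (hx2' t ht)
    refine h.congr_deriv ?_
    simp only [hadef, hbdef, hudef, hvdef]
    ring
  have hv' : ∀ t ∈ Ioi (0:ℝ), HasDerivAt v (cc t * u t + d t * v t) t := by
    intro t ht
    have h := (hy2' t ht).sub (hy1' t ht)
    refine h.congr_deriv ?_
    simp only [hcdef, hddef, hudef, hvdef]
    ring
  intro T hT
  have hT0 : (0:ℝ) ≤ T := hT
  obtain ⟨Ka, hKa⟩ := (isCompact_Icc (a := (0:ℝ)) (b := T)).exists_bound_of_continuousOn
    (hac.mono Icc_subset_Ici_self)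
  obtain ⟨Kb, hKb⟩ := (isCompact_Icc (a := (0:ℝ)) (b := T)).exists_bound_of_continuousOn
    (hbc.mono Icc_subset_Ici_self)
  obtain ⟨Kc, hKc⟩ := (isCompact_Icc (a := (0:ℝ)) (b := T)).exists_bound_of_continuousOn
    (hccc.mono Icc_subset_Ici_self)
  obtain ⟨Kd, hKd⟩ := (isCompact_Icc (a := (0:ℝ)) (b := T)).exists_bound_of_continuousOn
    (hdc.mono Icc_subset_Ici_self)
  set g : ℝ → ℝ := fun t => (min (u t) 0)^2 + (min (v t) 0)^2 with hgdef
  have key := LV_gronwall_zero (g := g)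
    (g' := fun t => 2 * min (u t) 0 * (a t * u t + bb t * v t)
      + 2 * min (v t) 0 * (cc t * u t + d t * v t))
    (c := 0) (b := T) (K := 2*Ka + Kb + Kc + 2*Kd)
    (ContinuousOn.add
      (((continuous_id.min continuous_const).pow 2).comp_continuousOn
        ((hx1c.sub hx2c).mono Icc_subset_Ici_self))
      (((continuous_id.min continuous_const).pow 2).comp_continuousOn
        ((hy2c.sub hy1c).mono Icc_subset_Ici_self)))
    (fun t ht => ((LV_hasDerivAt_minsq (u t)).comp t (hu' t ht.1)).add
      ((LV_hasDerivAt_minsq (v t)).comp t (hv' t ht.1)))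
    (fun t ht => by
      have htm := Ioo_subset_Icc_self ht
      have hKa' := hKa t htm; have hKb' := hKb t htm
      have hKc' := hKc t htm; have hKd' := hKd t htm
      rw [Real.norm_eq_abs] at hKa' hKb' hKc' hKd'
      have hbnn : 0 ≤ bb t := by
        simp only [hbdef]
        exact mul_nonneg (by positivity) (hx2nn t ht.1.le)
      have hcnn : 0 ≤ cc t := by
        simp only [hcdef]
        exact mul_nonneg (by positivity) (hy1nn t ht.1.le)
      set mU := min (u t) 0 with hmU
      set mV := min (v t) 0 with hmV
      have e1 : mU * u t = mU^2 := LV_minsq_self (u t)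
      have e2 : mV * v t = mV^2 := LV_minsq_self (v t)
      have f3 : mU * v t ≤ mU * mV :=
        mul_le_mul_of_nonpos_left (min_le_left (v t) 0) (min_le_right (u t) 0)
      have f4 : mV * u t ≤ mV * mU :=
        mul_le_mul_of_nonpos_left (min_le_left (u t) 0) (min_le_right (v t) 0)
      have f5 : 2 * (-mU) * (-mV) ≤ (-mU)^2 + (-mV)^2 := two_mul_le_add_sq _ _
      have hg : (0:ℝ) ≤ mU^2 + mV^2 := by positivity
      have TA : 2 * a t * mU^2 ≤ 2*Ka*mU^2 :=
        mul_le_mul_of_nonneg_right (by linarith [(abs_le.1 hKa').2]) (sq_nonneg mU)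
      have TD : 2 * d t * mV^2 ≤ 2*Kd*mV^2 :=
        mul_le_mul_of_nonneg_right (by linarith [(abs_le.1 hKd').2]) (sq_nonneg mV)
      have TB : 2 * bb t * (mU * v t) ≤ Kb * (mU^2 + mV^2) := by
        have s1 := mul_le_mul_of_nonneg_left f3 (by linarith : (0:ℝ) ≤ 2 * bb t)
        have s2 := mul_le_mul_of_nonneg_left f5 hbnn
        have s3 := mul_le_mul_of_nonneg_right ((abs_le.1 hKb').2) hg
        nlinarith [s1, s2, s3]
      have TC : 2 * cc t * (mV * u t) ≤ Kc * (mU^2 + mV^2) := by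
        have s1 := mul_le_mul_of_nonneg_left f4 (by linarith : (0:ℝ) ≤ 2 * cc t)
        have s2 := mul_le_mul_of_nonneg_left f5 hcnn
        have s3 := mul_le_mul_of_nonneg_right ((abs_le.1 hKc').2) hg
        nlinarith [s1, s2, s3]
      have hKa0 : 0 ≤ Ka := le_trans (norm_nonneg _) (hKa 0 ⟨le_refl _, hT0⟩)
      have hKd0 : 0 ≤ Kd := le_trans (norm_nonneg _) (hKd 0 ⟨le_refl _, hT0⟩)
      have expand : 2 * mU * (a t * u t + bb t * v t) + 2 * mV * (cc t * u t + d t * v t)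
          = 2 * a t * (mU * u t) + 2 * bb t * (mU * v t)
            + 2 * cc t * (mV * u t) + 2 * d t * (mV * v t) := by ring
      have hgt : g t = mU^2 + mV^2 := rfl
      rw [expand, e1, e2, hgt]
      nlinarith [TA, TB, TC, TD, mul_nonneg hKa0 (sq_nonneg mV), mul_nonneg hKd0 (sq_nonneg mU)])
    (by
      show (min (u 0) 0)^2 + (min (v 0) 0)^2 = 0
      rw [min_eq_right (show (0:ℝ) ≤ u 0 by simp only [hudef]; linarith),
        min_eq_right (show (0:ℝ) ≤ v 0 by simp only [hvdef]; linarith)]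
      norm_num)
    (fun t _ => by positivity)
  have hgT : (min (u T) 0)^2 + (min (v T) 0)^2 = 0 := key T (right_mem_Icc.2 hT0)
  have h1 : min (u T) 0 = 0 ∧ min (v T) 0 = 0 := by
    constructor <;> nlinarith [sq_nonneg (min (u T) 0), sq_nonneg (min (v T) 0)]
  constructor
  · rcases le_or_gt (x2 T) (x1 T) with h | h
    · exact h
    · exfalso
      have hu : u T < 0 := by simp only [hudef]; linarith
      have := h1.1
      rw [min_eq_left hu.le] at this
      linarith
  · rcases le_or_gt (y1 T) (y2 T) with h | h
    · exact h
    · exfalso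
      have hv : v T < 0 := by simp only [hvdef]; linarith
      have := h1.2
      rw [min_eq_left hv.le] at this
      linarith

end LVOrder

section LVNoTwo

variable {α β δ : ℝ} {x1 y1 x2 y2 : ℝ → ℝ}

set_option maxHeartbeats 4000000 in
/-- Two distinct solutions, ordered in the competitive order, cannot both
converge to the interior saddle point `(A,B)`. -/
lemma LV_no_two (hα : 1 < α) (hβ : 1 < β) (hδ : 0 < δ)
    {A B : ℝ} (hA : A = (α - 1) / (α * β - 1)) (hB : B = (β - 1) / (α * β - 1))
    (hx1 : ∀ t ∈ Ici (0:ℝ), HasDerivWithinAt x1 (x1 t * (1 - x1 t - α * y1 t)) (Ici 0) t)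
    (hy1 : ∀ t ∈ Ici (0:ℝ), HasDerivWithinAt y1 (δ * y1 t * (1 - y1 t - β * x1 t)) (Ici 0) t)
    (hx2 : ∀ t ∈ Ici (0:ℝ), HasDerivWithinAt x2 (x2 t * (1 - x2 t - α * y2 t)) (Ici 0) t)
    (hy2 : ∀ t ∈ Ici (0:ℝ), HasDerivWithinAt y2 (δ * y2 t * (1 - y2 t - β * x2 t)) (Ici 0) t)
    (hord : ∀ t ∈ Ici (0:ℝ), x2 t ≤ x1 t ∧ y1 t ≤ y2 t)
    (hv0 : y1 0 < y2 0)
    (hc1x : Tendsto x1 atTop (nhds A)) (hc1y : Tendsto y1 atTop (nhds B))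
    (hc2x : Tendsto x2 atTop (nhds A)) (hc2y : Tendsto y2 atTop (nhds B)) : False := by
  -- basic algebra
  have hab : 0 < α * β - 1 := by nlinarith
  have hApos : 0 < A := by rw [hA]; exact div_pos (by linarith) hab
  have hBpos : 0 < B := by rw [hB]; exact div_pos (by linarith) hab
  have hA1 : A + α * B = 1 := by rw [hA, hB]; field_simp; ring
  have hB1 : β * A + B = 1 := by rw [hA, hB, mul_div_assoc', ← add_div, div_eq_one_iff_eq hab.ne']; ring
  -- the positive eigenvalue and left eigenvector
  set s : ℝ := A + δ * B with hsdef
  set D : ℝ := s^2 + 4 * (δ * A * B * (α * β - 1)) with hDdef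
  have hspos : 0 < s := by positivity
  have hDgt : s^2 < D := by
    have : 0 < 4 * (δ * A * B * (α * β - 1)) := by positivity
    linarith
  have hDnn : 0 ≤ D := by nlinarith [sq_nonneg s]
  set lam : ℝ := (-s + Real.sqrt D) / 2 with hlamdef
  have hsqrt : s < Real.sqrt D := by
    rw [show s = √(s^2) from (Real.sqrt_sq hspos.le).symm]
    exact Real.sqrt_lt_sqrt (sq_nonneg s) hDgt
  have hlampos : 0 < lam := by rw [hlamdef]; linarith
  have hfact : (2 * lam + s)^2 = D := by
    have h1 : 2 * lam + s = Real.sqrt D := by rw [hlamdef]; ring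
    rw [h1, Real.sq_sqrt hDnn]
  have hquad : lam^2 + (A + δ * B) * lam = δ * A * B * (α * β - 1) := by
    have h := hfact
    rw [hDdef, hsdef] at h
    nlinarith [h]
  set r : ℝ := δ * β * B / (lam + A) with hrdef
  have hlamA : 0 < lam + A := by linarith
  have hrpos : 0 < r := by rw [hrdef]; exact div_pos (by positivity) hlamA
  have id1 : r * (lam + A) = δ * β * B := by
    rw [hrdef]; field_simp
  have id2 : α * A * r - δ * B = lam := by
    have goal' : (α * A * r - δ * B) * (lam + A) = lam * (lam + A) := by
      linear_combination (α * A) * id1 - hquad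
    exact mul_right_cancel₀ (ne_of_gt hlamA) goal'
  -- the linear combination w = r u + v
  have hx1' := fun t (ht : t ∈ Ioi (0:ℝ)) =>
    (hx1 t (mem_Ici.2 (le_of_lt ht))).hasDerivAt (Ici_mem_nhds ht)
  have hy1' := fun t (ht : t ∈ Ioi (0:ℝ)) =>
    (hy1 t (mem_Ici.2 (le_of_lt ht))).hasDerivAt (Ici_mem_nhds ht)
  have hx2' := fun t (ht : t ∈ Ioi (0:ℝ)) =>
    (hx2 t (mem_Ici.2 (le_of_lt ht))).hasDerivAt (Ici_mem_nhds ht)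
  have hy2' := fun t (ht : t ∈ Ioi (0:ℝ)) =>
    (hy2 t (mem_Ici.2 (le_of_lt ht))).hasDerivAt (Ici_mem_nhds ht)
  have hx1c : ContinuousOn x1 (Ici 0) := fun t ht => (hx1 t ht).continuousWithinAt
  have hy1c : ContinuousOn y1 (Ici 0) := fun t ht => (hy1 t ht).continuousWithinAt
  have hx2c : ContinuousOn x2 (Ici 0) := fun t ht => (hx2 t ht).continuousWithinAt
  have hy2c : ContinuousOn y2 (Ici 0) := fun t ht => (hy2 t ht).continuousWithinAt
  set u : ℝ → ℝ := fun t => x1 t - x2 t with hudef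
  set v : ℝ → ℝ := fun t => y2 t - y1 t with hvdef
  set w : ℝ → ℝ := fun t => r * u t + v t with hwdef
  set ca : ℝ → ℝ := fun t => r * (1 - x1 t - x2 t - α * y1 t) + δ * β * y1 t with hcadef
  set cb : ℝ → ℝ := fun t => r * (α * x2 t) + δ * (1 - y1 t - y2 t - β * x2 t) with hcbdef
  have hw' : ∀ t ∈ Ioi (0:ℝ), HasDerivAt w (ca t * u t + cb t * v t) t := by
    intro t ht
    have h := (((hx1' t ht).sub (hx2' t ht)).const_mul r).add ((hy2' t ht).sub (hy1' t ht))
    refine h.congr_deriv ?_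
    simp only [hcadef, hcbdef, hudef, hvdef]
    ring
  have hwc : ContinuousOn w (Ici 0) :=
    (continuousOn_const.mul (hx1c.sub hx2c)).add (hy2c.sub hy1c)
  have hunn : ∀ t ∈ Ici (0:ℝ), 0 ≤ u t := fun t ht => by
    simp only [hudef]; linarith [(hord t ht).1]
  have hvnn : ∀ t ∈ Ici (0:ℝ), 0 ≤ v t := fun t ht => by
    simp only [hvdef]; linarith [(hord t ht).2]
  have hwnn : ∀ t ∈ Ici (0:ℝ), 0 ≤ w t := fun t ht => by
    have h1 := hunn t ht; have h2 := hvnn t ht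
    simp only [hwdef]
    nlinarith
  have hw0 : 0 < w 0 := by
    have h1 := hunn 0 Set.self_mem_Ici
    simp only [hwdef, hvdef]
    nlinarith
  -- coefficient limits
  have hcau : Tendsto ca atTop (nhds (lam * r)) := by
    have hval : r * (1 - A - A - α * B) + δ * β * B = lam * r := by nlinarith [id1, hA1]
    rw [← hval]
    exact ((tendsto_const_nhds.mul ((((tendsto_const_nhds.sub hc1x).sub hc2x).sub
      (tendsto_const_nhds.mul hc1y))))).add (tendsto_const_nhds.mul hc1y)
  have hcbv : Tendsto cb atTop (nhds lam) := by
    have hval : r * (α * A) + δ * (1 - B - B - β * A) = lam := by nlinarith [id2, hB1]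
    rw [← hval]
    exact (tendsto_const_nhds.mul (tendsto_const_nhds.mul hc2x)).add
      (tendsto_const_nhds.mul (((tendsto_const_nhds.sub hc1y).sub hc2y).sub
        (tendsto_const_nhds.mul hc2x)))
  -- choose T beyond which coefficients are at least half their limits
  have hev1 : ∀ᶠ t in atTop, lam * r / 2 < ca t :=
    hcau.eventually (eventually_gt_nhds (by nlinarith))
  have hev2 : ∀ᶠ t in atTop, lam / 2 < cb t :=
    hcbv.eventually (eventually_gt_nhds (by nlinarith))
  obtain ⟨T, hT⟩ := eventually_atTop.1 (hev1.and hev2)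
  set T₀ : ℝ := max T 1 with hT₀def
  have hT₀1 : (1:ℝ) ≤ T₀ := le_max_right _ _
  have hT₀pos : (0:ℝ) < T₀ := lt_of_lt_of_le one_pos hT₀1
  -- w T₀ > 0 via exponential lower bound on [0, T₀]
  obtain ⟨C1, hC1⟩ := (isCompact_Icc (a := (0:ℝ)) (b := T₀)).exists_bound_of_continuousOn
    (((continuousOn_const.mul (((continuousOn_const.sub hx1c).sub hx2c).sub
      (continuousOn_const.mul hy1c))).add
      (continuousOn_const.mul hy1c)).mono Icc_subset_Ici_self : ContinuousOn ca (Icc 0 T₀))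
  obtain ⟨C2, hC2⟩ := (isCompact_Icc (a := (0:ℝ)) (b := T₀)).exists_bound_of_continuousOn
    (((continuousOn_const.mul (continuousOn_const.mul hx2c)).add
      (continuousOn_const.mul (((continuousOn_const.sub hy1c).sub hy2c).sub
        (continuousOn_const.mul hx2c)))).mono Icc_subset_Ici_self : ContinuousOn cb (Icc 0 T₀))
  have hC1nn : 0 ≤ C1 := le_trans (norm_nonneg _) (hC1 0 ⟨le_refl _, hT₀pos.le⟩)
  have hC2nn : 0 ≤ C2 := le_trans (norm_nonneg _) (hC2 0 ⟨le_refl _, hT₀pos.le⟩)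
  have hlow := LV_expbound (w := w) (w' := fun t => ca t * u t + cb t * v t)
    (c := 0) (b := T₀) (L := -((C1 + C2 * r)/r))
    (hwc.mono Icc_subset_Ici_self)
    (fun t ht => hw' t ht.1)
    (fun t ht => by
      have hu := hunn t ht.1.le
      have hv := hvnn t ht.1.le
      have hc1 := abs_le.1 (Real.norm_eq_abs _ ▸ hC1 t (Ioo_subset_Icc_self ht))
      have hc2 := abs_le.1 (Real.norm_eq_abs _ ▸ hC2 t (Ioo_subset_Icc_self ht))
      have hwt : w t = r * u t + v t := rfl
      have hc1' : -C1 ≤ ca t := by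
        have := hc1.1; simp only [hcadef]; exact this
      have hc2' : -C2 ≤ cb t := by
        have := hc2.1; simp only [hcbdef]; exact this
      rw [hwt]
      have hred : -((C1 + C2 * r)/r) * (r * u t + v t)
          = (-((C1 + C2 * r) * (r * u t + v t)))/r := by ring
      rw [hred, div_le_iff₀ hrpos]
      have p1 : 0 ≤ (ca t + C1) * u t := mul_nonneg (by linarith) hu
      have p2 : 0 ≤ (cb t + C2) * v t := mul_nonneg (by linarith) hv
      nlinarith [mul_nonneg hrpos.le p1, mul_nonneg hrpos.le p2,
        mul_nonneg hC1nn hv, mul_nonneg (mul_nonneg (mul_nonneg hC2nn hrpos.le) hrpos.le) hu])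
  have hwT₀ : 0 < w T₀ := by
    have := hlow T₀ (right_mem_Icc.2 hT₀pos.le)
    have hexp : 0 < w 0 * Real.exp (-((C1 + C2 * r)/r) * (T₀ - 0)) :=
      mul_pos hw0 (Real.exp_pos _)
    exact lt_of_lt_of_le hexp this
  -- w does not decrease after T₀
  have hgrow : ∀ T', T₀ ≤ T' → w T₀ ≤ w T' := by
    intro T' hT'
    have hkey := LV_expbound (w := w) (w' := fun t => ca t * u t + cb t * v t)
      (c := T₀) (b := T') (L := lam / 2)
      (hwc.mono (fun z hz => le_trans hT₀pos.le hz.1))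
      (fun t ht => hw' t (lt_trans hT₀pos ht.1))
      (fun t ht => by
        have hu := hunn t (le_trans hT₀pos.le ht.1.le)
        have hv := hvnn t (le_trans hT₀pos.le ht.1.le)
        have hTt : T ≤ t := le_trans (le_max_left _ _) ht.1.le
        obtain ⟨hca, hcb⟩ := hT t hTt
        have hwt : w t = r * u t + v t := rfl
        rw [hwt]
        nlinarith [mul_nonneg (by linarith : (0:ℝ) ≤ ca t - lam * r / 2) hu,
          mul_nonneg (by linarith : (0:ℝ) ≤ cb t - lam / 2) hv])
    have := hkey T' (right_mem_Icc.2 hT')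
    have hexp : 1 ≤ Real.exp (lam / 2 * (T' - T₀)) :=
      Real.one_le_exp (by nlinarith)
    have h2 := mul_le_mul_of_nonneg_left hexp hwT₀.le
    rw [mul_one] at h2
    exact le_trans h2 this
  -- but w tends to 0, contradiction
  have hwlim : Tendsto w atTop (nhds 0) := by
    have : Tendsto w atTop (nhds (r * (A - A) + (B - B))) :=
      (tendsto_const_nhds.mul (hc1x.sub hc2x)).add (hc2y.sub hc1y)
    simpa using this
  have hev := hwlim.eventually (eventually_lt_nhds hwT₀)
  obtain ⟨T₂, hT₂⟩ := eventually_atTop.1 hev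
  have hcontra := hgrow (max T₀ T₂) (le_max_left _ _)
  have := hT₂ (max T₀ T₂) (le_max_right _ _)
  linarith

end LVNoTwo

set_option maxHeartbeats 2000000 in
/-- The stable manifold of the saddle `(A,B)` separates the basins of
attraction: if the forward solution from `(x₀, y⋆)` converges to `(A,B)`,
then solutions starting at `(x₀,y₀)` with `0 < y₀ < y⋆` converge to `(1,0)`,
and solutions starting at `(x₀,y₀)` with `y₀ > y⋆` converge to `(0,1)`. -/
theorem stmt_9 (α β δ : ℝ) (hα : 1 < α) (hβ : 1 < β) (hδ : 0 < δ)
    (A B : ℝ) (hA : A = (α - 1) / (α * β - 1)) (hB : B = (β - 1) / (α * β - 1))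
    (x₀ ystar : ℝ) (hx₀ : 0 < x₀) (hystar : 0 < ystar)
    (xs ys : ℝ → ℝ)
    (hxs : ∀ t ∈ Set.Ici (0 : ℝ),
      HasDerivWithinAt xs (xs t * (1 - xs t - α * ys t)) (Set.Ici 0) t)
    (hys : ∀ t ∈ Set.Ici (0 : ℝ),
      HasDerivWithinAt ys (δ * ys t * (1 - ys t - β * xs t)) (Set.Ici 0) t)
    (hxs0 : xs 0 = x₀) (hys0 : ys 0 = ystar)
    (hconv : Tendsto (fun t => (xs t, ys t)) atTop (nhds (A, B))) :
    (∀ y₀ : ℝ, 0 < y₀ → y₀ < ystar →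
      ∀ x y : ℝ → ℝ,
        (∀ t ∈ Set.Ici (0 : ℝ),
          HasDerivWithinAt x (x t * (1 - x t - α * y t)) (Set.Ici 0) t) →
        (∀ t ∈ Set.Ici (0 : ℝ),
          HasDerivWithinAt y (δ * y t * (1 - y t - β * x t)) (Set.Ici 0) t) →
        x 0 = x₀ → y 0 = y₀ →
        Tendsto (fun t => (x t, y t)) atTop (nhds ((1 : ℝ), (0 : ℝ)))) ∧
    (∀ y₀ : ℝ, ystar < y₀ →
      ∀ x y : ℝ → ℝ,
        (∀ t ∈ Set.Ici (0 : ℝ),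
          HasDerivWithinAt x (x t * (1 - x t - α * y t)) (Set.Ici 0) t) →
        (∀ t ∈ Set.Ici (0 : ℝ),
          HasDerivWithinAt y (δ * y t * (1 - y t - β * x t)) (Set.Ici 0) t) →
        x 0 = x₀ → y 0 = y₀ →
        Tendsto (fun t => (x t, y t)) atTop (nhds ((0 : ℝ), (1 : ℝ)))) := by
  have hab : 0 < α * β - 1 := by nlinarith
  have hApos : 0 < A := by rw [hA]; exact div_pos (by linarith) hab
  have hBpos : 0 < B := by rw [hB]; exact div_pos (by linarith) hab
  have hAval : (α * β - 1) * A = α - 1 := by rw [hA]; field_simp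
  have hBval : (α * β - 1) * B = β - 1 := by rw [hB]; field_simp
  have hα0 : (0:ℝ) < α := by linarith
  have hβ0 : (0:ℝ) < β := by linarith
  -- adapters to the general γ-form
  have hxs' : ∀ t ∈ Set.Ici (0:ℝ),
      HasDerivWithinAt xs ((1:ℝ) * xs t * (1 - xs t - α * ys t)) (Set.Ici 0) t := by
    intro t ht; rw [one_mul]; exact hxs t ht
  have hconvx : Tendsto xs atTop (nhds A) := by
    have := (continuous_fst.tendsto ((A : ℝ), (B : ℝ))).comp hconv
    exact this
  have hconvy : Tendsto ys atTop (nhds B) := by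
    have := (continuous_snd.tendsto ((A : ℝ), (B : ℝ))).comp hconv
    exact this
  have hxsc := LV_contx hxs'
  have hysc := LV_contx (γ₁ := δ) (α := β) (y := xs) hys
  have hxsp : ∀ t ∈ Set.Ici (0:ℝ), 0 < xs t :=
    LV_xpos hxs' hysc (by rw [hxs0]; exact hx₀)
  have hysp : ∀ t ∈ Set.Ici (0:ℝ), 0 < ys t :=
    LV_xpos (γ₁ := δ) (α := β) (y := xs) hys hxsc (by rw [hys0]; exact hystar)
  constructor
  · -- below the separatrix : convergence to (1,0)
    intro y₀ hy₀pos hy₀lt x y hx hy hx0 hy0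
    have hx' : ∀ t ∈ Set.Ici (0:ℝ),
        HasDerivWithinAt x ((1:ℝ) * x t * (1 - x t - α * y t)) (Set.Ici 0) t := by
      intro t ht; rw [one_mul]; exact hx t ht
    have hxc := LV_contx hx'
    have hyc := LV_contx (γ₁ := δ) (α := β) (y := x) hy
    have hxp : ∀ t ∈ Set.Ici (0:ℝ), 0 < x t :=
      LV_xpos hx' hyc (by rw [hx0]; exact hx₀)
    have hyp : ∀ t ∈ Set.Ici (0:ℝ), 0 < y t :=
      LV_xpos (γ₁ := δ) (α := β) (y := x) hy hxc (by rw [hy0]; exact hy₀pos)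
    -- order : xs ≤ x, y ≤ ys
    have hord := LV_order hα0 hβ0 one_pos hδ hx' hy hxs' hys
      (fun t ht => (hxsp t ht).le) (fun t ht => (hyp t ht).le)
      (by rw [hx0, hxs0]) (by rw [hy0, hys0]; exact hy₀lt.le)
    -- classification of the limit
    obtain ⟨Lx, Ly, htx, hty, hLx0, hLy0⟩ :=
      LV_classify hα0 hβ0 one_pos hδ hx' hy hxp hyp
    have hEx : Lx * (1 - Lx - α * Ly) = 0 :=
      LV_limit_eq one_ne_zero hx' htx hty
    have hEy : Ly * (1 - Ly - β * Lx) = 0 :=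
      LV_limit_eq (γ₁ := δ) (α := β) (y := x) (ne_of_gt hδ) hy hty htx
    have hLxA : A ≤ Lx :=
      le_of_tendsto_of_tendsto hconvx htx
        ((eventually_ge_atTop (0:ℝ)).mono fun t ht => (hord t ht).1)
    have hLxpos : 0 < Lx := lt_of_lt_of_le hApos hLxA
    have he1 : 1 - Lx - α * Ly = 0 := by
      rcases mul_eq_zero.1 hEx with h | h
      · exact absurd h (ne_of_gt hLxpos)
      · exact h
    rcases eq_or_lt_of_le hLy0 with hLy | hLy
    · -- Ly = 0, hence Lx = 1
      have hLx1 : Lx = 1 := by rw [← hLy] at he1; linarith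
      have : Tendsto (fun t => (x t, y t)) atTop (nhds (Lx, Ly)) :=
        htx.prodMk_nhds hty
      rwa [hLx1, ← hLy] at this
    · -- Ly > 0 forces (Lx, Ly) = (A, B) : contradiction with separation
      exfalso
      have he2 : 1 - Ly - β * Lx = 0 := by
        rcases mul_eq_zero.1 hEy with h | h
        · exact absurd h (ne_of_gt hLy)
        · exact h
      have hLxA2 : Lx = A := by
        have hg : (α * β - 1) * Lx = α - 1 := by linear_combination he1 - α * he2
        have := hAval
        apply mul_left_cancel₀ (ne_of_gt hab)
        rw [hg, this]
      have hLyB2 : Ly = B := by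
        have hg : (α * β - 1) * Ly = β - 1 := by linear_combination he2 - β * he1
        apply mul_left_cancel₀ (ne_of_gt hab)
        rw [hg, hBval]
      rw [hLxA2] at htx
      rw [hLyB2] at hty
      exact LV_no_two hα hβ hδ hA hB hx hy hxs hys
        (fun t ht => hord t ht) (by rw [hy0, hys0]; exact hy₀lt)
        htx hty hconvx hconvy
  · -- above the separatrix : convergence to (0,1)
    intro y₀ hy₀gt x y hx hy hx0 hy0
    have hy₀pos : 0 < y₀ := lt_trans hystar hy₀gt
    have hx' : ∀ t ∈ Set.Ici (0:ℝ),
        HasDerivWithinAt x ((1:ℝ) * x t * (1 - x t - α * y t)) (Set.Ici 0) t := by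
      intro t ht; rw [one_mul]; exact hx t ht
    have hxc := LV_contx hx'
    have hyc := LV_contx (γ₁ := δ) (α := β) (y := x) hy
    have hxp : ∀ t ∈ Set.Ici (0:ℝ), 0 < x t :=
      LV_xpos hx' hyc (by rw [hx0]; exact hx₀)
    have hyp : ∀ t ∈ Set.Ici (0:ℝ), 0 < y t :=
      LV_xpos (γ₁ := δ) (α := β) (y := x) hy hxc (by rw [hy0]; exact hy₀pos)
    -- order : x ≤ xs, ys ≤ y
    have hord := LV_order hα0 hβ0 one_pos hδ hxs' hys hx' hy
      (fun t ht => (hxp t ht).le) (fun t ht => (hysp t ht).le)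
      (by rw [hx0, hxs0]) (by rw [hy0, hys0]; exact hy₀gt.le)
    obtain ⟨Lx, Ly, htx, hty, hLx0, hLy0⟩ :=
      LV_classify hα0 hβ0 one_pos hδ hx' hy hxp hyp
    have hEx : Lx * (1 - Lx - α * Ly) = 0 :=
      LV_limit_eq one_ne_zero hx' htx hty
    have hEy : Ly * (1 - Ly - β * Lx) = 0 :=
      LV_limit_eq (γ₁ := δ) (α := β) (y := x) (ne_of_gt hδ) hy hty htx
    have hLyB : B ≤ Ly :=
      le_of_tendsto_of_tendsto hconvy hty
        ((eventually_ge_atTop (0:ℝ)).mono fun t ht => (hord t ht).2)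
    have hLypos : 0 < Ly := lt_of_lt_of_le hBpos hLyB
    have he2 : 1 - Ly - β * Lx = 0 := by
      rcases mul_eq_zero.1 hEy with h | h
      · exact absurd h (ne_of_gt hLypos)
      · exact h
    rcases eq_or_lt_of_le hLx0 with hLx | hLx
    · have hLy1 : Ly = 1 := by rw [← hLx] at he2; linarith
      have : Tendsto (fun t => (x t, y t)) atTop (nhds (Lx, Ly)) :=
        htx.prodMk_nhds hty
      rwa [hLy1, ← hLx] at this
    · exfalso
      have he1 : 1 - Lx - α * Ly = 0 := by
        rcases mul_eq_zero.1 hEx with h | h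
        · exact absurd h (ne_of_gt hLx)
        · exact h
      have hLxA2 : Lx = A := by
        have hg : (α * β - 1) * Lx = α - 1 := by linear_combination he1 - α * he2
        apply mul_left_cancel₀ (ne_of_gt hab)
        rw [hg, hAval]
      have hLyB2 : Ly = B := by
        have hg : (α * β - 1) * Ly = β - 1 := by linear_combination he2 - β * he1
        apply mul_left_cancel₀ (ne_of_gt hab)
        rw [hg, hBval]
      rw [hLxA2] at htx
      rw [hLyB2] at hty
      exact LV_no_two hα hβ hδ hA hB hxs hys hx hy
        (fun t ht => hord t ht) (by rw [hy0, hys0]; exact hy₀gt)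
        hconvx hconvy htx hty
end

section
/- Let α>1, β>1, δ>0, A=(α-1)/(αβ-1), B=(β-1)/(αβ-1). Suppose (x₁,y₁) and (x₂,y₂) are points with x₁,y₁,x₂,y₂>0 such that the solutions of the system dx/dt = x(1-x-αy), dy/dt = δy(1-y-βx) on [0,∞) with initial conditions (x₁,y₁) and (x₂,y₂) both converge to (A,B) as t→∞. If x₁<x₂ then y₁<y₂; that is, the separatrix function y=s(x) is strictly increasing in x. -/
open Filter Set

/-- Grönwall-type lower bound: if `f' ≥ -K f` on `[0,τ]` and `f 0 > 0` then `f τ > 0`. -/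
lemma gron_pos {τ K : ℝ} {f fd : ℝ → ℝ} (hτ : 0 ≤ τ)
    (hd : ∀ t ∈ Icc (0:ℝ) τ, HasDerivWithinAt f (fd t) (Icc 0 τ) t)
    (hb : ∀ t ∈ Icc (0:ℝ) τ, -K * f t ≤ fd t)
    (h0 : 0 < f 0) : 0 < f τ := by
  have hgd : ∀ t ∈ Icc (0:ℝ) τ, HasDerivWithinAt (fun s => f s * Real.exp (K * s))
      (fd t * Real.exp (K * t) + f t * (Real.exp (K * t) * K)) (Icc 0 τ) t := by
    intro t ht
    have hexp : HasDerivAt (fun s : ℝ => Real.exp (K * s)) (Real.exp (K * t) * K) t := by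
      simpa using ((hasDerivAt_id t).const_mul K).exp
    exact (hd t ht).mul hexp.hasDerivWithinAt
  have hmono : MonotoneOn (fun s => f s * Real.exp (K * s)) (Icc 0 τ) := by
    apply monotoneOn_of_hasDerivWithinAt_nonneg (convex_Icc 0 τ)
      (fun t ht => (hgd t ht).continuousWithinAt)
      (fun t ht => (hgd t (interior_subset ht)).mono interior_subset)
    intro t ht
    have ht' := interior_subset ht
    have h1 := hb t ht'
    nlinarith [Real.exp_pos (K * t)]
  have h2 : f 0 * Real.exp (K * 0) ≤ f τ * Real.exp (K * τ) :=
    hmono (left_mem_Icc.2 hτ) (right_mem_Icc.2 hτ) hτ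
  nlinarith [Real.exp_pos (K * τ), Real.exp_pos (K * 0)]

/-- Invariance of the open positive quadrant for a pair of functions satisfying
quasi-monotone differential inequalities. -/
lemma pair_pos {T K : ℝ} (hT : 0 ≤ T) {P R dP dR : ℝ → ℝ}
    (hP : ∀ t ∈ Icc (0:ℝ) T, HasDerivWithinAt P (dP t) (Icc 0 T) t)
    (hR : ∀ t ∈ Icc (0:ℝ) T, HasDerivWithinAt R (dR t) (Icc 0 T) t)
    (hb : ∀ t ∈ Icc (0:ℝ) T, 0 ≤ P t → 0 ≤ R t → -K * P t ≤ dP t ∧ -K * R t ≤ dR t)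
    (hP0 : 0 < P 0) (hR0 : 0 < R 0) :
    ∀ t ∈ Icc (0:ℝ) T, 0 < P t ∧ 0 < R t := by
  by_contra hcon
  push_neg at hcon
  obtain ⟨τ, hτ, hτ2⟩ := hcon
  have hPc : ContinuousOn P (Icc 0 T) := fun t ht => (hP t ht).continuousWithinAt
  have hRc : ContinuousOn R (Icc 0 T) := fun t ht => (hR t ht).continuousWithinAt
  set g : ℝ → ℝ := fun t => min (P t) (R t) with hgdef
  have hgc : ContinuousOn g (Icc 0 T) := hPc.inf hRc
  have hg0 : 0 < g 0 := lt_min hP0 hR0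
  have hτbad : g τ ≤ 0 := by
    rcases le_or_gt (P τ) 0 with h | h
    · exact le_trans (min_le_left _ _) h
    · exact le_trans (min_le_right _ _) (hτ2 h)
  have hsubτ : Icc (0:ℝ) τ ⊆ Icc 0 T := Icc_subset_Icc le_rfl hτ.2
  obtain ⟨σ, hσ, hgσ⟩ := intermediate_value_Icc' hτ.1 (hgc.mono hsubτ) ⟨hτbad, hg0.le⟩
  set S : Set ℝ := Icc 0 T ∩ g ⁻¹' {0} with hSdef
  have hSclosed : IsClosed S := hgc.preimage_isClosed_of_isClosed isClosed_Icc isClosed_singleton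
  have hSne : S.Nonempty := ⟨σ, hsubτ hσ, by simpa using hgσ⟩
  have hSbdd : BddBelow S := ⟨0, fun s hs => hs.1.1⟩
  set τ₀ := sInf S with hτ₀def
  have hτ₀S : τ₀ ∈ S := hSclosed.csInf_mem hSne hSbdd
  have hτ₀mem : τ₀ ∈ Icc (0:ℝ) T := hτ₀S.1
  have hgτ₀ : g τ₀ = 0 := hτ₀S.2
  have hsub0 : Icc (0:ℝ) τ₀ ⊆ Icc 0 T := Icc_subset_Icc le_rfl hτ₀mem.2
  have hnn : ∀ s ∈ Icc (0:ℝ) τ₀, 0 ≤ g s := by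
    intro s hs
    by_contra hneg
    push_neg at hneg
    have hsT : Icc (0:ℝ) s ⊆ Icc 0 T := Icc_subset_Icc le_rfl ((hs.2).trans hτ₀mem.2)
    obtain ⟨σ', hσ', h0'⟩ := intermediate_value_Icc' hs.1 (hgc.mono hsT) ⟨hneg.le, hg0.le⟩
    have hσ'S : σ' ∈ S := ⟨hsT hσ', by simpa using h0'⟩
    have h1 : τ₀ ≤ σ' := csInf_le hSbdd hσ'S
    have h2 : σ' = s := le_antisymm hσ'.2 (le_trans hs.2 h1)
    rw [h2] at h0'
    linarith
  have hPnn : ∀ s ∈ Icc (0:ℝ) τ₀, 0 ≤ P s :=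
    fun s hs => le_trans (hnn s hs) (min_le_left _ _)
  have hRnn : ∀ s ∈ Icc (0:ℝ) τ₀, 0 ≤ R s :=
    fun s hs => le_trans (hnn s hs) (min_le_right _ _)
  have hPpos : 0 < P τ₀ :=
    gron_pos hτ₀mem.1 (fun s hs => (hP s (hsub0 hs)).mono hsub0)
      (fun s hs => (hb s (hsub0 hs) (hPnn s hs) (hRnn s hs)).1) hP0
  have hRpos : 0 < R τ₀ :=
    gron_pos hτ₀mem.1 (fun s hs => (hR s (hsub0 hs)).mono hsub0)
      (fun s hs => (hb s (hsub0 hs) (hPnn s hs) (hRnn s hs)).2) hR0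
  have : 0 < g τ₀ := lt_min hPpos hRpos
  linarith

/-- Positivity is preserved forward in time for `f' = f · c`. -/
lemma pos_forward {f c : ℝ → ℝ}
    (hf : ∀ t ∈ Ici (0:ℝ), HasDerivWithinAt f (f t * c t) (Ici 0) t)
    (hc : ContinuousOn c (Ici 0))
    (h0 : 0 < f 0) : ∀ t ∈ Ici (0:ℝ), 0 < f t := by
  intro T hT
  have hT' : (0:ℝ) ≤ T := hT
  obtain ⟨C, hC⟩ := (isCompact_Icc : IsCompact (Icc (0:ℝ) T)).exists_bound_of_continuousOn
    (hc.mono Icc_subset_Ici_self)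
  have hC0 : 0 ≤ C := le_trans (norm_nonneg _) (hC 0 (left_mem_Icc.2 hT'))
  have key := pair_pos (K := C) hT'
    (P := f) (R := fun _ => (1:ℝ)) (dP := fun t => f t * c t) (dR := fun _ => (0:ℝ))
    (fun t ht => (hf t ht.1).mono Icc_subset_Ici_self)
    (fun t _ => hasDerivWithinAt_const _ _ _)
    (fun t ht hPt _ => by
      have h1 := hC t ht
      rw [Real.norm_eq_abs] at h1
      have h2 := abs_le.mp h1
      constructor
      · show -C * f t ≤ f t * c t
        nlinarith
      · show -C * (1:ℝ) ≤ 0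
        nlinarith)
    h0 one_pos
  exact (key T (right_mem_Icc.2 hT')).1

set_option maxHeartbeats 2000000 in
/-- Monotonicity of the separatrix: if two points `(x₁,y₁)` and `(x₂,y₂)` in
the open first quadrant both lie on the stable manifold of the saddle `(A,B)`
(i.e. their forward solutions converge to `(A,B)`), then `x₁ < x₂` implies
`y₁ < y₂`. -/
theorem stmt_10 (α β δ : ℝ) (hα : 1 < α) (hβ : 1 < β) (hδ : 0 < δ)
    (A B : ℝ) (hA : A = (α - 1) / (α * β - 1)) (hB : B = (β - 1) / (α * β - 1))
    (x₁ y₁ x₂ y₂ : ℝ) (hx₁ : 0 < x₁) (hy₁ : 0 < y₁) (hx₂ : 0 < x₂) (hy₂ : 0 < y₂)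
    (u₁ v₁ : ℝ → ℝ)
    (hu₁ : ∀ t ∈ Set.Ici (0 : ℝ),
      HasDerivWithinAt u₁ (u₁ t * (1 - u₁ t - α * v₁ t)) (Set.Ici 0) t)
    (hv₁ : ∀ t ∈ Set.Ici (0 : ℝ),
      HasDerivWithinAt v₁ (δ * v₁ t * (1 - v₁ t - β * u₁ t)) (Set.Ici 0) t)
    (hu₁0 : u₁ 0 = x₁) (hv₁0 : v₁ 0 = y₁)
    (hconv₁ : Tendsto (fun t => (u₁ t, v₁ t)) atTop (nhds (A, B)))
    (u₂ v₂ : ℝ → ℝ)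
    (hu₂ : ∀ t ∈ Set.Ici (0 : ℝ),
      HasDerivWithinAt u₂ (u₂ t * (1 - u₂ t - α * v₂ t)) (Set.Ici 0) t)
    (hv₂ : ∀ t ∈ Set.Ici (0 : ℝ),
      HasDerivWithinAt v₂ (δ * v₂ t * (1 - v₂ t - β * u₂ t)) (Set.Ici 0) t)
    (hu₂0 : u₂ 0 = x₂) (hv₂0 : v₂ 0 = y₂)
    (hconv₂ : Tendsto (fun t => (u₂ t, v₂ t)) atTop (nhds (A, B)))
    (hlt : x₁ < x₂) :
    y₁ < y₂ := by
  by_contra hcon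
  push_neg at hcon  -- hcon : y₂ ≤ y₁
  -- continuity of the solutions
  have hu₁c : ContinuousOn u₁ (Ici 0) := fun t ht => (hu₁ t ht).continuousWithinAt
  have hv₁c : ContinuousOn v₁ (Ici 0) := fun t ht => (hv₁ t ht).continuousWithinAt
  have hu₂c : ContinuousOn u₂ (Ici 0) := fun t ht => (hu₂ t ht).continuousWithinAt
  have hv₂c : ContinuousOn v₂ (Ici 0) := fun t ht => (hv₂ t ht).continuousWithinAt
  -- positivity of the solutions
  have hu₁pos : ∀ t ∈ Ici (0:ℝ), 0 < u₁ t :=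
    pos_forward (c := fun t => 1 - u₁ t - α * v₁ t) hu₁
      ((continuousOn_const.sub hu₁c).sub (continuousOn_const.mul hv₁c))
      (by rw [hu₁0]; exact hx₁)
  have hu₂pos : ∀ t ∈ Ici (0:ℝ), 0 < u₂ t :=
    pos_forward (c := fun t => 1 - u₂ t - α * v₂ t) hu₂
      ((continuousOn_const.sub hu₂c).sub (continuousOn_const.mul hv₂c))
      (by rw [hu₂0]; exact hx₂)
  have hv₁pos : ∀ t ∈ Ici (0:ℝ), 0 < v₁ t := by
    refine pos_forward (c := fun t => δ * (1 - v₁ t - β * u₁ t)) (fun t ht => ?_)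
      (continuousOn_const.mul ((continuousOn_const.sub hv₁c).sub (continuousOn_const.mul hu₁c)))
      (by rw [hv₁0]; exact hy₁)
    have h := hv₁ t ht
    rwa [show δ * v₁ t * (1 - v₁ t - β * u₁ t) = v₁ t * (δ * (1 - v₁ t - β * u₁ t)) by ring] at h
  have hv₂pos : ∀ t ∈ Ici (0:ℝ), 0 < v₂ t := by
    refine pos_forward (c := fun t => δ * (1 - v₂ t - β * u₂ t)) (fun t ht => ?_)
      (continuousOn_const.mul ((continuousOn_const.sub hv₂c).sub (continuousOn_const.mul hu₂c)))
      (by rw [hv₂0]; exact hy₂)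
    have h := hv₂ t ht
    rwa [show δ * v₂ t * (1 - v₂ t - β * u₂ t) = v₂ t * (δ * (1 - v₂ t - β * u₂ t)) by ring] at h
  -- the differences and the linear (cooperative) system they satisfy
  set P : ℝ → ℝ := fun t => u₂ t - u₁ t with hPdef
  set Q : ℝ → ℝ := fun t => v₁ t - v₂ t with hQdef
  set e₁ : ℝ → ℝ := fun t => 1 - u₁ t - u₂ t - α * v₂ t with he₁def
  set e₂ : ℝ → ℝ := fun t => δ * (1 - v₁ t - v₂ t - β * u₁ t) with he₂def
  set a : ℝ → ℝ := fun t => α * u₁ t with hadef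
  set b : ℝ → ℝ := fun t => δ * β * v₂ t with hbdef
  have hdP : ∀ t ∈ Ici (0:ℝ), HasDerivWithinAt P (e₁ t * P t + a t * Q t) (Ici 0) t := by
    intro t ht
    have h := (hu₂ t ht).sub (hu₁ t ht)
    rwa [show u₂ t * (1 - u₂ t - α * v₂ t) - u₁ t * (1 - u₁ t - α * v₁ t)
        = e₁ t * P t + a t * Q t by
      simp only [he₁def, hPdef, hadef, hQdef]; ring] at h
  have hdQ : ∀ t ∈ Ici (0:ℝ), HasDerivWithinAt Q (e₂ t * Q t + b t * P t) (Ici 0) t := by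
    intro t ht
    have h := (hv₁ t ht).sub (hv₂ t ht)
    rwa [show δ * v₁ t * (1 - v₁ t - β * u₁ t) - δ * v₂ t * (1 - v₂ t - β * u₂ t)
        = e₂ t * Q t + b t * P t by
      simp only [he₂def, hQdef, hbdef, hPdef]; ring] at h
  -- Key invariance: P > 0 and Q ≥ 0 forever
  have key : ∀ t ∈ Ici (0:ℝ), 0 < P t ∧ 0 ≤ Q t := by
    intro T hT
    have hT' : (0:ℝ) ≤ T := hT
    -- bound on the coefficients
    have he₁c : ContinuousOn e₁ (Icc 0 T) :=
      (((continuousOn_const.sub hu₁c).sub hu₂c).sub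
        (continuousOn_const.mul hv₂c)).mono Icc_subset_Ici_self
    have he₂c : ContinuousOn e₂ (Icc 0 T) :=
      (continuousOn_const.mul (((continuousOn_const.sub hv₁c).sub hv₂c).sub
        (continuousOn_const.mul hu₁c))).mono Icc_subset_Ici_self
    have hac : ContinuousOn a (Icc 0 T) :=
      (continuousOn_const.mul hu₁c).mono Icc_subset_Ici_self
    have hbc : ContinuousOn b (Icc 0 T) :=
      (continuousOn_const.mul hv₂c).mono Icc_subset_Ici_self
    obtain ⟨Me, hMe⟩ := (isCompact_Icc : IsCompact (Icc (0:ℝ) T)).exists_bound_of_continuousOn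
      ((he₁c.abs.add he₂c.abs).add hac)
    have hMe' : ∀ s ∈ Icc (0:ℝ) T, |e₁ s| + |e₂ s| + a s ≤ Me := by
      intro s hs
      have h := hMe s hs
      rw [Real.norm_eq_abs] at h
      exact le_trans (le_abs_self _) h
    have ha' : ∀ s ∈ Icc (0:ℝ) T, 0 ≤ a s := by
      intro s hs
      have := hu₁pos s hs.1
      simp only [hadef]
      nlinarith
    have hMe0 : 0 ≤ Me := by
      have h1 := hMe' 0 (left_mem_Icc.2 hT')
      have h2 := ha' 0 (left_mem_Icc.2 hT')
      nlinarith [abs_nonneg (e₁ 0), abs_nonneg (e₂ 0)]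
    -- minimum of b
    obtain ⟨s₀, hs₀mem, hs₀min⟩ := (isCompact_Icc : IsCompact (Icc (0:ℝ) T)).exists_isMinOn
      (nonempty_Icc.2 hT') hbc
    have hbm : 0 < b s₀ := by
      have := hv₂pos s₀ hs₀mem.1
      simp only [hbdef]
      exact mul_pos (mul_pos hδ (lt_trans one_pos hβ)) this
    have hbma : ∀ s ∈ Icc (0:ℝ) T, b s₀ ≤ b s := fun s hs => hs₀min hs
    set ε : ℝ := min 1 (b s₀ / (Me + 1)) with hεdef
    have hε0 : 0 < ε := lt_min one_pos (div_pos hbm (by linarith))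
    have main : ∀ ε' : ℝ, 0 < ε' → ε' ≤ ε → ∀ t ∈ Icc (0:ℝ) T,
        0 < P t ∧ 0 < Q t + ε' * P t := by
      intro ε' hε'0 hε'ε
      have hε'1 : ε' ≤ 1 := le_trans hε'ε (min_le_left _ _)
      have hε'b : ε' * (Me + 1) ≤ b s₀ := by
        have h := le_trans hε'ε (min_le_right _ _)
        rw [le_div_iff₀ (by linarith : (0:ℝ) < Me + 1)] at h
        linarith
      have hdR : ∀ s ∈ Icc (0:ℝ) T, HasDerivWithinAt (fun s => Q s + ε' * P s)
          ((e₂ s + ε' * a s) * (Q s + ε' * P s)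
            + (b s + ε' * (e₁ s - e₂ s) - ε' ^ 2 * a s) * P s) (Icc 0 T) s := by
        intro s hs
        have hs' : s ∈ Ici (0:ℝ) := hs.1
        have h := ((hdQ s hs').add (HasDerivWithinAt.const_mul ε' (hdP s hs'))).mono
          (Icc_subset_Ici_self : Icc (0:ℝ) T ⊆ Ici 0)
        rwa [show e₂ s * Q s + b s * P s + ε' * (e₁ s * P s + a s * Q s)
            = (e₂ s + ε' * a s) * (Q s + ε' * P s)
              + (b s + ε' * (e₁ s - e₂ s) - ε' ^ 2 * a s) * P s by ring] at h
      have happ := pair_pos (K := Me) hT'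
        (P := P) (R := fun s => Q s + ε' * P s)
        (fun s hs => (hdP s hs.1).mono (Icc_subset_Ici_self : Icc (0:ℝ) T ⊆ Ici 0)) hdR
        (fun s hs hPs hRs => by
          have hRs' : 0 ≤ Q s + ε' * P s := hRs
          have hMes := hMe' s hs
          have has := ha' s hs
          have he₁lb : -(Me - a s) ≤ e₁ s := by
            have := neg_abs_le (e₁ s); have := abs_nonneg (e₂ s); linarith
          have he₂lb : -(Me - a s) ≤ e₂ s := by
            have := neg_abs_le (e₂ s); have := abs_nonneg (e₁ s); linarith
          constructor
          · show -Me * P s ≤ e₁ s * P s + a s * Q s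
            nlinarith [mul_nonneg has hRs', mul_le_mul_of_nonneg_right he₁lb hPs,
              mul_nonneg (mul_nonneg (by linarith : (0:ℝ) ≤ 1 - ε') has) hPs]
          · show -Me * (Q s + ε' * P s) ≤ (e₂ s + ε' * a s) * (Q s + ε' * P s)
              + (b s + ε' * (e₁ s - e₂ s) - ε' ^ 2 * a s) * P s
            have hb'' : 0 ≤ b s + ε' * (e₁ s - e₂ s) - ε' ^ 2 * a s := by
              have k1 : ε' * (|e₁ s| + |e₂ s| + a s) ≤ ε' * Me :=
                mul_le_mul_of_nonneg_left hMes hε'0.le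
              have k2 : -(ε' * (|e₁ s| + |e₂ s|)) ≤ ε' * (e₁ s - e₂ s) := by
                have hin : -|e₁ s| - |e₂ s| ≤ e₁ s - e₂ s := by
                  have := neg_abs_le (e₁ s); have := le_abs_self (e₂ s); linarith
                nlinarith [mul_le_mul_of_nonneg_left hin hε'0.le]
              have k3 : ε' ^ 2 * a s ≤ ε' * a s := by
                nlinarith [mul_nonneg (mul_nonneg hε'0.le (by linarith : (0:ℝ) ≤ 1 - ε')) has]
              have := hbma s hs
              nlinarith
            have t1 : -Me ≤ e₂ s + ε' * a s := by
              nlinarith [mul_nonneg hε'0.le has]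
            nlinarith [mul_le_mul_of_nonneg_right t1 hRs', mul_nonneg hb'' hPs])
        (by simp only [hPdef, hu₁0, hu₂0]; linarith)
        (by
          show 0 < Q 0 + ε' * P 0
          simp only [hPdef, hQdef, hu₁0, hu₂0, hv₁0, hv₂0]
          nlinarith)
      exact fun t ht => happ t ht
    have hPT : 0 < P T := (main ε hε0 le_rfl T (right_mem_Icc.2 hT')).1
    have hQT : 0 ≤ Q T := by
      by_contra hq
      push_neg at hq
      have hd : 0 < -Q T / (2 * P T) := div_pos (by linarith) (by linarith)
      have hε'0 : 0 < min ε (-Q T / (2 * P T)) := lt_min hε0 hd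
      have h := (main _ hε'0 (min_le_left _ _) T (right_mem_Icc.2 hT')).2
      have hle : min ε (-Q T / (2 * P T)) ≤ -Q T / (2 * P T) := min_le_right _ _
      have h3 : -Q T / (2 * P T) * P T = -Q T / 2 := by
        rw [div_mul_eq_mul_div, mul_comm (2:ℝ) (P T), ← div_div,
          mul_div_assoc, div_self hPT.ne', mul_one]
      have h4 := mul_le_mul_of_nonneg_right hle hPT.le
      rw [h3] at h4
      generalize hm : ε ⊓ (-Q T / (2 * P T)) = m at h h4
      generalize hpp : P T = pp at h h4 hPT
      generalize hqq : Q T = qq at h h4 hq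
      linarith
    exact ⟨hPT, hQT⟩
  -- positivity of the limit
  have hαβ : 0 < α * β - 1 := by nlinarith
  have hA0 : 0 < A := by rw [hA]; exact div_pos (by linarith) hαβ
  have hB0 : 0 < B := by rw [hB]; exact div_pos (by linarith) hαβ
  -- the Lyapunov function
  set V : ℝ → ℝ := fun t => δ * (Real.log (u₂ t) - Real.log (u₁ t))
      + (Real.log (v₁ t) - Real.log (v₂ t)) with hVdef
  have hdV : ∀ t ∈ Ici (0:ℝ),
      HasDerivWithinAt V (δ * ((β - 1) * P t + (α - 1) * Q t)) (Ici 0) t := by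
    intro t ht
    have l1 : HasDerivWithinAt (fun s => Real.log (u₂ s)) (1 - u₂ t - α * v₂ t) (Ici 0) t := by
      have h := (hu₂ t ht).log (hu₂pos t ht).ne'
      rwa [mul_div_cancel_left₀ _ (hu₂pos t ht).ne'] at h
    have l2 : HasDerivWithinAt (fun s => Real.log (u₁ s)) (1 - u₁ t - α * v₁ t) (Ici 0) t := by
      have h := (hu₁ t ht).log (hu₁pos t ht).ne'
      rwa [mul_div_cancel_left₀ _ (hu₁pos t ht).ne'] at h
    have l3 : HasDerivWithinAt (fun s => Real.log (v₁ s)) (δ * (1 - v₁ t - β * u₁ t)) (Ici 0) t := by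
      have h := (hv₁ t ht).log (hv₁pos t ht).ne'
      rwa [show δ * v₁ t * (1 - v₁ t - β * u₁ t) = v₁ t * (δ * (1 - v₁ t - β * u₁ t)) by ring,
        mul_div_cancel_left₀ _ (hv₁pos t ht).ne'] at h
    have l4 : HasDerivWithinAt (fun s => Real.log (v₂ s)) (δ * (1 - v₂ t - β * u₂ t)) (Ici 0) t := by
      have h := (hv₂ t ht).log (hv₂pos t ht).ne'
      rwa [show δ * v₂ t * (1 - v₂ t - β * u₂ t) = v₂ t * (δ * (1 - v₂ t - β * u₂ t)) by ring,
        mul_div_cancel_left₀ _ (hv₂pos t ht).ne'] at h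
    have h := (HasDerivWithinAt.const_mul δ (l1.sub l2)).add (l3.sub l4)
    rwa [show δ * ((1 - u₂ t - α * v₂ t) - (1 - u₁ t - α * v₁ t))
        + (δ * (1 - v₁ t - β * u₁ t) - δ * (1 - v₂ t - β * u₂ t))
        = δ * ((β - 1) * P t + (α - 1) * Q t) by
      simp only [hPdef, hQdef]; ring] at h
  have hVmono : MonotoneOn V (Ici 0) := by
    apply monotoneOn_of_hasDerivWithinAt_nonneg (convex_Ici 0)
      (fun t ht => (hdV t ht).continuousWithinAt)
      (fun t ht => (hdV t (interior_subset ht)).mono interior_subset)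
    intro t ht
    obtain ⟨hPt, hQt⟩ := key t (interior_subset ht)
    have w1 : 0 ≤ (β - 1) * P t := mul_nonneg (by linarith) hPt.le
    have w2 : 0 ≤ (α - 1) * Q t := mul_nonneg (by linarith) hQt
    exact mul_nonneg hδ.le (by linarith)
  -- the limit of V is 0
  have hu₁lim : Tendsto u₁ atTop (nhds A) := by
    exact (continuous_fst.tendsto (A, B)).comp hconv₁
  have hv₁lim : Tendsto v₁ atTop (nhds B) := by
    exact (continuous_snd.tendsto (A, B)).comp hconv₁
  have hu₂lim : Tendsto u₂ atTop (nhds A) := by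
    exact (continuous_fst.tendsto (A, B)).comp hconv₂
  have hv₂lim : Tendsto v₂ atTop (nhds B) := by
    exact (continuous_snd.tendsto (A, B)).comp hconv₂
  have hVlim : Tendsto V atTop (nhds 0) := by
    have m1 : Tendsto (fun t => Real.log (u₁ t)) atTop (nhds (Real.log A)) :=
      ((Real.continuousAt_log hA0.ne').tendsto).comp hu₁lim
    have m2 : Tendsto (fun t => Real.log (u₂ t)) atTop (nhds (Real.log A)) :=
      ((Real.continuousAt_log hA0.ne').tendsto).comp hu₂lim
    have m3 : Tendsto (fun t => Real.log (v₁ t)) atTop (nhds (Real.log B)) :=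
      ((Real.continuousAt_log hB0.ne').tendsto).comp hv₁lim
    have m4 : Tendsto (fun t => Real.log (v₂ t)) atTop (nhds (Real.log B)) :=
      ((Real.continuousAt_log hB0.ne').tendsto).comp hv₂lim
    have := (((m2.sub m1).const_mul δ).add (m3.sub m4))
    simpa using this
  have h1 : V 0 ≤ 0 := by
    refine ge_of_tendsto hVlim ?_
    refine eventually_atTop.2 ⟨0, fun t ht => ?_⟩
    exact hVmono (mem_Ici.2 le_rfl) (mem_Ici.2 ht) ht
  have h2 : 0 < V 0 := by
    simp only [hVdef, hu₁0, hu₂0, hv₁0, hv₂0]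
    have k1 := Real.log_lt_log hx₁ hlt
    have k2 := Real.log_le_log hy₂ hcon
    nlinarith
  linarith
end
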